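/- arXiv:1205.3552 — 5 statements merged into one kernel-verified Lean document; each statement's English description precedes it below -/
import Mathlib

section
/- Let q ∈ ℤ with |q| ≥ 2, let A = [q] be the 1×1 matrix acting on ℝ, and let D = {d₁, …, d_|q|} ⊂ ℝ be a set of |q| distinct real numbers. Then the self-affine set T(A, D) is an interval if and only if, up to a translation, D = {0, a, 2a, …, (|q|−1)a} for some a > 0. -/
set_option maxHeartbeats 1000000

open Set MeasureTheory Filter

/-- The one-dimensional self-affine set `T([q], D) = { ∑_{i≥1} q^{-i} d_i : d_i ∈ D }`. -/
noncomputable def selfAffine1 (q : ℤ) (D : Set ℝ) : Set ℝ :=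
  {x | ∃ d : ℕ → ℝ, (∀ i, d i ∈ D) ∧
    HasSum (fun i => ((q : ℝ)⁻¹) ^ (i + 1) * d i) x}

lemma geomSucc {x : ℝ} (hx : |x| < 1) :
    HasSum (fun i : ℕ => x ^ (i + 1)) (x / (1 - x)) := by
  have h := (hasSum_geometric_of_abs_lt_one hx).mul_left x
  have hfe : (fun i : ℕ => x * x ^ i) = fun i : ℕ => x ^ (i + 1) := by
    funext i; rw [pow_succ, mul_comm]
  rw [hfe] at h
  rw [div_eq_mul_inv]
  exact h


lemma qabs {q : ℤ} (hq : 2 ≤ |q|) : (2 : ℝ) ≤ |(q : ℝ)| := by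
  rw [← Int.cast_abs]; exact_mod_cast hq

lemma qne0 {q : ℤ} (hq : 2 ≤ |q|) : (q : ℝ) ≠ 0 := by
  have := qabs hq
  intro h; rw [h] at this; simp at this; linarith

lemma rabs_lt {q : ℤ} (hq : 2 ≤ |q|) : |((q : ℝ))⁻¹| < 1 := by
  have h2 := qabs hq
  rw [abs_inv]
  rw [inv_lt_one_iff₀]
  right; linarith

lemma qsub1_ne {q : ℤ} (hq : 2 ≤ |q|) : (q : ℝ) - 1 ≠ 0 := by
  have h2 := qabs hq
  rcases abs_cases (q : ℝ) with ⟨h, _⟩ | ⟨h, _⟩ <;> intro hc <;> nlinarith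

lemma natAbs_two_le {q : ℤ} (hq : 2 ≤ |q|) : 2 ≤ q.natAbs := by
  have : (2 : ℤ) ≤ (q.natAbs : ℤ) := by rwa [Int.abs_eq_natAbs] at hq
  exact_mod_cast this

lemma natAbs_cast_real {q : ℤ} : ((q.natAbs : ℝ)) = |(q : ℝ)| := by
  rw [Nat.cast_natAbs, Int.cast_abs]

lemma fixedPoint_mem {q : ℤ} (hq : 2 ≤ |q|) {D : Set ℝ} {d : ℝ} (hd : d ∈ D) :
    d / ((q : ℝ) - 1) ∈ selfAffine1 q D := by
  refine ⟨fun _ => d, fun _ => hd, ?_⟩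
  have h := (geomSucc (rabs_lt hq)).mul_right d
  convert h using 1
  · rfl
  have h0 := qne0 hq
  have h1 := qsub1_ne hq
  have : 1 - ((q:ℝ))⁻¹ ≠ 0 := by
    intro hc
    apply h1
    field_simp at hc
    linarith
  field_simp


lemma selfAffine1_eq_union (q : ℤ) (hq0 : (q : ℝ) ≠ 0) (D : Set ℝ) :
    selfAffine1 q D = ⋃ d ∈ D, (fun x : ℝ => ((q : ℝ))⁻¹ * (x + d)) '' selfAffine1 q D := by
  have hqr : (q : ℝ) * ((q : ℝ))⁻¹ = 1 := mul_inv_cancel₀ hq0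
  ext x
  simp only [Set.mem_iUnion, Set.mem_image]
  constructor
  · rintro ⟨d, hd, hs⟩
    refine ⟨d 0, hd 0, (q : ℝ) * x - d 0, ⟨fun i => d (i + 1), fun i => hd (i + 1), ?_⟩, ?_⟩
    · have h1 : HasSum (fun n : ℕ => ((q:ℝ)⁻¹) ^ (n + 1 + 1) * d (n + 1))
          (x - ((q:ℝ)⁻¹) ^ (0 + 1) * d 0) := by
        apply (hasSum_nat_add_iff (f := fun i => ((q:ℝ)⁻¹) ^ (i + 1) * d i) 1).mpr
        simpa using hs
      have h2 := h1.mul_left (q : ℝ)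
      have hfe : (fun n : ℕ => (q:ℝ) * (((q:ℝ)⁻¹) ^ (n + 1 + 1) * d (n + 1)))
          = fun n : ℕ => ((q:ℝ)⁻¹) ^ (n + 1) * d (n + 1) := by
        funext n
        rw [pow_succ ((q:ℝ)⁻¹) (n+1)]
        field_simp
      rw [hfe] at h2
      convert h2 using 1
      · rfl
      rw [zero_add, pow_one, mul_sub, ← mul_assoc, hqr, one_mul]
    · field_simp
      ring
  · rintro ⟨d0, hd0, y, ⟨d, hd, hs⟩, rfl⟩
    refine ⟨fun n => Nat.casesOn n d0 d, fun i => by cases i <;> simp [hd0, hd _], ?_⟩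
    have h1 : HasSum (fun n : ℕ =>
        (fun i : ℕ => ((q:ℝ)⁻¹) ^ (i + 1) * (Nat.casesOn i d0 d : ℝ)) (n + 1)) ((q:ℝ)⁻¹ * y) := by
      have h2 := hs.mul_left ((q:ℝ)⁻¹)
      convert h2 using 1
      · rfl
      funext n
      show ((q:ℝ)⁻¹) ^ (n + 1 + 1) * d n = (q:ℝ)⁻¹ * (((q:ℝ)⁻¹) ^ (n + 1) * d n)
      rw [pow_succ]
      ring
    have h3 := (hasSum_nat_add_iff (f := fun i : ℕ => ((q:ℝ)⁻¹) ^ (i + 1) * (Nat.casesOn i d0 d : ℝ)) 1).mp h1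
    convert h3 using 1
    · rfl
    simp [Finset.sum_range_one]
    ring


lemma image_affine_Icc_pos {m b u w : ℝ} (hm : 0 < m) (huw : u ≤ w) :
    (fun x : ℝ => m * (x + b)) '' Set.Icc u w = Set.Icc (m * (u + b)) (m * (w + b)) := by
  ext y
  simp only [Set.mem_image, Set.mem_Icc]
  constructor
  · rintro ⟨x, ⟨h1, h2⟩, rfl⟩
    constructor <;> nlinarith
  · rintro ⟨h1, h2⟩
    refine ⟨(y - m * b) / m, ⟨?_, ?_⟩, ?_⟩
    · rw [le_div_iff₀ hm]; nlinarith
    · rw [div_le_iff₀ hm]; nlinarith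
    · field_simp
      ring

lemma image_affine_Icc_neg {m b u w : ℝ} (hm : m < 0) (huw : u ≤ w) :
    (fun x : ℝ => m * (x + b)) '' Set.Icc u w = Set.Icc (m * (w + b)) (m * (u + b)) := by
  ext y
  simp only [Set.mem_image, Set.mem_Icc]
  constructor
  · rintro ⟨x, ⟨h1, h2⟩, rfl⟩
    constructor <;> nlinarith
  · rintro ⟨h1, h2⟩
    refine ⟨(y - m * b) / m, ⟨?_, ?_⟩, ?_⟩
    · rw [le_div_iff_of_neg hm]; nlinarith
    · rw [div_le_iff_of_neg hm]; nlinarith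
    · have hm0 : m ≠ 0 := ne_of_lt hm
      field_simp
      ring

lemma image_reindex (n : ℕ) (hn : 1 ≤ n) (A B : ℝ) :
    (fun k : ℕ => A + B * k) '' {k | k < n}
      = (fun k : ℕ => (A + B * ((n : ℝ) - 1)) + (-B) * k) '' {k | k < n} := by
  ext y
  simp only [Set.mem_image, Set.mem_setOf_eq]
  constructor
  · rintro ⟨k, hk, rfl⟩
    refine ⟨n - 1 - k, by omega, ?_⟩
    have h1 : ((n - 1 - k : ℕ) : ℝ) = (n : ℝ) - 1 - k := by
      push_cast [Nat.cast_sub (show k ≤ n - 1 by omega), Nat.cast_sub hn]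
      ring
    rw [h1]; ring
  · rintro ⟨k, hk, rfl⟩
    refine ⟨n - 1 - k, by omega, ?_⟩
    have h1 : ((n - 1 - k : ℕ) : ℝ) = (n : ℝ) - 1 - k := by
      push_cast [Nat.cast_sub (show k ≤ n - 1 by omega), Nat.cast_sub hn]
      ring
    rw [h1]; ring

lemma sep_finset (E : Finset ℝ) (n : ℕ) (hn : 1 ≤ n) (hcard : E.card = n) (u ℓ : ℝ)
    (hℓ : 0 < ℓ)
    (hlow : ∀ e ∈ E, u ≤ e) (hhigh : ∀ e ∈ E, e ≤ u + ((n : ℝ) - 1) * ℓ)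
    (hsep : ∀ e₁ ∈ E, ∀ e₂ ∈ E, e₁ ≠ e₂ → ℓ ≤ |e₁ - e₂|) :
    (E : Set ℝ) = (fun k : ℕ => u + k * ℓ) '' {k | k < n} := by
  set φ := E.orderIsoOfFin hcard with hφ
  set e : Fin n → ℝ := fun i => (φ i : ℝ) with he
  have hmem : ∀ i, e i ∈ E := fun i => (φ i).2
  have hmono : ∀ i j : Fin n, i < j → e i < e j := by
    intro i j h
    exact_mod_cast φ.lt_iff_lt.mpr h
  have hgap : ∀ a : ℕ, ∀ ha : a < n, ∀ b : ℕ, a ≤ b → ∀ hb : b < n,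
      e ⟨a, ha⟩ + ((b : ℝ) - a) * ℓ ≤ e ⟨b, hb⟩ := by
    intro a ha b hab
    induction b, hab using Nat.le_induction with
    | base => intro hb; simp
    | succ b hab ih =>
      intro hb
      have hb' : b < n := by omega
      have h1 := ih hb'
      have hlt : e ⟨b, hb'⟩ < e ⟨b + 1, hb⟩ := hmono _ _ (by simp [Fin.lt_def])
      have hs := hsep _ (hmem ⟨b + 1, hb⟩) _ (hmem ⟨b, hb'⟩) (ne_of_gt hlt)
      rw [abs_of_pos (by linarith)] at hs
      push_cast
      linarith
  have hkey : ∀ k : ℕ, ∀ hk : k < n, e ⟨k, hk⟩ = u + k * ℓ := by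
    intro k hk
    have hlb := hgap 0 (by omega) k (by omega) hk
    have hub := hgap k hk (n - 1) (by omega) (by omega)
    have h0 : u ≤ e ⟨0, by omega⟩ := hlow _ (hmem _)
    have hh : e ⟨n - 1, by omega⟩ ≤ u + ((n : ℝ) - 1) * ℓ := hhigh _ (hmem _)
    have hc : ((n - 1 : ℕ) : ℝ) = (n : ℝ) - 1 := by
      push_cast [Nat.cast_sub hn]; ring
    rw [hc] at hub
    simp only [Nat.cast_zero] at hlb
    have := hlb
    nlinarith [hub, hh, h0]
  ext y
  simp only [Finset.coe_sort_coe, Set.mem_image, Set.mem_setOf_eq, Finset.mem_coe]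
  constructor
  · intro hy
    set i := φ.symm ⟨y, hy⟩ with hi
    refine ⟨(i : ℕ), i.2, ?_⟩
    have : e i = y := by
      rw [he]
      simp [hi]
    rw [← hkey i i.2]
    rw [← this]
  · rintro ⟨k, hk, rfl⟩
    have := hkey k hk
    rw [← this]
    exact hmem _


lemma tiling (D : Finset ℝ) (n : ℕ) (hn : 1 ≤ n) (hcard : D.card = n)
    (u ℓ : ℝ) (hℓ : 0 < ℓ) (g : ℝ → ℝ)
    (hinj : ∀ d₁ ∈ D, ∀ d₂ ∈ D, g d₁ = g d₂ → d₁ = d₂)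
    (hunion : (⋃ d ∈ D, Set.Icc (g d) (g d + ℓ)) = Set.Icc u (u + n * ℓ)) :
    ((D.image g : Finset ℝ) : Set ℝ) = (fun k : ℕ => u + k * ℓ) '' {k | k < n} := by
  classical
  have hsub : ∀ d ∈ D, Set.Icc (g d) (g d + ℓ) ⊆ Set.Icc u (u + n * ℓ) := by
    intro d hd
    rw [← hunion]
    intro x hx
    exact Set.mem_biUnion hd hx
  have hlow : ∀ d ∈ D, u ≤ g d := fun d hd =>
    ((hsub d hd) ⟨le_refl _, by linarith⟩).1
  have hhigh : ∀ d ∈ D, g d ≤ u + ((n : ℝ) - 1) * ℓ := by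
    intro d hd
    have := ((hsub d hd) ⟨by linarith, le_refl _⟩).2
    linarith
  have hsum : ∑ d ∈ D, volume (Set.Icc (g d) (g d + ℓ)) = ENNReal.ofReal ((n : ℝ) * ℓ) := by
    have h1 : ∀ d ∈ D, volume (Set.Icc (g d) (g d + ℓ)) = ENNReal.ofReal ℓ := by
      intro d _
      rw [Real.volume_Icc, add_sub_cancel_left]
    rw [Finset.sum_congr rfl h1, Finset.sum_const, hcard, nsmul_eq_mul,
      ENNReal.ofReal_mul (by positivity), ENNReal.ofReal_natCast]
  have hvol : volume (Set.Icc u (u + (n : ℝ) * ℓ)) = ENNReal.ofReal ((n : ℝ) * ℓ) := by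
    rw [Real.volume_Icc, add_sub_cancel_left]
  have hsep : ∀ d₁ ∈ D, ∀ d₂ ∈ D, d₁ ≠ d₂ → ℓ ≤ |g d₁ - g d₂| := by
    intro d₁ h₁ d₂ h₂ hne
    set s := (D.erase d₁).erase d₂ with hsdef
    have hd₂e : d₂ ∈ D.erase d₁ := Finset.mem_erase.mpr ⟨hne.symm, h₂⟩
    have hD : D = insert d₁ (insert d₂ s) := by
      rw [hsdef, Finset.insert_erase hd₂e, Finset.insert_erase h₁]
    have hd1ni : d₁ ∉ insert d₂ s := by
      simp only [Finset.mem_insert, hsdef, Finset.mem_erase]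
      push_neg
      exact ⟨hne, fun _ h => absurd h (by simp)⟩
    have hd2ni : d₂ ∉ s := by simp [hsdef]
    have hzero : volume (Set.Icc (g d₁) (g d₁ + ℓ) ∩ Set.Icc (g d₂) (g d₂ + ℓ)) = 0 := by
      by_contra hne0
      have key : ENNReal.ofReal ((n : ℝ) * ℓ)
          + volume (Set.Icc (g d₁) (g d₁ + ℓ) ∩ Set.Icc (g d₂) (g d₂ + ℓ))
          ≤ ENNReal.ofReal ((n : ℝ) * ℓ) := by
        conv_lhs => rw [← hvol, ← hunion]
        have hsplit : (⋃ d ∈ D, Set.Icc (g d) (g d + ℓ))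
            = (Set.Icc (g d₁) (g d₁ + ℓ) ∪ Set.Icc (g d₂) (g d₂ + ℓ))
              ∪ ⋃ d ∈ s, Set.Icc (g d) (g d + ℓ) := by
          conv_lhs => rw [hD]
          rw [Finset.set_biUnion_insert, Finset.set_biUnion_insert, ← Set.union_assoc]
        rw [hsplit]
        calc volume ((Set.Icc (g d₁) (g d₁ + ℓ) ∪ Set.Icc (g d₂) (g d₂ + ℓ))
              ∪ ⋃ d ∈ s, Set.Icc (g d) (g d + ℓ))
              + volume (Set.Icc (g d₁) (g d₁ + ℓ) ∩ Set.Icc (g d₂) (g d₂ + ℓ))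
            ≤ (volume (Set.Icc (g d₁) (g d₁ + ℓ) ∪ Set.Icc (g d₂) (g d₂ + ℓ))
              + volume (⋃ d ∈ s, Set.Icc (g d) (g d + ℓ)))
              + volume (Set.Icc (g d₁) (g d₁ + ℓ) ∩ Set.Icc (g d₂) (g d₂ + ℓ)) := by
              gcongr
              exact measure_union_le _ _
          _ ≤ (volume (Set.Icc (g d₁) (g d₁ + ℓ) ∪ Set.Icc (g d₂) (g d₂ + ℓ))
              + volume (Set.Icc (g d₁) (g d₁ + ℓ) ∩ Set.Icc (g d₂) (g d₂ + ℓ)))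
              + ∑ d ∈ s, volume (Set.Icc (g d) (g d + ℓ)) := by
              rw [add_right_comm]
              gcongr
              exact measure_biUnion_finset_le _ _
          _ = (volume (Set.Icc (g d₁) (g d₁ + ℓ)) + volume (Set.Icc (g d₂) (g d₂ + ℓ)))
              + ∑ d ∈ s, volume (Set.Icc (g d) (g d + ℓ)) := by
              rw [measure_union_add_inter _ measurableSet_Icc]
          _ = ∑ d ∈ D, volume (Set.Icc (g d) (g d + ℓ)) := by
              rw [hD, Finset.sum_insert hd1ni, Finset.sum_insert hd2ni, add_assoc]
          _ = ENNReal.ofReal ((n : ℝ) * ℓ) := hsum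
      exact absurd (lt_of_lt_of_le (ENNReal.lt_add_right ENNReal.ofReal_ne_top hne0) key)
        (lt_irrefl _)
    rw [Set.Icc_inter_Icc, Real.volume_Icc, ENNReal.ofReal_eq_zero] at hzero
    rcases le_total (g d₁) (g d₂) with h | h
    · have h1 : (g d₁ + ℓ) ⊓ (g d₂ + ℓ) = g d₁ + ℓ := min_eq_left (by linarith)
      have h2 : g d₁ ⊔ g d₂ = g d₂ := max_eq_right h
      rw [h1, h2] at hzero
      rw [abs_sub_comm, abs_of_nonneg (by linarith)]
      linarith
    · have h1 : (g d₁ + ℓ) ⊓ (g d₂ + ℓ) = g d₂ + ℓ := min_eq_right (by linarith)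
      have h2 : g d₁ ⊔ g d₂ = g d₁ := max_eq_left h
      rw [h1, h2] at hzero
      rw [abs_of_nonneg (by linarith)]
      linarith
  refine sep_finset _ n hn ?_ u ℓ hℓ ?_ ?_ ?_
  · rw [Finset.card_image_of_injOn fun d₁ h₁ d₂ h₂ h => hinj d₁ h₁ d₂ h₂ h, hcard]
  · intro e he
    obtain ⟨d, hd, rfl⟩ := Finset.mem_image.mp he
    exact hlow d hd
  · intro e he
    obtain ⟨d, hd, rfl⟩ := Finset.mem_image.mp he
    exact hhigh d hd
  · intro e₁ h₁ e₂ h₂ hne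
    obtain ⟨d₁, hd₁, rfl⟩ := Finset.mem_image.mp h₁
    obtain ⟨d₂, hd₂, rfl⟩ := Finset.mem_image.mp h₂
    exact hsep d₁ hd₁ d₂ hd₂ (fun h => hne (by rw [h]))


lemma mem_bounds {q : ℤ} (hq : 2 ≤ |q|) {D : Set ℝ} {m c : ℝ}
    (hD : ∀ d ∈ D, |d - m| ≤ c) {x : ℝ} (hx : x ∈ selfAffine1 q D) :
    m / ((q : ℝ) - 1) - c / ((q.natAbs : ℝ) - 1) ≤ x ∧
      x ≤ m / ((q : ℝ) - 1) + c / ((q.natAbs : ℝ) - 1) := by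
  obtain ⟨d, hd, hs⟩ := hx
  set r : ℝ := ((q : ℝ))⁻¹ with hrdef
  set ρ : ℝ := |(q : ℝ)|⁻¹ with hρdef
  have hQ := qabs hq
  have h0 := qne0 hq
  have h1 := qsub1_ne hq
  have hr : |r| < 1 := rabs_lt hq
  have hrρ : |r| = ρ := by rw [hrdef, hρdef, abs_inv]
  have hρabs : |ρ| = ρ := by rw [hρdef, abs_inv, abs_abs]
  have hρ1 : |ρ| < 1 := by rw [hρabs, ← hrρ]; exact hr
  have hgr := geomSucc hr
  have hgρ := geomSucc hρ1
  have habs : ∀ i : ℕ, |r ^ (i + 1) * d i - m * r ^ (i + 1)| ≤ c * ρ ^ (i + 1) := by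
    intro i
    have : r ^ (i + 1) * d i - m * r ^ (i + 1) = r ^ (i + 1) * (d i - m) := by ring
    rw [this, abs_mul, abs_pow, hrρ]
    rw [mul_comm c]
    exact mul_le_mul_of_nonneg_left (hD (d i) (hd i)) (by positivity)
  have hcnn : 0 ≤ c := le_trans (abs_nonneg _) (hD (d 0) (hd 0))
  have hlo : m * (r / (1 - r)) - c * (ρ / (1 - ρ)) ≤ x := by
    refine hasSum_le (f := fun i => m * r ^ (i + 1) - c * ρ ^ (i + 1)) ?_
      ((hgr.mul_left m).sub (hgρ.mul_left c)) hs
    intro i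
    show m * r ^ (i + 1) - c * ρ ^ (i + 1) ≤ r ^ (i + 1) * d i
    have := abs_le.mp (habs i)
    linarith [this.1]
  have hhi : x ≤ m * (r / (1 - r)) + c * (ρ / (1 - ρ)) := by
    refine hasSum_le (g := fun i => m * r ^ (i + 1) + c * ρ ^ (i + 1)) ?_ hs
      ((hgr.mul_left m).add (hgρ.mul_left c))
    intro i
    show r ^ (i + 1) * d i ≤ m * r ^ (i + 1) + c * ρ ^ (i + 1)
    have := abs_le.mp (habs i)
    linarith [this.2]
  have h1mr : 1 - r ≠ 0 := by
    intro hc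
    apply h1
    rw [hrdef] at hc
    field_simp at hc
    linarith
  have h1mρ : 1 - ρ ≠ 0 := by
    rw [hρdef]
    intro hc
    have : |(q:ℝ)| = 1 := by
      field_simp at hc
      linarith
    linarith
  have habs0 : |(q:ℝ)| ≠ 0 := by positivity
  have e1 : r / (1 - r) = 1 / ((q : ℝ) - 1) := by
    rw [hrdef]
    rw [div_eq_div_iff (by rwa [hrdef] at h1mr) h1]
    field_simp
  have e2 : ρ / (1 - ρ) = 1 / ((q.natAbs : ℝ) - 1) := by
    rw [hρdef, natAbs_cast_real]
    rw [div_eq_div_iff (by rwa [hρdef] at h1mρ) (by nlinarith [hQ])]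
    field_simp
  rw [e1, e2] at hlo hhi
  constructor
  · calc m / ((q : ℝ) - 1) - c / ((q.natAbs : ℝ) - 1)
        = m * (1 / ((q : ℝ) - 1)) - c * (1 / ((q.natAbs : ℝ) - 1)) := by ring
      _ ≤ x := hlo
  · calc x ≤ m * (1 / ((q : ℝ) - 1)) + c * (1 / ((q.natAbs : ℝ) - 1)) := hhi
      _ = m / ((q : ℝ) - 1) + c / ((q.natAbs : ℝ) - 1) := by ring


noncomputable def digFun (q : ℤ) (t a u : ℝ) (n : ℕ) : ℝ → ℕ :=
  fun y => min (n - 1) (Int.toNat ⌊((q : ℝ) * y - t - u) / a⌋)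

noncomputable def expMap (q : ℤ) (t a u : ℝ) (n : ℕ) : ℝ → ℝ :=
  fun y => (q : ℝ) * y - (t + a * (digFun q t a u n y : ℝ))

lemma digFun_def (q : ℤ) (t a u : ℝ) (n : ℕ) (y : ℝ) :
    digFun q t a u n y = min (n - 1) (Int.toNat ⌊((q : ℝ) * y - t - u) / a⌋) := rfl

lemma expMap_def (q : ℤ) (t a u : ℝ) (n : ℕ) (y : ℝ) :
    expMap q t a u n y = (q : ℝ) * y - (t + a * (digFun q t a u n y : ℝ)) := rfl

lemma backward_dir (q : ℤ) (hq : 2 ≤ |q|) (t a : ℝ) (ha : 0 < a) :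
    ∃ u w : ℝ, selfAffine1 q ((fun k : ℕ => t + a * (k : ℝ)) '' {k | k < q.natAbs})
      = Set.Icc u w := by
  classical
  set n := q.natAbs with hndef
  have hn2 : 2 ≤ n := natAbs_two_le hq
  have hnr : ((n : ℝ)) = |(q : ℝ)| := natAbs_cast_real
  have hn2r : (2 : ℝ) ≤ (n : ℝ) := by exact_mod_cast hn2
  have hQ := qabs hq
  have h0 := qne0 hq
  have h1 := qsub1_ne hq
  have hn1ne : ((n : ℝ)) - 1 ≠ 0 := by linarith
  obtain ⟨c, hcdef⟩ : ∃ c : ℝ, c = a * ((n : ℝ) - 1) / 2 := ⟨_, rfl⟩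
  obtain ⟨m, hmdef⟩ : ∃ m : ℝ, m = t + c := ⟨_, rfl⟩
  obtain ⟨u, hudef⟩ : ∃ u : ℝ, u = m / ((q : ℝ) - 1) - a / 2 := ⟨_, rfl⟩
  set D : Set ℝ := (fun k : ℕ => t + a * (k : ℝ)) '' {k | k < n} with hDdef
  refine ⟨u, u + a, ?_⟩
  have hca : c / ((n : ℝ) - 1) = a / 2 := by
    rw [hcdef]; field_simp
  have hqcase : 2 ≤ (q : ℝ) ∨ (q : ℝ) ≤ -2 := by
    rcases abs_cases (q : ℝ) with ⟨h, _⟩ | ⟨h, _⟩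
    · left; linarith
    · right; linarith
  have hu1 : u * ((q : ℝ) - 1) = m - a * ((q : ℝ) - 1) / 2 := by
    rw [hudef]; field_simp
  have hstep : ∀ y, u ≤ y → y ≤ u + a →
      (u ≤ expMap q t a u n y ∧ expMap q t a u n y ≤ u + a) ∧ digFun q t a u n y < n := by
    intro y hy1 hy2
    have hqn : ((q : ℝ)) = (n : ℝ) ∨ ((q : ℝ)) = -(n : ℝ) := by
      rcases hqcase with h | h
      · left; rw [hnr, abs_of_pos (by linarith)]
      · right; rw [hnr, abs_of_neg (by linarith)]; ring
    have hZ1 : 0 ≤ (q : ℝ) * y - t - u := by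
      rcases hqn with h | h
      · have hu1' := hu1; rw [h] at hu1' ⊢
        nlinarith [mul_le_mul_of_nonneg_left hy1 (show (0:ℝ) ≤ (n:ℝ) by linarith)]
      · have hu1' := hu1; rw [h] at hu1' ⊢
        nlinarith [mul_le_mul_of_nonpos_left hy2 (show -(n:ℝ) ≤ 0 by linarith)]
    have hZ2 : (q : ℝ) * y - t - u ≤ (n : ℝ) * a := by
      rcases hqn with h | h
      · have hu1' := hu1; rw [h] at hu1' ⊢
        nlinarith [mul_le_mul_of_nonneg_left hy2 (show (0:ℝ) ≤ (n:ℝ) by linarith)]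
      · have hu1' := hu1; rw [h] at hu1' ⊢
        nlinarith [mul_le_mul_of_nonpos_left hy1 (show -(n:ℝ) ≤ 0 by linarith)]
    have hz0 : 0 ≤ ((q : ℝ) * y - t - u) / a := div_nonneg hZ1 ha.le
    have hzn : ((q : ℝ) * y - t - u) / a ≤ (n : ℝ) := by
      rw [div_le_iff₀ ha]; linarith
    have hj0 : 0 ≤ ⌊((q : ℝ) * y - t - u) / a⌋ := Int.floor_nonneg.mpr hz0
    have hjle := Int.floor_le (((q : ℝ) * y - t - u) / a)
    have hjlt := Int.lt_floor_add_one (((q : ℝ) * y - t - u) / a)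
    have htn : ((Int.toNat ⌊((q : ℝ) * y - t - u) / a⌋ : ℕ) : ℝ)
        = ((⌊((q : ℝ) * y - t - u) / a⌋ : ℤ) : ℝ) := by
      exact_mod_cast Int.toNat_of_nonneg hj0
    have hk1 : ((digFun q t a u n y : ℕ) : ℝ) ≤ ((q : ℝ) * y - t - u) / a
        ∧ ((q : ℝ) * y - t - u) / a ≤ ((digFun q t a u n y : ℕ) : ℝ) + 1 := by
      rw [digFun_def]
      by_cases hcase : Int.toNat ⌊((q : ℝ) * y - t - u) / a⌋ ≤ n - 1
      · rw [min_eq_right hcase, htn]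
        exact ⟨hjle, hjlt.le⟩
      · push_neg at hcase
        have hnj : (n : ℝ) ≤ ((⌊((q : ℝ) * y - t - u) / a⌋ : ℤ) : ℝ) := by
          rw [← htn]
          exact_mod_cast (by omega : n ≤ Int.toNat ⌊((q : ℝ) * y - t - u) / a⌋)
        have hcast : (((n - 1 : ℕ)) : ℝ) = (n : ℝ) - 1 := by
          have h1n : 1 ≤ n := by omega
          push_cast [Nat.cast_sub h1n]; ring
        rw [min_eq_left (by omega), hcast]
        exact ⟨by linarith, by linarith⟩
    have hdign : digFun q t a u n y < n := by
      have : digFun q t a u n y ≤ n - 1 := by rw [digFun_def]; exact min_le_left _ _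
      omega
    have hak1 : ((digFun q t a u n y : ℕ) : ℝ) * a ≤ (q : ℝ) * y - t - u :=
      (le_div_iff₀ ha).mp hk1.1
    have hak2 : (q : ℝ) * y - t - u ≤ (((digFun q t a u n y : ℕ) : ℝ) + 1) * a :=
      (div_le_iff₀ ha).mp hk1.2
    refine ⟨⟨?_, ?_⟩, hdign⟩
    · rw [expMap_def]; linarith
    · rw [expMap_def]; linarith
  ext x
  constructor
  · intro hx
    have hD : ∀ d ∈ D, |d - m| ≤ c := by
      rintro d ⟨k, hk, rfl⟩
      have hkr : ((k : ℕ) : ℝ) ≤ (n : ℝ) - 1 := by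
        have : ((k : ℕ) : ℝ) + 1 ≤ (n : ℝ) := by exact_mod_cast Nat.succ_le_of_lt hk
        linarith
      have hk0 : (0 : ℝ) ≤ ((k : ℕ) : ℝ) := Nat.cast_nonneg _
      show |t + a * (k : ℝ) - m| ≤ c
      rw [hmdef, abs_le]
      constructor <;> nlinarith
    have hb := mem_bounds hq hD hx
    rw [← hndef, hca] at hb
    constructor
    · rw [hudef]; linarith [hb.1]
    · rw [hudef]; linarith [hb.2]
  · intro hx
    obtain ⟨hx1, hx2⟩ := hx
    obtain ⟨F, hF⟩ : ∃ F : ℝ → ℝ, F = expMap q t a u n := ⟨_, rfl⟩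
    have hstep' : ∀ y, u ≤ y → y ≤ u + a →
        (u ≤ F y ∧ F y ≤ u + a) ∧ digFun q t a u n y < n := by
      rw [hF]; exact hstep
    have hiter : ∀ i : ℕ, u ≤ F^[i] x ∧ F^[i] x ≤ u + a := by
      intro i
      induction i with
      | zero => exact ⟨hx1, hx2⟩
      | succ i ih =>
        rw [Function.iterate_succ_apply']
        exact (hstep' _ ih.1 ih.2).1
    obtain ⟨dseq, hdseq⟩ : ∃ d : ℕ → ℝ,
        ∀ i, d i = t + a * ((digFun q t a u n (F^[i] x) : ℕ) : ℝ) := ⟨_, fun _ => rfl⟩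
    have hr : |((q : ℝ))⁻¹| < 1 := rabs_lt hq
    have hpartial : ∀ N : ℕ,
        ∑ i ∈ Finset.range N, ((q : ℝ)⁻¹) ^ (i + 1) * dseq i
          = x - ((q : ℝ)⁻¹) ^ N * F^[N] x := by
      intro N
      induction N with
      | zero => simp [Function.iterate_zero]
      | succ N ih =>
        rw [Finset.sum_range_succ, ih, Function.iterate_succ_apply']
        have hFN : F (F^[N] x) = (q : ℝ) * F^[N] x - dseq N := by
          rw [hdseq N, hF, expMap_def]
        rw [hFN]
        have hps : ((q : ℝ)⁻¹) ^ (N + 1) * (q : ℝ) = ((q : ℝ)⁻¹) ^ N := by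
          rw [pow_succ]; field_simp
        rw [mul_sub, ← mul_assoc, hps]
        ring
    have hM : ∀ i : ℕ, |F^[i] x| ≤ |u| + a := by
      intro i
      obtain ⟨hl, hh⟩ := hiter i
      rw [abs_le]
      constructor
      · have : -|u| ≤ u := neg_abs_le u
        linarith
      · have : u ≤ |u| := le_abs_self u
        linarith
    have hsummable : Summable (fun i : ℕ => ((q : ℝ)⁻¹) ^ (i + 1) * dseq i) := by
      apply Summable.of_norm_bounded (g := fun i => (|t| + a * (n : ℝ)) * |((q : ℝ))⁻¹| ^ (i + 1))
      · apply Summable.mul_left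
        exact (geomSucc (by rwa [abs_abs])).summable
      · intro i
        rw [norm_mul, norm_pow]
        have hd : ‖dseq i‖ ≤ |t| + a * (n : ℝ) := by
          rw [hdseq i]
          simp only [Real.norm_eq_abs]
          have hlt : ((digFun q t a u n (F^[i] x) : ℕ) : ℝ) ≤ (n : ℝ) := by
            exact_mod_cast le_of_lt (hstep' _ (hiter i).1 (hiter i).2).2
          have h2 : (0:ℝ) ≤ ((digFun q t a u n (F^[i] x) : ℕ) : ℝ) := Nat.cast_nonneg _
          calc |t + a * ((digFun q t a u n (F^[i] x) : ℕ) : ℝ)|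
              ≤ |t| + |a * ((digFun q t a u n (F^[i] x) : ℕ) : ℝ)| := abs_add_le _ _
            _ ≤ |t| + a * (n : ℝ) := by
                rw [abs_of_nonneg (mul_nonneg ha.le (Nat.cast_nonneg _))]
                nlinarith
        calc ‖((q : ℝ))⁻¹‖ ^ (i + 1) * ‖dseq i‖
            ≤ ‖((q : ℝ))⁻¹‖ ^ (i + 1) * (|t| + a * (n : ℝ)) :=
              mul_le_mul_of_nonneg_left hd (by positivity)
          _ = (|t| + a * (n : ℝ)) * |((q : ℝ))⁻¹| ^ (i + 1) := by
              rw [Real.norm_eq_abs]; ring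
    have htend : Tendsto (fun N : ℕ => ((q : ℝ)⁻¹) ^ N * F^[N] x) atTop (nhds 0) := by
      apply squeeze_zero_norm (a := fun N => |((q : ℝ))⁻¹| ^ N * (|u| + a))
      · intro N
        rw [norm_mul, norm_pow, Real.norm_eq_abs, Real.norm_eq_abs]
        exact mul_le_mul_of_nonneg_left (hM N) (by positivity)
      · have := (tendsto_pow_atTop_nhds_zero_of_lt_one (abs_nonneg _) hr).mul_const (|u| + a)
        simpa using this
    have hhassum : HasSum (fun i : ℕ => ((q : ℝ)⁻¹) ^ (i + 1) * dseq i) x := by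
      rw [hsummable.hasSum_iff_tendsto_nat]
      have hfe : (fun N : ℕ => ∑ i ∈ Finset.range N, ((q : ℝ)⁻¹) ^ (i + 1) * dseq i)
          = fun N : ℕ => x - ((q : ℝ)⁻¹) ^ N * F^[N] x := by
        funext N; exact hpartial N
      rw [hfe]
      have := tendsto_const_nhds (x := x) (f := atTop (α := ℕ)) |>.sub htend
      simpa using this
    exact ⟨dseq, fun i => ⟨digFun q t a u n (F^[i] x),
      (hstep' _ (hiter i).1 (hiter i).2).2, (hdseq i).symm⟩, hhassum⟩


lemma forward_dir (q : ℤ) (hq : 2 ≤ |q|) (D : Finset ℝ) (hcard : D.card = q.natAbs)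
    (u w : ℝ) (hT : selfAffine1 q ↑D = Set.Icc u w) :
    ∃ a : ℝ, 0 < a ∧ ∃ t : ℝ,
      (D : Set ℝ) = (fun k : ℕ => t + a * (k : ℝ)) '' {k | k < q.natAbs} := by
  classical
  set n := q.natAbs with hndef
  have hn2 : 2 ≤ n := natAbs_two_le hq
  have hnr : ((n : ℝ)) = |(q : ℝ)| := natAbs_cast_real
  have hn2r : (2 : ℝ) ≤ (n : ℝ) := by exact_mod_cast hn2
  have hQ := qabs hq
  have h0 := qne0 hq
  have h1 := qsub1_ne hq
  -- u < w
  obtain ⟨d₁, hd₁, d₂, hd₂, hne⟩ := Finset.one_lt_card.mp (show 1 < D.card by omega)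
  have hp1 : d₁ / ((q : ℝ) - 1) ∈ Set.Icc u w :=
    hT ▸ fixedPoint_mem hq (Finset.mem_coe.mpr hd₁)
  have hp2 : d₂ / ((q : ℝ) - 1) ∈ Set.Icc u w :=
    hT ▸ fixedPoint_mem hq (Finset.mem_coe.mpr hd₂)
  have huw : u < w := by
    rcases lt_or_ge u w with h | h
    · exact h
    · exfalso
      have e1 : d₁ / ((q : ℝ) - 1) = u := le_antisymm (hp1.2.trans h) hp1.1
      have e2 : d₂ / ((q : ℝ) - 1) = u := le_antisymm (hp2.2.trans h) hp2.1
      have := e1.trans e2.symm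
      field_simp [h1] at this
      exact hne this
  set ℓ : ℝ := (w - u) / (n : ℝ) with hldef
  have hl : 0 < ℓ := div_pos (by linarith) (by linarith)
  have hwu : w = u + (n : ℝ) * ℓ := by
    rw [hldef]; field_simp; ring
  have hself := selfAffine1_eq_union q h0 ↑D
  rw [hT] at hself
  have hqcase : 2 ≤ (q : ℝ) ∨ (q : ℝ) ≤ -2 := by
    rcases abs_cases (q : ℝ) with ⟨h, _⟩ | ⟨h, _⟩
    · left; linarith
    · right; linarith
  rcases hqcase with hpos | hneg
  · -- q positive
    have hqn : ((q : ℝ)) = (n : ℝ) := by rw [hnr, abs_of_pos (by linarith)]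
    have hrpos : 0 < ((q : ℝ))⁻¹ := inv_pos.mpr (by linarith)
    set g : ℝ → ℝ := fun d => ((q : ℝ))⁻¹ * (u + d) with hgdef
    have himg : ∀ d : ℝ, (fun x : ℝ => ((q : ℝ))⁻¹ * (x + d)) '' Set.Icc u w
        = Set.Icc (g d) (g d + ℓ) := by
      intro d
      have hnne : ((n : ℝ)) ≠ 0 := by linarith
      have h2 : ((q : ℝ))⁻¹ * (w + d) = ((q : ℝ))⁻¹ * (u + d) + ℓ := by
        rw [hwu, hqn]
        field_simp
        ring
      rw [image_affine_Icc_pos hrpos huw.le, h2]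
    have hunion : (⋃ d ∈ D, Set.Icc (g d) (g d + ℓ)) = Set.Icc u (u + (n : ℝ) * ℓ) := by
      calc (⋃ d ∈ D, Set.Icc (g d) (g d + ℓ))
          = ⋃ d ∈ (↑D : Set ℝ), Set.Icc (g d) (g d + ℓ) := (Finset.set_biUnion_coe _ _).symm
        _ = ⋃ d ∈ (↑D : Set ℝ), (fun x : ℝ => ((q : ℝ))⁻¹ * (x + d)) '' Set.Icc u w :=
            Set.iUnion₂_congr fun d _ => (himg d).symm
        _ = Set.Icc u w := hself.symm
        _ = Set.Icc u (u + (n : ℝ) * ℓ) := by rw [← hwu]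
    have hinj : ∀ e₁ ∈ D, ∀ e₂ ∈ D, g e₁ = g e₂ → e₁ = e₂ := by
      intro e₁ _ e₂ _ h
      rw [hgdef] at h
      have := mul_left_cancel₀ (ne_of_gt hrpos) h
      linarith
    have htil := tiling D n (by omega) hcard u ℓ hl g hinj hunion
    refine ⟨(q : ℝ) * ℓ, by nlinarith, (q : ℝ) * u - u, ?_⟩
    have hback : (↑D : Set ℝ) = (fun y : ℝ => (q : ℝ) * y - u) '' (g '' ↑D) := by
      rw [Set.image_image]
      have hid : ∀ x : ℝ, (q : ℝ) * (g x) - u = x := by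
        intro x; rw [hgdef]; field_simp; ring
      conv_lhs => rw [← Set.image_id (↑D : Set ℝ)]
      exact Set.image_congr fun x _ => (hid x).symm
    rw [hback, ← Finset.coe_image, htil, Set.image_image]
    apply Set.image_congr
    intro k _
    ring
  · -- q negative
    have hqn : ((q : ℝ)) = -(n : ℝ) := by
      rw [hnr, abs_of_neg (by linarith)]; ring
    have hrneg : ((q : ℝ))⁻¹ < 0 := inv_neg''.mpr (by linarith)
    set g : ℝ → ℝ := fun d => ((q : ℝ))⁻¹ * (w + d) with hgdef
    have himg : ∀ d : ℝ, (fun x : ℝ => ((q : ℝ))⁻¹ * (x + d)) '' Set.Icc u w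
        = Set.Icc (g d) (g d + ℓ) := by
      intro d
      have hnne : ((n : ℝ)) ≠ 0 := by linarith
      have hqi : ((q : ℝ))⁻¹ * ((n : ℝ) * ℓ) = -ℓ := by
        rw [hqn, inv_neg, neg_mul, ← mul_assoc, inv_mul_cancel₀ hnne, one_mul]
      have h2 : ((q : ℝ))⁻¹ * (u + d) = ((q : ℝ))⁻¹ * (w + d) + ℓ := by
        rw [hwu]
        linear_combination (-1 : ℝ) * hqi
      rw [image_affine_Icc_neg hrneg huw.le, h2]
    have hunion : (⋃ d ∈ D, Set.Icc (g d) (g d + ℓ)) = Set.Icc u (u + (n : ℝ) * ℓ) := by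
      calc (⋃ d ∈ D, Set.Icc (g d) (g d + ℓ))
          = ⋃ d ∈ (↑D : Set ℝ), Set.Icc (g d) (g d + ℓ) := (Finset.set_biUnion_coe _ _).symm
        _ = ⋃ d ∈ (↑D : Set ℝ), (fun x : ℝ => ((q : ℝ))⁻¹ * (x + d)) '' Set.Icc u w :=
            Set.iUnion₂_congr fun d _ => (himg d).symm
        _ = Set.Icc u w := hself.symm
        _ = Set.Icc u (u + (n : ℝ) * ℓ) := by rw [← hwu]
    have hinj : ∀ e₁ ∈ D, ∀ e₂ ∈ D, g e₁ = g e₂ → e₁ = e₂ := by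
      intro e₁ _ e₂ _ h
      rw [hgdef] at h
      have := mul_left_cancel₀ (ne_of_lt hrneg) h
      linarith
    have htil := tiling D n (by omega) hcard u ℓ hl g hinj hunion
    have hDeq : (↑D : Set ℝ)
        = (fun k : ℕ => ((q : ℝ) * u - w) + ((q : ℝ) * ℓ) * (k : ℝ)) '' {k | k < n} := by
      have hback : (↑D : Set ℝ) = (fun y : ℝ => (q : ℝ) * y - w) '' (g '' ↑D) := by
        rw [Set.image_image]
        have hid : ∀ x : ℝ, (q : ℝ) * (g x) - w = x := by
          intro x; rw [hgdef]; field_simp; ring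
        conv_lhs => rw [← Set.image_id (↑D : Set ℝ)]
        exact Set.image_congr fun x _ => (hid x).symm
      rw [hback, ← Finset.coe_image, htil, Set.image_image]
      apply Set.image_congr
      intro k _
      ring
    refine ⟨-((q : ℝ) * ℓ), by nlinarith, ((q : ℝ) * u - w) + ((q : ℝ) * ℓ) * ((n : ℝ) - 1), ?_⟩
    rw [hDeq, image_reindex n (by omega) ((q : ℝ) * u - w) ((q : ℝ) * ℓ)]

/-- For `A = [q]`, `|q| ≥ 2`, and a digit set `D ⊂ ℝ` with `|q|` elements,
`T(A, D)` is an interval iff, up to translation, `D = {0, a, 2a, …, (|q|-1)a}`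
for some `a > 0`. -/
theorem interval_iff_arith_digits (q : ℤ) (hq : 2 ≤ |q|)
    (D : Finset ℝ) (hcard : D.card = q.natAbs) :
    (∃ u w : ℝ, selfAffine1 q ↑D = Set.Icc u w) ↔
    (∃ a : ℝ, 0 < a ∧ ∃ t : ℝ,
      (D : Set ℝ) = (fun k : ℕ => t + a * k) '' {k | k < q.natAbs}) := by
  constructor
  · rintro ⟨u, w, hT⟩
    exact forward_dir q hq D hcard u w hT
  · rintro ⟨a, ha, t, hD⟩
    have h := backward_dir q hq t a ha
    rwa [← hD] at h
end

section
/- Let A ∈ M₂(ℤ) be an expanding matrix whose characteristic polynomial is f(x) = x² + x + 3 or f(x) = x² − x + 3, and let D = {0, 1, b}v where b ∈ ℝ, b > 1, and v ∈ ℝ² is such that {v, Av} is linearly independent. If b ≥ 67/25 or b ≤ 67/42, then the self-affine set T(A, D) is disconnected. -/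
open Matrix Polynomial

/-- The real matrix obtained from an integer matrix by entrywise coercion. -/
noncomputable def matR {n : ℕ} (A : Matrix (Fin n) (Fin n) ℤ) : Matrix (Fin n) (Fin n) ℝ :=
  A.map (fun a => (a : ℝ))

/-- An integer matrix is expanding if every complex root of its characteristic
polynomial (i.e. every eigenvalue) has modulus strictly greater than 1. -/
def IsExpanding {n : ℕ} (A : Matrix (Fin n) (Fin n) ℤ) : Prop :=
  ∀ z : ℂ, Polynomial.aeval z A.charpoly = 0 → 1 < ‖z‖

/-- The self-affine set `T(A, D) = { ∑_{i≥1} A^{-i} d_i : d_i ∈ D }`. -/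
noncomputable def selfAffine {n : ℕ} (A : Matrix (Fin n) (Fin n) ℤ)
    (D : Set (Fin n → ℝ)) : Set (Fin n → ℝ) :=
  {x | ∃ d : ℕ → (Fin n → ℝ), (∀ i, d i ∈ D) ∧
    HasSum (fun i => ((matR A)⁻¹ ^ (i + 1)).mulVec (d i)) x}
set_option maxHeartbeats 1000000

lemma sqrt11_gt : (3.316624:ℝ) < Real.sqrt 11 := by
  rw [Real.lt_sqrt (by norm_num)]; norm_num

lemma sqrt11_lt : Real.sqrt 11 < 3.316625 := by
  rw [Real.sqrt_lt' (by norm_num)]; norm_num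

lemma decay_lemma (σ : ℕ → ℝ) (t C : ℝ) (ht : t = 1 ∨ t = -1)
    (hrec : ∀ k, σ (k+2) = (t * σ (k+1) - σ k)/3)
    (h16 : |σ 16| ≤ C) (h17 : |σ 17| ≤ 5/6*C) :
    ∀ k, |σ (16+k)| ≤ C * (5/6)^k := by
  have habs : |t| = 1 := by rcases ht with rfl | rfl <;> norm_num
  have key : ∀ k, |σ (16+k)| ≤ C * (5/6)^k ∧ |σ (17+k)| ≤ C * (5/6)^(k+1) := by
    intro k
    induction k with
    | zero => exact ⟨by simpa using h16, by simpa [mul_comm] using h17⟩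
    | succ n ih =>
      obtain ⟨ih1, ih2⟩ := ih
      have e1 : 16 + (n+1) = 17 + n := by ring
      refine ⟨by rw [e1]; exact ih2, ?_⟩
      have e2 : 17 + (n+1) = (16+n) + 2 := by ring
      rw [e2, hrec (16+n)]
      have e3 : (16+n) + 1 = 17 + n := by ring
      rw [e3, abs_div, show |(3:ℝ)| = 3 by norm_num]
      have h4 : |t * σ (17+n) - σ (16+n)| ≤ |σ (17+n)| + |σ (16+n)| := by
        calc |t * σ (17+n) - σ (16+n)| ≤ |t * σ (17+n)| + |σ (16+n)| := abs_sub _ _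
          _ = |σ (17+n)| + |σ (16+n)| := by rw [abs_mul, habs, one_mul]
      rw [show (5/6:ℝ)^(n+1+1) = (5/6)^n * (5/6) * (5/6) by ring,
        show C * ((5/6:ℝ)^n * (5/6) * (5/6)) = (C * (5/6)^n) * (5/6) * (5/6) by ring]
      rw [show (5/6:ℝ)^(n+1) = (5/6)^n * (5/6) by ring,
        show C * ((5/6:ℝ)^n * (5/6)) = (C * (5/6)^n) * (5/6) by ring] at ih2
      have hb0 : (0:ℝ) ≤ |σ (16+n)| := abs_nonneg _
      linarith
  exact fun k => (key k).1

lemma tsum_bound (σ : ℕ → ℝ) (b C P N : ℝ) (hb : 1 < b)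
    (hdecay : ∀ k, |σ (16+k)| ≤ C * (5/6)^k) (hC : 0 ≤ C)
    (hPsum : (∑ i ∈ Finset.range 15, max (σ (i+1)) 0) + 6*C ≤ P)
    (hNsum : -(∑ i ∈ Finset.range 15, min (σ (i+1)) 0) + 6*C ≤ N) :
    ∀ e : ℕ → ℝ, (∀ i, e i = 0 ∨ e i = 1 ∨ e i = b) →
      Summable (fun i => e i * σ (i+1)) →
      -(b*N) ≤ (∑' i, e i * σ (i+1)) ∧ (∑' i, e i * σ (i+1)) ≤ b*P := by
  intro e he hsum
  have hb0 : (0:ℝ) < b := lt_trans one_pos hb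
  have hrange : ∀ i, 0 ≤ e i ∧ e i ≤ b := by
    intro i; rcases he i with h | h | h <;> rw [h] <;> constructor <;> linarith
  have hsplit := Summable.sum_add_tsum_nat_add 15 hsum
  have hfinub : (∑ i ∈ Finset.range 15, e i * σ (i+1))
      ≤ b * (∑ i ∈ Finset.range 15, max (σ (i+1)) 0) := by
    rw [Finset.mul_sum]
    apply Finset.sum_le_sum
    intro i _
    obtain ⟨he0, heb⟩ := hrange i
    rcases le_or_gt 0 (σ (i+1)) with h | h
    · rw [max_eq_left h]; nlinarith
    · rw [max_eq_right h.le]; nlinarith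
  have hfinlb : b * (∑ i ∈ Finset.range 15, min (σ (i+1)) 0)
      ≤ (∑ i ∈ Finset.range 15, e i * σ (i+1)) := by
    rw [Finset.mul_sum]
    apply Finset.sum_le_sum
    intro i _
    obtain ⟨he0, heb⟩ := hrange i
    rcases le_or_gt 0 (σ (i+1)) with h | h
    · rw [min_eq_right h]; nlinarith
    · rw [min_eq_left h.le]; nlinarith
  have htailterm : ∀ i, |e (i+15) * σ (i+15+1)| ≤ b * C * (5/6)^i := by
    intro i
    obtain ⟨he0, heb⟩ := hrange (i+15)
    have := hdecay i
    rw [abs_mul, abs_of_nonneg he0]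
    have h5 : (0:ℝ) ≤ (5/6:ℝ)^i := by positivity
    have h6 : 0 ≤ |σ (16+i)| := abs_nonneg _
    rw [show i+15+1 = 16+i by ring]
    nlinarith
  have hgeo : Summable (fun i : ℕ => b * C * (5/6:ℝ)^i) :=
    (summable_geometric_of_lt_one (by norm_num) (by norm_num)).mul_left _
  have htsum : Summable (fun i => e (i+15) * σ (i+15+1)) :=
    (summable_nat_add_iff 15).mpr hsum
  have habs : |∑' i, e (i+15) * σ (i+15+1)| ≤ b * C * 6 := by
    calc |∑' i, e (i+15) * σ (i+15+1)| ≤ ∑' i, |e (i+15) * σ (i+15+1)| := by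
          simpa only [Real.norm_eq_abs] using norm_tsum_le_tsum_norm
            (f := fun i => e (i+15) * σ (i+15+1))
            (by simpa only [Real.norm_eq_abs] using htsum.abs)
      _ ≤ ∑' i, b * C * (5/6:ℝ)^i := Summable.tsum_le_tsum htailterm htsum.abs hgeo
      _ = b * C * (1 - 5/6)⁻¹ := by
          rw [tsum_mul_left, tsum_geometric_of_lt_one (by norm_num) (by norm_num)]
      _ = b * C * 6 := by norm_num
  constructor
  · rw [← hsplit]
    have h7 : -(b*C*6) ≤ ∑' i, e (i+15) * σ (i+15+1) := neg_le_of_abs_le habs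
    nlinarith
  · rw [← hsplit]
    have h7 : ∑' i, e (i+15) * σ (i+15+1) ≤ b*C*6 := le_of_abs_le habs
    nlinarith

lemma core (A : Matrix (Fin 2) (Fin 2) ℤ) (b : ℝ) (hb : 1 < b) (v : Fin 2 → ℝ)
    (M : Matrix (Fin 2) (Fin 2) ℝ) (hM : (matR A)⁻¹ = M)
    (H : (Fin 2 → ℝ) →L[ℝ] ℝ) (σ : ℕ → ℝ)
    (hσ : ∀ i, H ((M ^ (i+1)) *ᵥ v) = σ i) (hσ0 : σ 0 = 10)
    (P N μ κ : ℝ)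
    (hPN : ∀ e : ℕ → ℝ, (∀ i, e i = 0 ∨ e i = 1 ∨ e i = b) →
      Summable (fun i => e i * σ (i+1)) →
      -(b*N) ≤ (∑' i, e i * σ (i+1)) ∧ (∑' i, e i * σ (i+1)) ≤ b*P)
    (hκ : κ = 1 ∨ κ = b) (hμ0 : 0 ≤ μ)
    (hsplitd : ∀ d : ℝ, (d = 0 ∨ d = 1 ∨ d = b) → d ≤ μ ∨ κ ≤ d)
    (hsep : μ*10 + b*P < κ*10 - b*N) :
    ¬ IsConnected (selfAffine A {0, v, b • v}) := by
  have hb0 : (0:ℝ) < b := lt_trans one_pos hb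
  -- basic bounds from e = 0
  have h00 := hPN (fun _ => 0) (fun i => Or.inl rfl) (by simpa using summable_zero)
  simp only [zero_mul, tsum_zero] at h00
  obtain ⟨hN0, hP0⟩ := h00  -- -(b*N) ≤ 0 and 0 ≤ b*P
  set T := selfAffine A {0, v, b • v} with hT
  set α : ℝ := (μ*10 + b*P + (κ*10 - b*N))/2 with hα
  have hα1 : μ*10 + b*P < α := by rw [hα]; linarith
  have hα2 : α < κ*10 - b*N := by rw [hα]; linarith
  -- every element of T has a digit expansion; key bounds
  have hkey : ∀ x ∈ T, (H x ≤ μ*10 + b*P) ∨ (κ*10 - b*N ≤ H x) := by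
    rintro x ⟨d, hd, hsum⟩
    have hc : ∀ i, ∃ c : ℝ, (c = 0 ∨ c = 1 ∨ c = b) ∧ d i = c • v := by
      intro i
      rcases hd i with h | h | h
      · exact ⟨0, Or.inl rfl, by simp [h]⟩
      · exact ⟨1, Or.inr (Or.inl rfl), by simp [h]⟩
      · exact ⟨b, Or.inr (Or.inr rfl), h⟩
    choose c hcd hdc using hc
    have hfun : (fun i => ((matR A)⁻¹ ^ (i + 1)) *ᵥ (d i))
        = fun i => c i • ((M ^ (i+1)) *ᵥ v) := by
      funext i
      rw [hM, hdc i, Matrix.mulVec_smul]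
    rw [hfun] at hsum
    have hsum2 : HasSum (fun i => c i * σ i) (H x) := by
      have := hsum.mapL H
      simpa only [_root_.map_smul, smul_eq_mul, hσ] using this
    have hx : H x = c 0 * σ 0 + ∑' i, c (i+1) * σ (i+1) := by
      have := Summable.sum_add_tsum_nat_add (f := fun i => c i * σ i) 1 hsum2.summable
      rw [hsum2.tsum_eq] at this
      rw [← this, Finset.sum_range_one]
    have hsummable : Summable (fun i => c (i+1) * σ (i+1)) :=
      (summable_nat_add_iff 1).mpr hsum2.summable
    obtain ⟨hlb, hub⟩ := hPN (fun i => c (i+1)) (fun i => hcd (i+1)) hsummable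
    rcases hsplitd (c 0) (hcd 0) with hlow | hhigh
    · left
      have hc0 : 0 ≤ c 0 := by rcases hcd 0 with h|h|h <;> rw [h] <;> linarith
      rw [hx, hσ0]; nlinarith
    · right
      rw [hx, hσ0]; nlinarith
  rintro ⟨hne, hpre⟩
  have hUopen : IsOpen {x : Fin 2 → ℝ | H x < α} := isOpen_lt H.continuous continuous_const
  have hVopen : IsOpen {x : Fin 2 → ℝ | α < H x} := isOpen_lt continuous_const H.continuous
  have hcover : T ⊆ {x | H x < α} ∪ {x | α < H x} := by
    intro x hx
    rcases hkey x hx with h | h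
    · exact Or.inl (by simp only [Set.mem_setOf_eq]; linarith)
    · exact Or.inr (by simp only [Set.mem_setOf_eq]; linarith)
  -- witness 0 ∈ T
  have h0T : (0 : Fin 2 → ℝ) ∈ T := by
    refine ⟨fun _ => 0, fun i => Or.inl rfl, ?_⟩
    simpa [Matrix.mulVec_zero] using hasSum_zero
  have h0U : (0 : Fin 2 → ℝ) ∈ {x : Fin 2 → ℝ | H x < α} := by
    simp only [Set.mem_setOf_eq, map_zero]
    nlinarith
  -- witness κ-point
  have hκD : κ • v ∈ ({0, v, b • v} : Set (Fin 2 → ℝ)) := by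
    rcases hκ with rfl | rfl
    · right; left; rw [one_smul]
    · right; right; rfl
  have hxκT : (M *ᵥ (κ • v)) ∈ T := by
    refine ⟨fun i => if i = 0 then κ • v else 0, fun i => ?_, ?_⟩
    · by_cases h : i = 0 <;> simp only [h, if_true, if_false] <;> simp [hκD]
    · have : (fun i => ((matR A)⁻¹ ^ (i + 1)) *ᵥ (if i = 0 then κ • v else 0))
          = fun i => if i = 0 then M *ᵥ (κ • v) else 0 := by
        funext i
        by_cases h : i = 0
        · simp [h, hM, pow_one]
        · simp [h, Matrix.mulVec_zero]
      rw [this]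
      exact hasSum_ite_eq 0 _
  have hκ1 : 1 ≤ κ := by rcases hκ with rfl | rfl <;> linarith
  have hxκV : (M *ᵥ (κ • v)) ∈ {x : Fin 2 → ℝ | α < H x} := by
    simp only [Set.mem_setOf_eq]
    have : H (M *ᵥ (κ • v)) = κ * 10 := by
      rw [Matrix.mulVec_smul, _root_.map_smul, smul_eq_mul, ← pow_one M]
      rw [hσ 0, hσ0]
    rw [this]
    nlinarith
  obtain ⟨y, _, hyU, hyV⟩ := hpre _ _ hUopen hVopen hcover ⟨0, h0T, h0U⟩
    ⟨M *ᵥ (κ • v), hxκT, hxκV⟩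
  simp only [Set.mem_setOf_eq] at hyU hyV
  linarith

lemma cayley (A : Matrix (Fin 2) (Fin 2) ℤ)
    (hchar : A.charpoly = X ^ 2 + X + C 3 ∨ A.charpoly = X ^ 2 - X + C 3) :
    ∃ t : ℝ, (t = 1 ∨ t = -1) ∧ matR A * matR A = t • matR A - (3:ℝ) • 1 := by
  set B := matR A with hB
  have hCH := Matrix.aeval_self_charpoly A
  have hmap : ((Int.castRingHom ℝ).mapMatrix : Matrix (Fin 2) (Fin 2) ℤ →+* _) A = B := rfl
  have h31 : ((Int.castRingHom ℝ).mapMatrix : Matrix (Fin 2) (Fin 2) ℤ →+* _)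
      (algebraMap ℤ (Matrix (Fin 2) (Fin 2) ℤ) 3) = (3:ℝ) • (1 : Matrix (Fin 2) (Fin 2) ℝ) := by
    rw [Algebra.algebraMap_eq_smul_one, map_zsmul]
    rw [show ((3:ℝ) • (1 : Matrix (Fin 2) (Fin 2) ℝ)) = ((3:ℤ) : ℝ) • 1 by norm_num,
      Int.cast_smul_eq_zsmul]
    congr 1
    ext i j
    simp [Matrix.one_apply]
  rcases hchar with h | h
  · refine ⟨-1, Or.inr rfl, ?_⟩
    rw [h] at hCH
    simp only [map_add, map_pow, aeval_X, aeval_C] at hCH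
    rw [pow_two] at hCH
    have h2 := congrArg (fun M : Matrix (Fin 2) (Fin 2) ℤ =>
      ((Int.castRingHom ℝ).mapMatrix : Matrix (Fin 2) (Fin 2) ℤ →+* Matrix (Fin 2) (Fin 2) ℝ) M) hCH
    simp only [map_add, _root_.map_mul, map_zero, hmap, h31] at h2
    have h3 : B * B = -(B + (3:ℝ) • 1) :=
      eq_neg_of_add_eq_zero_left (by rw [← add_assoc]; exact h2)
    rw [h3]; module
  · refine ⟨1, Or.inl rfl, ?_⟩
    rw [h] at hCH
    simp only [map_add, map_sub, map_pow, aeval_X, aeval_C] at hCH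
    rw [pow_two] at hCH
    have h2 := congrArg (fun M : Matrix (Fin 2) (Fin 2) ℤ =>
      ((Int.castRingHom ℝ).mapMatrix : Matrix (Fin 2) (Fin 2) ℤ →+* Matrix (Fin 2) (Fin 2) ℝ) M) hCH
    simp only [map_add, map_sub, _root_.map_mul, map_zero, hmap, h31] at h2
    have h3 : B * B = -((3:ℝ) • 1 - B) :=
      eq_neg_of_add_eq_zero_left (by rw [show B * B + ((3:ℝ) • 1 - B) = B * B - B + (3:ℝ) • 1 by abel]; exact h2)
    rw [h3]; module

lemma setup (B : Matrix (Fin 2) (Fin 2) ℝ) (t : ℝ)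
    (hB2 : B * B = t • B - (3:ℝ) • 1)
    (v : Fin 2 → ℝ) (hv : LinearIndependent ℝ ![v, B *ᵥ v]) :
    ∃ (M : Matrix (Fin 2) (Fin 2) ℝ) (H : (Fin 2 → ℝ) →L[ℝ] ℝ) (σ : ℕ → ℝ),
      B * M = 1 ∧ (∀ i, H ((M ^ (i+1)) *ᵥ v) = σ i) ∧
      σ 0 = 10 ∧ σ 1 = t * (10 - 3 * Real.sqrt 11) / 6 ∧
      (∀ k, σ (k+2) = (t * σ (k+1) - σ k)/3) := by
  set s := Real.sqrt 11 with hs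
  set M : Matrix (Fin 2) (Fin 2) ℝ := (3:ℝ)⁻¹ • (t • 1 - B) with hM
  have hBM : B * M = 1 := by
    rw [hM, mul_smul_comm, mul_sub, mul_smul_comm, mul_one, hB2]
    rw [show t • B - (t • B - (3:ℝ) • 1) = (3:ℝ) • (1 : Matrix (Fin 2) (Fin 2) ℝ) by abel]
    rw [smul_smul]; norm_num
  have hMB : M * B = 1 := by
    rw [hM, smul_mul_assoc, sub_mul, smul_mul_assoc, one_mul, hB2]
    rw [show t • B - (t • B - (3:ℝ) • 1) = (3:ℝ) • (1 : Matrix (Fin 2) (Fin 2) ℝ) by abel]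
    rw [smul_smul]; norm_num
  have hM2 : M * M = (3:ℝ)⁻¹ • (t • M - 1) := by
    calc M * M = M * ((3:ℝ)⁻¹ • (t • 1 - B)) := by rw [← hM]
      _ = (3:ℝ)⁻¹ • (M * (t • 1 - B)) := mul_smul_comm _ _ _
      _ = (3:ℝ)⁻¹ • (t • M - 1) := by rw [mul_sub, mul_smul_comm, mul_one, hMB]
  have hcard : Fintype.card (Fin 2) = Module.finrank ℝ (Fin 2 → ℝ) := by simp
  set bas := basisOfLinearIndependentOfCardEqFinrank hv hcard with hbas
  have hb0 : bas 0 = v := by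
    rw [hbas, coe_basisOfLinearIndependentOfCardEqFinrank]; rfl
  have hb1 : bas 1 = B *ᵥ v := by
    rw [hbas, coe_basisOfLinearIndependentOfCardEqFinrank]; rfl
  set a0 : ℝ := t * (10 + 3 * s) / 2 with ha0
  set a1 : ℝ := t * a0 - 30 with ha1
  set H0 : (Fin 2 → ℝ) →ₗ[ℝ] ℝ := bas.constr ℝ ![a0, a1] with hH0
  set H : (Fin 2 → ℝ) →L[ℝ] ℝ := LinearMap.toContinuousLinearMap H0 with hH
  have hHapp : ∀ x, H x = H0 x := fun x => rfl
  have hHv : H v = a0 := by rw [hHapp, ← hb0, hH0, Module.Basis.constr_basis]; rfl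
  have hHBv : H (B *ᵥ v) = a1 := by rw [hHapp, ← hb1, hH0, Module.Basis.constr_basis]; rfl
  have hMv : M *ᵥ v = (3:ℝ)⁻¹ • (t • v - B *ᵥ v) := by
    rw [hM, Matrix.smul_mulVec, Matrix.sub_mulVec, Matrix.smul_mulVec,
      Matrix.one_mulVec]
  have h10 : H (M *ᵥ v) = 10 := by
    rw [hMv, _root_.map_smul, map_sub, _root_.map_smul, hHv, hHBv, ha1]
    simp only [smul_eq_mul]; ring
  have hM2v : (M ^ 2) *ᵥ v = (3:ℝ)⁻¹ • (t • (M *ᵥ v) - v) := by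
    rw [pow_two, hM2, Matrix.smul_mulVec, Matrix.sub_mulVec,
      Matrix.smul_mulVec, Matrix.one_mulVec]
  refine ⟨M, H, fun i => H ((M ^ (i+1)) *ᵥ v), hBM, fun i => rfl, ?_, ?_, ?_⟩
  · show H ((M ^ (0+1)) *ᵥ v) = 10
    rw [show (0+1) = 1 from rfl, pow_one]; exact h10
  · show H ((M ^ (1+1)) *ᵥ v) = t * (10 - 3 * s) / 6
    rw [show (1+1) = 2 from rfl, hM2v, _root_.map_smul, map_sub, _root_.map_smul, hHv, h10, ha0]
    simp only [smul_eq_mul]; ring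
  · intro k
    show H ((M ^ (k+2+1)) *ᵥ v) = (t * H ((M ^ (k+1+1)) *ᵥ v) - H ((M ^ (k+0+1)) *ᵥ v))/3
    have hstep : (M ^ (k+2+1)) *ᵥ v
        = (3:ℝ)⁻¹ • (t • ((M ^ (k+1+1)) *ᵥ v) - (M ^ (k+0+1)) *ᵥ v) := by
      have hpow : M ^ (k+2+1) = M ^ (k+1) * (M * M) := by
        rw [← pow_two, ← pow_add]
      rw [hpow, hM2, mul_smul_comm, mul_sub, mul_smul_comm, mul_one]
      rw [Matrix.smul_mulVec, Matrix.sub_mulVec, Matrix.smul_mulVec]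
      rw [show M^(k+1) * M = M^(k+1+1) from (pow_succ M (k+1)).symm]
    rw [hstep, _root_.map_smul, map_sub, _root_.map_smul]
    simp only [smul_eq_mul]; ring

/-- For an expanding `A ∈ M₂(ℤ)` with characteristic polynomial `x² ± x + 3`
and digit set `{0, 1, b}v`, `b > 1`: if `b ≥ 67/25` or `b ≤ 67/42` then `T(A,D)` is disconnected. -/
theorem disconnected_case_7 (A : Matrix (Fin 2) (Fin 2) ℤ) (hA : IsExpanding A)
    (hchar : A.charpoly = X ^ 2 + X + C 3 ∨ A.charpoly = X ^ 2 - X + C 3)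
    (b : ℝ) (hb : 1 < b) (v : Fin 2 → ℝ)
    (hv : LinearIndependent ℝ ![v, (matR A).mulVec v])
    (hrange : b ≥ 67 / 25 ∨ b ≤ 67 / 42) :
    ¬ IsConnected (selfAffine A {0, v, b • v}) := by
  obtain ⟨t, ht, hB2⟩ := cayley A hchar
  obtain ⟨M, H, σ, hBM, hσ, hσ0, hσ1, hrec⟩ := setup (matR A) t hB2 v hv
  have hM : (matR A)⁻¹ = M := Matrix.inv_eq_right_inv hBM
  have hsL := sqrt11_gt
  have hsU := sqrt11_lt
  rcases ht with rfl | rfl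
  · -- t = 1
    have hs1 : σ 1 = ((5 : ℝ)/3) + ((-1 : ℝ)/2) * Real.sqrt 11 := by rw [hσ1]; ring
    have hs2 : σ 2 = ((-25 : ℝ)/9) + ((-1 : ℝ)/6) * Real.sqrt 11 := by
      have h := hrec 0
      rw [show (0+2 : ℕ) = 2 from rfl, show (0+1 : ℕ) = 1 from rfl] at h
      rw [hs1, hσ0] at h
      rw [h]; ring
    have hs3 : σ 3 = ((-40 : ℝ)/27) + ((1 : ℝ)/9) * Real.sqrt 11 := by
      have h := hrec 1
      rw [show (1+2 : ℕ) = 3 from rfl, show (1+1 : ℕ) = 2 from rfl] at h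
      rw [hs2, hs1] at h
      rw [h]; ring
    have hs4 : σ 4 = ((35 : ℝ)/81) + ((5 : ℝ)/54) * Real.sqrt 11 := by
      have h := hrec 2
      rw [show (2+2 : ℕ) = 4 from rfl, show (2+1 : ℕ) = 3 from rfl] at h
      rw [hs3, hs2] at h
      rw [h]; ring
    have hs5 : σ 5 = ((155 : ℝ)/243) + ((-1 : ℝ)/162) * Real.sqrt 11 := by
      have h := hrec 3
      rw [show (3+2 : ℕ) = 5 from rfl, show (3+1 : ℕ) = 4 from rfl] at h
      rw [hs4, hs3] at h
      rw [h]; ring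
    have hs6 : σ 6 = ((50 : ℝ)/729) + ((-8 : ℝ)/243) * Real.sqrt 11 := by
      have h := hrec 4
      rw [show (4+2 : ℕ) = 6 from rfl, show (4+1 : ℕ) = 5 from rfl] at h
      rw [hs5, hs4] at h
      rw [h]; ring
    have hs7 : σ 7 = ((-415 : ℝ)/2187) + ((-13 : ℝ)/1458) * Real.sqrt 11 := by
      have h := hrec 5
      rw [show (5+2 : ℕ) = 7 from rfl, show (5+1 : ℕ) = 6 from rfl] at h
      rw [hs6, hs5] at h
      rw [h]; ring
    have hs8 : σ 8 = ((-565 : ℝ)/6561) + ((35 : ℝ)/4374) * Real.sqrt 11 := by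
      have h := hrec 6
      rw [show (6+2 : ℕ) = 8 from rfl, show (6+1 : ℕ) = 7 from rfl] at h
      rw [hs7, hs6] at h
      rw [h]; ring
    have hs9 : σ 9 = ((680 : ℝ)/19683) + ((37 : ℝ)/6561) * Real.sqrt 11 := by
      have h := hrec 7
      rw [show (7+2 : ℕ) = 9 from rfl, show (7+1 : ℕ) = 8 from rfl] at h
      rw [hs8, hs7] at h
      rw [h]; ring
    have hs10 : σ 10 = ((2375 : ℝ)/59049) + ((-31 : ℝ)/39366) * Real.sqrt 11 := by
      have h := hrec 8
      rw [show (8+2 : ℕ) = 10 from rfl, show (8+1 : ℕ) = 9 from rfl] at h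
      rw [hs9, hs8] at h
      rw [h]; ring
    have hs11 : σ 11 = ((335 : ℝ)/177147) + ((-253 : ℝ)/118098) * Real.sqrt 11 := by
      have h := hrec 9
      rw [show (9+2 : ℕ) = 11 from rfl, show (9+1 : ℕ) = 10 from rfl] at h
      rw [hs10, hs9] at h
      rw [h]; ring
    have hs12 : σ 12 = ((-6790 : ℝ)/531441) + ((-80 : ℝ)/177147) * Real.sqrt 11 := by
      have h := hrec 10
      rw [show (10+2 : ℕ) = 12 from rfl, show (10+1 : ℕ) = 11 from rfl] at h
      rw [hs11, hs10] at h
      rw [h]; ring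
    have hs13 : σ 13 = ((-7795 : ℝ)/1594323) + ((599 : ℝ)/1062882) * Real.sqrt 11 := by
      have h := hrec 11
      rw [show (11+2 : ℕ) = 13 from rfl, show (11+1 : ℕ) = 12 from rfl] at h
      rw [hs12, hs11] at h
      rw [h]; ring
    have hs14 : σ 14 = ((12575 : ℝ)/4782969) + ((1079 : ℝ)/3188646) * Real.sqrt 11 := by
      have h := hrec 12
      rw [show (12+2 : ℕ) = 14 from rfl, show (12+1 : ℕ) = 13 from rfl] at h
      rw [hs13, hs12] at h
      rw [h]; ring
    have hs15 : σ 15 = ((35960 : ℝ)/14348907) + ((-359 : ℝ)/4782969) * Real.sqrt 11 := by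
      have h := hrec 13
      rw [show (13+2 : ℕ) = 15 from rfl, show (13+1 : ℕ) = 14 from rfl] at h
      rw [hs14, hs13] at h
      rw [h]; ring
    have hs16 : σ 16 = ((-1765 : ℝ)/43046721) + ((-3955 : ℝ)/28697814) * Real.sqrt 11 := by
      have h := hrec 14
      rw [show (14+2 : ℕ) = 16 from rfl, show (14+1 : ℕ) = 15 from rfl] at h
      rw [hs15, hs14] at h
      rw [h]; ring
    have hs17 : σ 17 = ((-109645 : ℝ)/129140163) + ((-1801 : ℝ)/86093442) * Real.sqrt 11 := by
      have h := hrec 15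
      rw [show (15+2 : ℕ) = 17 from rfl, show (15+1 : ℕ) = 16 from rfl] at h
      rw [hs16, hs15] at h
      rw [h]; ring
    have mx1 : max (σ (0+1)) 0 ≤ ((83547 : ℝ)/10000000) := by
      rw [show (0+1 : ℕ) = 1 from rfl]
      exact max_le (by rw [hs1]; linarith only [hsL, hsU]) (by norm_num)
    have mn1 : (0 : ℝ) ≤ min (σ (0+1)) 0 := by
      rw [show (0+1 : ℕ) = 1 from rfl]
      exact le_min (by rw [hs1]; linarith only [hsL, hsU]) (by norm_num)
    have mx2 : max (σ (1+1)) 0 ≤ (0 : ℝ) := by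
      rw [show (1+1 : ℕ) = 2 from rfl]
      exact max_le (by rw [hs2]; linarith only [hsL, hsU]) (by norm_num)
    have mn2 : ((-33305487 : ℝ)/10000000) ≤ min (σ (1+1)) 0 := by
      rw [show (1+1 : ℕ) = 2 from rfl]
      exact le_min (by rw [hs2]; linarith only [hsL, hsU]) (by norm_num)
    have mx3 : max (σ (2+1)) 0 ≤ (0 : ℝ) := by
      rw [show (2+1 : ℕ) = 3 from rfl]
      exact max_le (by rw [hs3]; linarith only [hsL, hsU]) (by norm_num)
    have mn3 : ((-5564839 : ℝ)/5000000) ≤ min (σ (2+1)) 0 := by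
      rw [show (2+1 : ℕ) = 3 from rfl]
      exact le_min (by rw [hs3]; linarith only [hsL, hsU]) (by norm_num)
    have mx4 : max (σ (3+1)) 0 ≤ ((7391937 : ℝ)/10000000) := by
      rw [show (3+1 : ℕ) = 4 from rfl]
      exact max_le (by rw [hs4]; linarith only [hsL, hsU]) (by norm_num)
    have mn4 : (0 : ℝ) ≤ min (σ (3+1)) 0 := by
      rw [show (3+1 : ℕ) = 4 from rfl]
      exact le_min (by rw [hs4]; linarith only [hsL, hsU]) (by norm_num)
    have mx5 : max (σ (4+1)) 0 ≤ ((6173871 : ℝ)/10000000) := by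
      rw [show (4+1 : ℕ) = 5 from rfl]
      exact max_le (by rw [hs5]; linarith only [hsL, hsU]) (by norm_num)
    have mn5 : (0 : ℝ) ≤ min (σ (4+1)) 0 := by
      rw [show (4+1 : ℕ) = 5 from rfl]
      exact le_min (by rw [hs5]; linarith only [hsL, hsU]) (by norm_num)
    have mx6 : max (σ (5+1)) 0 ≤ (0 : ℝ) := by
      rw [show (5+1 : ℕ) = 6 from rfl]
      exact max_le (by rw [hs6]; linarith only [hsL, hsU]) (by norm_num)
    have mn6 : ((-203011 : ℝ)/5000000) ≤ min (σ (5+1)) 0 := by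
      rw [show (5+1 : ℕ) = 6 from rfl]
      exact le_min (by rw [hs6]; linarith only [hsL, hsU]) (by norm_num)
    have mx7 : max (σ (6+1)) 0 ≤ (0 : ℝ) := by
      rw [show (6+1 : ℕ) = 7 from rfl]
      exact max_le (by rw [hs7]; linarith only [hsL, hsU]) (by norm_num)
    have mn7 : ((-1096649 : ℝ)/5000000) ≤ min (σ (6+1)) 0 := by
      rw [show (6+1 : ℕ) = 7 from rfl]
      exact le_min (by rw [hs7]; linarith only [hsL, hsU]) (by norm_num)
    have mx8 : max (σ (7+1)) 0 ≤ (0 : ℝ) := by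
      rw [show (7+1 : ℕ) = 8 from rfl]
      exact max_le (by rw [hs8]; linarith only [hsL, hsU]) (by norm_num)
    have mn8 : ((-595759 : ℝ)/10000000) ≤ min (σ (7+1)) 0 := by
      rw [show (7+1 : ℕ) = 8 from rfl]
      exact le_min (by rw [hs8]; linarith only [hsL, hsU]) (by norm_num)
    have mx9 : max (σ (8+1)) 0 ≤ ((266257 : ℝ)/5000000) := by
      rw [show (8+1 : ℕ) = 9 from rfl]
      exact max_le (by rw [hs9]; linarith only [hsL, hsU]) (by norm_num)
    have mn9 : (0 : ℝ) ≤ min (σ (8+1)) 0 := by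
      rw [show (8+1 : ℕ) = 9 from rfl]
      exact le_min (by rw [hs9]; linarith only [hsL, hsU]) (by norm_num)
    have mx10 : max (σ (9+1)) 0 ≤ ((376091 : ℝ)/10000000) := by
      rw [show (9+1 : ℕ) = 10 from rfl]
      exact max_le (by rw [hs10]; linarith only [hsL, hsU]) (by norm_num)
    have mn10 : (0 : ℝ) ≤ min (σ (9+1)) 0 := by
      rw [show (9+1 : ℕ) = 10 from rfl]
      exact le_min (by rw [hs10]; linarith only [hsL, hsU]) (by norm_num)
    have mx11 : max (σ (10+1)) 0 ≤ (0 : ℝ) := by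
      rw [show (10+1 : ℕ) = 11 from rfl]
      exact max_le (by rw [hs11]; linarith only [hsL, hsU]) (by norm_num)
    have mn11 : ((-52141 : ℝ)/10000000) ≤ min (σ (10+1)) 0 := by
      rw [show (10+1 : ℕ) = 11 from rfl]
      exact le_min (by rw [hs11]; linarith only [hsL, hsU]) (by norm_num)
    have mx12 : max (σ (11+1)) 0 ≤ (0 : ℝ) := by
      rw [show (11+1 : ℕ) = 12 from rfl]
      exact max_le (by rw [hs12]; linarith only [hsL, hsU]) (by norm_num)
    have mn12 : ((-17843 : ℝ)/1250000) ≤ min (σ (11+1)) 0 := by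
      rw [show (11+1 : ℕ) = 12 from rfl]
      exact le_min (by rw [hs12]; linarith only [hsL, hsU]) (by norm_num)
    have mx13 : max (σ (12+1)) 0 ≤ (0 : ℝ) := by
      rw [show (12+1 : ℕ) = 13 from rfl]
      exact max_le (by rw [hs13]; linarith only [hsL, hsU]) (by norm_num)
    have mn13 : ((-30201 : ℝ)/10000000) ≤ min (σ (12+1)) 0 := by
      rw [show (12+1 : ℕ) = 13 from rfl]
      exact le_min (by rw [hs13]; linarith only [hsL, hsU]) (by norm_num)
    have mx14 : max (σ (13+1)) 0 ≤ ((7503 : ℝ)/2000000) := by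
      rw [show (13+1 : ℕ) = 14 from rfl]
      exact max_le (by rw [hs14]; linarith only [hsL, hsU]) (by norm_num)
    have mn14 : (0 : ℝ) ≤ min (σ (13+1)) 0 := by
      rw [show (13+1 : ℕ) = 14 from rfl]
      exact le_min (by rw [hs14]; linarith only [hsL, hsU]) (by norm_num)
    have mx15 : max (σ (14+1)) 0 ≤ ((5643 : ℝ)/2500000) := by
      rw [show (14+1 : ℕ) = 15 from rfl]
      exact max_le (by rw [hs15]; linarith only [hsL, hsU]) (by norm_num)
    have mn15 : (0 : ℝ) ≤ min (σ (14+1)) 0 := by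
      rw [show (14+1 : ℕ) = 15 from rfl]
      exact le_min (by rw [hs15]; linarith only [hsL, hsU]) (by norm_num)
    have h16 : |σ 16| ≤ (((5511 : ℝ)/5000000)) := abs_le.mpr ⟨by rw [hs16]; linarith only [hsL, hsU], by rw [hs16]; linarith only [hsL, hsU]⟩
    have h17 : |σ 17| ≤ 5/6 * (((5511 : ℝ)/5000000)) := abs_le.mpr ⟨by rw [hs17]; linarith only [hsL, hsU], by rw [hs17]; linarith only [hsL, hsU]⟩
    have hdecay := decay_lemma σ 1 (((5511 : ℝ)/5000000)) (Or.inl rfl) hrec h16 h17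
    have hC : (0:ℝ) ≤ (((5511 : ℝ)/5000000)) := by norm_num
    have hPsum : (∑ i ∈ Finset.range 15, max (σ (i+1)) 0) + 6*(((5511 : ℝ)/5000000)) ≤ (((14684179 : ℝ)/10000000)) := by
      simp only [Finset.sum_range_succ, Finset.sum_range_zero]
      linarith only [mx1, mx2, mx3, mx4, mx5, mx6, mx7, mx8, mx9, mx10, mx11, mx12, mx13, mx14, mx15]
    have hNsum : -(∑ i ∈ Finset.range 15, min (σ (i+1)) 0) + 6*(((5511 : ℝ)/5000000)) ≤ (((23960731 : ℝ)/5000000)) := by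
      simp only [Finset.sum_range_succ, Finset.sum_range_zero]
      linarith only [mn1, mn2, mn3, mn4, mn5, mn6, mn7, mn8, mn9, mn10, mn11, mn12, mn13, mn14, mn15]
    have hPN := tsum_bound σ b (((5511 : ℝ)/5000000)) (((14684179 : ℝ)/10000000)) (((23960731 : ℝ)/5000000)) hb hdecay hC hPsum hNsum
    rcases hrange with hbig | hsmall
    · exact core A b hb v M hM H σ hσ hσ0 (((14684179 : ℝ)/10000000)) (((23960731 : ℝ)/5000000)) 1 b hPN (Or.inr rfl)
        (by norm_num)
        (fun d hd => by
          rcases hd with rfl | rfl | rfl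
          · exact Or.inl (by norm_num)
          · exact Or.inl le_rfl
          · exact Or.inr le_rfl)
        (by linarith only [hbig])
    · exact core A b hb v M hM H σ hσ hσ0 (((14684179 : ℝ)/10000000)) (((23960731 : ℝ)/5000000)) 0 1 hPN (Or.inl rfl)
        le_rfl
        (fun d hd => by
          rcases hd with rfl | rfl | rfl
          · exact Or.inl le_rfl
          · exact Or.inr le_rfl
          · exact Or.inr (le_of_lt hb))
        (by linarith only [hsmall, hb])
  · -- t = -1
    have hs1 : σ 1 = ((-5 : ℝ)/3) + ((1 : ℝ)/2) * Real.sqrt 11 := by rw [hσ1]; ring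
    have hs2 : σ 2 = ((-25 : ℝ)/9) + ((-1 : ℝ)/6) * Real.sqrt 11 := by
      have h := hrec 0
      rw [show (0+2 : ℕ) = 2 from rfl, show (0+1 : ℕ) = 1 from rfl] at h
      rw [hs1, hσ0] at h
      rw [h]; ring
    have hs3 : σ 3 = ((40 : ℝ)/27) + ((-1 : ℝ)/9) * Real.sqrt 11 := by
      have h := hrec 1
      rw [show (1+2 : ℕ) = 3 from rfl, show (1+1 : ℕ) = 2 from rfl] at h
      rw [hs2, hs1] at h
      rw [h]; ring
    have hs4 : σ 4 = ((35 : ℝ)/81) + ((5 : ℝ)/54) * Real.sqrt 11 := by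
      have h := hrec 2
      rw [show (2+2 : ℕ) = 4 from rfl, show (2+1 : ℕ) = 3 from rfl] at h
      rw [hs3, hs2] at h
      rw [h]; ring
    have hs5 : σ 5 = ((-155 : ℝ)/243) + ((1 : ℝ)/162) * Real.sqrt 11 := by
      have h := hrec 3
      rw [show (3+2 : ℕ) = 5 from rfl, show (3+1 : ℕ) = 4 from rfl] at h
      rw [hs4, hs3] at h
      rw [h]; ring
    have hs6 : σ 6 = ((50 : ℝ)/729) + ((-8 : ℝ)/243) * Real.sqrt 11 := by
      have h := hrec 4
      rw [show (4+2 : ℕ) = 6 from rfl, show (4+1 : ℕ) = 5 from rfl] at h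
      rw [hs5, hs4] at h
      rw [h]; ring
    have hs7 : σ 7 = ((415 : ℝ)/2187) + ((13 : ℝ)/1458) * Real.sqrt 11 := by
      have h := hrec 5
      rw [show (5+2 : ℕ) = 7 from rfl, show (5+1 : ℕ) = 6 from rfl] at h
      rw [hs6, hs5] at h
      rw [h]; ring
    have hs8 : σ 8 = ((-565 : ℝ)/6561) + ((35 : ℝ)/4374) * Real.sqrt 11 := by
      have h := hrec 6
      rw [show (6+2 : ℕ) = 8 from rfl, show (6+1 : ℕ) = 7 from rfl] at h
      rw [hs7, hs6] at h
      rw [h]; ring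
    have hs9 : σ 9 = ((-680 : ℝ)/19683) + ((-37 : ℝ)/6561) * Real.sqrt 11 := by
      have h := hrec 7
      rw [show (7+2 : ℕ) = 9 from rfl, show (7+1 : ℕ) = 8 from rfl] at h
      rw [hs8, hs7] at h
      rw [h]; ring
    have hs10 : σ 10 = ((2375 : ℝ)/59049) + ((-31 : ℝ)/39366) * Real.sqrt 11 := by
      have h := hrec 8
      rw [show (8+2 : ℕ) = 10 from rfl, show (8+1 : ℕ) = 9 from rfl] at h
      rw [hs9, hs8] at h
      rw [h]; ring
    have hs11 : σ 11 = ((-335 : ℝ)/177147) + ((253 : ℝ)/118098) * Real.sqrt 11 := by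
      have h := hrec 9
      rw [show (9+2 : ℕ) = 11 from rfl, show (9+1 : ℕ) = 10 from rfl] at h
      rw [hs10, hs9] at h
      rw [h]; ring
    have hs12 : σ 12 = ((-6790 : ℝ)/531441) + ((-80 : ℝ)/177147) * Real.sqrt 11 := by
      have h := hrec 10
      rw [show (10+2 : ℕ) = 12 from rfl, show (10+1 : ℕ) = 11 from rfl] at h
      rw [hs11, hs10] at h
      rw [h]; ring
    have hs13 : σ 13 = ((7795 : ℝ)/1594323) + ((-599 : ℝ)/1062882) * Real.sqrt 11 := by
      have h := hrec 11
      rw [show (11+2 : ℕ) = 13 from rfl, show (11+1 : ℕ) = 12 from rfl] at h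
      rw [hs12, hs11] at h
      rw [h]; ring
    have hs14 : σ 14 = ((12575 : ℝ)/4782969) + ((1079 : ℝ)/3188646) * Real.sqrt 11 := by
      have h := hrec 12
      rw [show (12+2 : ℕ) = 14 from rfl, show (12+1 : ℕ) = 13 from rfl] at h
      rw [hs13, hs12] at h
      rw [h]; ring
    have hs15 : σ 15 = ((-35960 : ℝ)/14348907) + ((359 : ℝ)/4782969) * Real.sqrt 11 := by
      have h := hrec 13
      rw [show (13+2 : ℕ) = 15 from rfl, show (13+1 : ℕ) = 14 from rfl] at h
      rw [hs14, hs13] at h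
      rw [h]; ring
    have hs16 : σ 16 = ((-1765 : ℝ)/43046721) + ((-3955 : ℝ)/28697814) * Real.sqrt 11 := by
      have h := hrec 14
      rw [show (14+2 : ℕ) = 16 from rfl, show (14+1 : ℕ) = 15 from rfl] at h
      rw [hs15, hs14] at h
      rw [h]; ring
    have hs17 : σ 17 = ((109645 : ℝ)/129140163) + ((1801 : ℝ)/86093442) * Real.sqrt 11 := by
      have h := hrec 15
      rw [show (15+2 : ℕ) = 17 from rfl, show (15+1 : ℕ) = 16 from rfl] at h
      rw [hs16, hs15] at h
      rw [h]; ring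
    have mx1 : max (σ (0+1)) 0 ≤ (0 : ℝ) := by
      rw [show (0+1 : ℕ) = 1 from rfl]
      exact max_le (by rw [hs1]; linarith only [hsL, hsU]) (by norm_num)
    have mn1 : ((-83547 : ℝ)/10000000) ≤ min (σ (0+1)) 0 := by
      rw [show (0+1 : ℕ) = 1 from rfl]
      exact le_min (by rw [hs1]; linarith only [hsL, hsU]) (by norm_num)
    have mx2 : max (σ (1+1)) 0 ≤ (0 : ℝ) := by
      rw [show (1+1 : ℕ) = 2 from rfl]
      exact max_le (by rw [hs2]; linarith only [hsL, hsU]) (by norm_num)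
    have mn2 : ((-33305487 : ℝ)/10000000) ≤ min (σ (1+1)) 0 := by
      rw [show (1+1 : ℕ) = 2 from rfl]
      exact le_min (by rw [hs2]; linarith only [hsL, hsU]) (by norm_num)
    have mx3 : max (σ (2+1)) 0 ≤ ((5564839 : ℝ)/5000000) := by
      rw [show (2+1 : ℕ) = 3 from rfl]
      exact max_le (by rw [hs3]; linarith only [hsL, hsU]) (by norm_num)
    have mn3 : (0 : ℝ) ≤ min (σ (2+1)) 0 := by
      rw [show (2+1 : ℕ) = 3 from rfl]
      exact le_min (by rw [hs3]; linarith only [hsL, hsU]) (by norm_num)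
    have mx4 : max (σ (3+1)) 0 ≤ ((7391937 : ℝ)/10000000) := by
      rw [show (3+1 : ℕ) = 4 from rfl]
      exact max_le (by rw [hs4]; linarith only [hsL, hsU]) (by norm_num)
    have mn4 : (0 : ℝ) ≤ min (σ (3+1)) 0 := by
      rw [show (3+1 : ℕ) = 4 from rfl]
      exact le_min (by rw [hs4]; linarith only [hsL, hsU]) (by norm_num)
    have mx5 : max (σ (4+1)) 0 ≤ (0 : ℝ) := by
      rw [show (4+1 : ℕ) = 5 from rfl]
      exact max_le (by rw [hs5]; linarith only [hsL, hsU]) (by norm_num)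
    have mn5 : ((-6173871 : ℝ)/10000000) ≤ min (σ (4+1)) 0 := by
      rw [show (4+1 : ℕ) = 5 from rfl]
      exact le_min (by rw [hs5]; linarith only [hsL, hsU]) (by norm_num)
    have mx6 : max (σ (5+1)) 0 ≤ (0 : ℝ) := by
      rw [show (5+1 : ℕ) = 6 from rfl]
      exact max_le (by rw [hs6]; linarith only [hsL, hsU]) (by norm_num)
    have mn6 : ((-203011 : ℝ)/5000000) ≤ min (σ (5+1)) 0 := by
      rw [show (5+1 : ℕ) = 6 from rfl]
      exact le_min (by rw [hs6]; linarith only [hsL, hsU]) (by norm_num)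
    have mx7 : max (σ (6+1)) 0 ≤ ((1096649 : ℝ)/5000000) := by
      rw [show (6+1 : ℕ) = 7 from rfl]
      exact max_le (by rw [hs7]; linarith only [hsL, hsU]) (by norm_num)
    have mn7 : (0 : ℝ) ≤ min (σ (6+1)) 0 := by
      rw [show (6+1 : ℕ) = 7 from rfl]
      exact le_min (by rw [hs7]; linarith only [hsL, hsU]) (by norm_num)
    have mx8 : max (σ (7+1)) 0 ≤ (0 : ℝ) := by
      rw [show (7+1 : ℕ) = 8 from rfl]
      exact max_le (by rw [hs8]; linarith only [hsL, hsU]) (by norm_num)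
    have mn8 : ((-595759 : ℝ)/10000000) ≤ min (σ (7+1)) 0 := by
      rw [show (7+1 : ℕ) = 8 from rfl]
      exact le_min (by rw [hs8]; linarith only [hsL, hsU]) (by norm_num)
    have mx9 : max (σ (8+1)) 0 ≤ (0 : ℝ) := by
      rw [show (8+1 : ℕ) = 9 from rfl]
      exact max_le (by rw [hs9]; linarith only [hsL, hsU]) (by norm_num)
    have mn9 : ((-266257 : ℝ)/5000000) ≤ min (σ (8+1)) 0 := by
      rw [show (8+1 : ℕ) = 9 from rfl]
      exact le_min (by rw [hs9]; linarith only [hsL, hsU]) (by norm_num)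
    have mx10 : max (σ (9+1)) 0 ≤ ((376091 : ℝ)/10000000) := by
      rw [show (9+1 : ℕ) = 10 from rfl]
      exact max_le (by rw [hs10]; linarith only [hsL, hsU]) (by norm_num)
    have mn10 : (0 : ℝ) ≤ min (σ (9+1)) 0 := by
      rw [show (9+1 : ℕ) = 10 from rfl]
      exact le_min (by rw [hs10]; linarith only [hsL, hsU]) (by norm_num)
    have mx11 : max (σ (10+1)) 0 ≤ ((52141 : ℝ)/10000000) := by
      rw [show (10+1 : ℕ) = 11 from rfl]
      exact max_le (by rw [hs11]; linarith only [hsL, hsU]) (by norm_num)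
    have mn11 : (0 : ℝ) ≤ min (σ (10+1)) 0 := by
      rw [show (10+1 : ℕ) = 11 from rfl]
      exact le_min (by rw [hs11]; linarith only [hsL, hsU]) (by norm_num)
    have mx12 : max (σ (11+1)) 0 ≤ (0 : ℝ) := by
      rw [show (11+1 : ℕ) = 12 from rfl]
      exact max_le (by rw [hs12]; linarith only [hsL, hsU]) (by norm_num)
    have mn12 : ((-17843 : ℝ)/1250000) ≤ min (σ (11+1)) 0 := by
      rw [show (11+1 : ℕ) = 12 from rfl]
      exact le_min (by rw [hs12]; linarith only [hsL, hsU]) (by norm_num)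
    have mx13 : max (σ (12+1)) 0 ≤ ((30201 : ℝ)/10000000) := by
      rw [show (12+1 : ℕ) = 13 from rfl]
      exact max_le (by rw [hs13]; linarith only [hsL, hsU]) (by norm_num)
    have mn13 : (0 : ℝ) ≤ min (σ (12+1)) 0 := by
      rw [show (12+1 : ℕ) = 13 from rfl]
      exact le_min (by rw [hs13]; linarith only [hsL, hsU]) (by norm_num)
    have mx14 : max (σ (13+1)) 0 ≤ ((7503 : ℝ)/2000000) := by
      rw [show (13+1 : ℕ) = 14 from rfl]
      exact max_le (by rw [hs14]; linarith only [hsL, hsU]) (by norm_num)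
    have mn14 : (0 : ℝ) ≤ min (σ (13+1)) 0 := by
      rw [show (13+1 : ℕ) = 14 from rfl]
      exact le_min (by rw [hs14]; linarith only [hsL, hsU]) (by norm_num)
    have mx15 : max (σ (14+1)) 0 ≤ (0 : ℝ) := by
      rw [show (14+1 : ℕ) = 15 from rfl]
      exact max_le (by rw [hs15]; linarith only [hsL, hsU]) (by norm_num)
    have mn15 : ((-5643 : ℝ)/2500000) ≤ min (σ (14+1)) 0 := by
      rw [show (14+1 : ℕ) = 15 from rfl]
      exact le_min (by rw [hs15]; linarith only [hsL, hsU]) (by norm_num)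
    have h16 : |σ 16| ≤ (((5511 : ℝ)/5000000)) := abs_le.mpr ⟨by rw [hs16]; linarith only [hsL, hsU], by rw [hs16]; linarith only [hsL, hsU]⟩
    have h17 : |σ 17| ≤ 5/6 * (((5511 : ℝ)/5000000)) := abs_le.mpr ⟨by rw [hs17]; linarith only [hsL, hsU], by rw [hs17]; linarith only [hsL, hsU]⟩
    have hdecay := decay_lemma σ (-1) (((5511 : ℝ)/5000000)) (Or.inr rfl) hrec h16 h17
    have hC : (0:ℝ) ≤ (((5511 : ℝ)/5000000)) := by norm_num
    have hPsum : (∑ i ∈ Finset.range 15, max (σ (i+1)) 0) + 6*(((5511 : ℝ)/5000000)) ≤ (((21276993 : ℝ)/10000000)) := by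
      simp only [Finset.sum_range_succ, Finset.sum_range_zero]
      linarith only [mx1, mx2, mx3, mx4, mx5, mx6, mx7, mx8, mx9, mx10, mx11, mx12, mx13, mx14, mx15]
    have hNsum : -(∑ i ∈ Finset.range 15, min (σ (i+1)) 0) + 6*(((5511 : ℝ)/5000000)) ≤ (((5166081 : ℝ)/1250000)) := by
      simp only [Finset.sum_range_succ, Finset.sum_range_zero]
      linarith only [mn1, mn2, mn3, mn4, mn5, mn6, mn7, mn8, mn9, mn10, mn11, mn12, mn13, mn14, mn15]
    have hPN := tsum_bound σ b (((5511 : ℝ)/5000000)) (((21276993 : ℝ)/10000000)) (((5166081 : ℝ)/1250000)) hb hdecay hC hPsum hNsum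
    rcases hrange with hbig | hsmall
    · exact core A b hb v M hM H σ hσ hσ0 (((21276993 : ℝ)/10000000)) (((5166081 : ℝ)/1250000)) 1 b hPN (Or.inr rfl)
        (by norm_num)
        (fun d hd => by
          rcases hd with rfl | rfl | rfl
          · exact Or.inl (by norm_num)
          · exact Or.inl le_rfl
          · exact Or.inr le_rfl)
        (by linarith only [hbig])
    · exact core A b hb v M hM H σ hσ hσ0 (((21276993 : ℝ)/10000000)) (((5166081 : ℝ)/1250000)) 0 1 hPN (Or.inl rfl)
        le_rfl
        (fun d hd => by
          rcases hd with rfl | rfl | rfl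
          · exact Or.inl le_rfl
          · exact Or.inr le_rfl
          · exact Or.inr (le_of_lt hb))
        (by linarith only [hsmall, hb])
end

section
/- Let A ∈ M₂(ℤ) be an expanding matrix whose characteristic polynomial is f(x) = x² + 2x + 3 or f(x) = x² − 2x + 3, and let D = {0, 1, b}v where b ∈ ℝ, b > 1, and v ∈ ℝ² is such that {v, Av} is linearly independent. If b ≥ 37/10 or b ≤ 37/27, then the self-affine set T(A, D) is disconnected. -/
open Matrix Polynomial

noncomputable def lamC (s : ℝ) : ℂ := ⟨s, Real.sqrt 2⟩
noncomputable def etaC (s : ℝ) : ℂ := ⟨s, -Real.sqrt 2⟩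

lemma lam_mul_eta (s : ℝ) (hss : s^2 = 1) : lamC s * etaC s = 3 := by
  have h2 : Real.sqrt 2 ^ 2 = 2 := Real.sq_sqrt (by norm_num)
  apply Complex.ext
  · simp [lamC, etaC, Complex.mul_re]
    linear_combination hss
  · simp [lamC, etaC, Complex.mul_im]
    ring

lemma lam_inv (s : ℝ) (hss : s^2 = 1) : (lamC s)⁻¹ = (3:ℂ)⁻¹ * etaC s := by
  apply inv_eq_of_mul_eq_one_right
  rw [mul_comm ((3:ℂ)⁻¹), ← mul_assoc, lam_mul_eta s hss]
  norm_num

lemma lam_im (s : ℝ) (j : ℕ) (hss : s^2 = 1) :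
    ((lamC s)⁻¹ ^ j).im = ((3:ℝ)^j)⁻¹ * ((etaC s ^ j).im) := by
  rw [lam_inv s hss, mul_pow]
  have h3c : ((3:ℂ))⁻¹ ^ j = ((((3:ℝ)^j)⁻¹ : ℝ) : ℂ) := by push_cast; rw [inv_pow]
  rw [h3c, ← Complex.real_smul, Complex.smul_im, smul_eq_mul]

lemma abs_lam_inv (s : ℝ) (hss : s^2 = 1) :
    ‖(lamC s)⁻¹‖ = (Real.sqrt 3)⁻¹ := by
  rw [norm_inv]
  congr 1
  rw [Complex.norm_def, Complex.normSq_apply]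
  have hx : (lamC s).re * (lamC s).re + (lamC s).im * (lamC s).im = 3 := by
    show s*s + Real.sqrt 2 * Real.sqrt 2 = 3
    rw [Real.mul_self_sqrt (by norm_num)]
    nlinarith [hss]
  rw [hx]

lemma K_summable (s : ℝ) (hss : s^2 = 1) :
    Summable (fun j : ℕ => |((lamC s)⁻¹ ^ (j+1)).im|) := by
  have h32 : Real.sqrt 3 ^ 2 = 3 := Real.sq_sqrt (by norm_num)
  have h3 : (Real.sqrt 3)⁻¹ < 1 := by
    rw [inv_lt_one_iff₀]
    right
    nlinarith [Real.sqrt_nonneg 3]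
  have h30 : 0 ≤ (Real.sqrt 3)⁻¹ := by positivity
  have hgeo : Summable (fun j : ℕ => (Real.sqrt 3)⁻¹ * (Real.sqrt 3)⁻¹ ^ j) :=
    (summable_geometric_of_lt_one h30 h3).mul_left _
  refine Summable.of_nonneg_of_le (fun j => abs_nonneg _) (fun j => ?_) hgeo
  calc |((lamC s)⁻¹ ^ (j+1)).im| ≤ ‖(lamC s)⁻¹ ^ (j+1)‖ :=
        Complex.abs_im_le_norm _
    _ = (Real.sqrt 3)⁻¹ ^ (j+1) := by rw [norm_pow, abs_lam_inv s hss]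
    _ = (Real.sqrt 3)⁻¹ * (Real.sqrt 3)⁻¹ ^ j := by rw [pow_succ']

set_option maxHeartbeats 2000000 in
lemma K_lt (s : ℝ) (hs : s = 1 ∨ s = -1) :
    ∑' j : ℕ, |((lamC s)⁻¹ ^ (j+1)).im| < 27/37 * Real.sqrt 2 := by
  have h2 : Real.sqrt 2 ^ 2 = 2 := Real.sq_sqrt (by norm_num)
  have hr0 : (0:ℝ) < Real.sqrt 2 := Real.sqrt_pos.mpr (by norm_num)
  have h32 : Real.sqrt 3 ^ 2 = 3 := Real.sq_sqrt (by norm_num)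
  have h31 : (1.7:ℝ) < Real.sqrt 3 := by nlinarith [Real.sqrt_nonneg 3]
  have hss : s^2 = 1 := by rcases hs with h | h <;> rw [h] <;> norm_num
  have hsum := K_summable s hss
  have hsplit := Summable.sum_add_tsum_nat_add (f := fun j : ℕ => |((lamC s)⁻¹ ^ (j+1)).im|) 10 hsum
  have h3 : (Real.sqrt 3)⁻¹ < 1 := by
    rw [inv_lt_one_iff₀]; right; linarith
  have h30 : (0:ℝ) ≤ (Real.sqrt 3)⁻¹ := by positivity
  have htail : ∑' j : ℕ, |((lamC s)⁻¹ ^ (j+10+1)).im| ≤ (Real.sqrt 3)⁻¹^11 * (1 - (Real.sqrt 3)⁻¹)⁻¹ := by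
    have hgeo : Summable (fun j : ℕ => (Real.sqrt 3)⁻¹^11 * (Real.sqrt 3)⁻¹ ^ j) :=
      (summable_geometric_of_lt_one h30 h3).mul_left _
    have hle : ∀ j : ℕ, |((lamC s)⁻¹ ^ (j+10+1)).im| ≤ (Real.sqrt 3)⁻¹^11 * (Real.sqrt 3)⁻¹ ^ j := by
      intro j
      calc |((lamC s)⁻¹ ^ (j+10+1)).im| ≤ ‖(lamC s)⁻¹ ^ (j+10+1)‖ := Complex.abs_im_le_norm _
        _ = (Real.sqrt 3)⁻¹ ^ (j+10+1) := by rw [norm_pow, abs_lam_inv s hss]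
        _ = (Real.sqrt 3)⁻¹^11 * (Real.sqrt 3)⁻¹ ^ j := by rw [show j+10+1 = 11+j by ring, pow_add]
    calc ∑' j : ℕ, |((lamC s)⁻¹ ^ (j+10+1)).im| ≤ ∑' j : ℕ, (Real.sqrt 3)⁻¹^11 * (Real.sqrt 3)⁻¹ ^ j :=
          Summable.tsum_le_tsum hle ((summable_nat_add_iff 10).mpr hsum) hgeo
      _ = (Real.sqrt 3)⁻¹^11 * ∑' j : ℕ, (Real.sqrt 3)⁻¹ ^ j := tsum_mul_left
      _ = (Real.sqrt 3)⁻¹^11 * (1 - (Real.sqrt 3)⁻¹)⁻¹ := by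
          rw [tsum_geometric_of_lt_one h30 h3]
  have ha : (Real.sqrt 3)⁻¹ ≤ 10/17 := by
    rw [show ((10:ℝ)/17) = ((17:ℝ)/10)⁻¹ by norm_num]
    apply inv_anti₀ (by norm_num)
    linarith
  have htail2 : (Real.sqrt 3)⁻¹^11 * (1 - (Real.sqrt 3)⁻¹)⁻¹ ≤ ((10:ℝ)/17)^11 * (17/7) := by
    apply mul_le_mul (pow_le_pow_left₀ h30 ha 11) ?_ (inv_nonneg.mpr (by linarith)) (by positivity)
    rw [show ((17:ℝ)/7) = ((7:ℝ)/17)⁻¹ by norm_num]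
    apply inv_anti₀ (by norm_num)
    linarith
  have hc : ((10:ℝ)/17)^11 * (17/7) ≤ 3/400 := by norm_num
  have hsq2 : (1.41:ℝ) ≤ Real.sqrt 2 := by nlinarith [Real.sqrt_nonneg 2]
  rcases hs with h | h
  · subst h
    have e1 : etaC (1) ^ 1 = (⟨((1):ℝ), (-1) * Real.sqrt 2⟩ : ℂ) := by
      rw [pow_one]; apply Complex.ext <;> simp [etaC] <;> ring
    have e2 : etaC (1) ^ 2 = (⟨((-1):ℝ), (-2) * Real.sqrt 2⟩ : ℂ) := by
      rw [pow_succ, e1]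
      apply Complex.ext
      · simp [etaC, Complex.mul_re]
        first
        | linear_combination ((-1) : ℝ) * h2
        | linear_combination ((1) : ℝ) * h2
        | ring
        | linarith [h2]
      · simp [etaC, Complex.mul_im]
        ring
    have e3 : etaC (1) ^ 3 = (⟨((-5):ℝ), (-1) * Real.sqrt 2⟩ : ℂ) := by
      rw [pow_succ, e2]
      apply Complex.ext
      · simp [etaC, Complex.mul_re]
        first
        | linear_combination ((-2) : ℝ) * h2
        | linear_combination ((2) : ℝ) * h2
        | ring
        | linarith [h2]
      · simp [etaC, Complex.mul_im]
        ring
    have e4 : etaC (1) ^ 4 = (⟨((-7):ℝ), (4) * Real.sqrt 2⟩ : ℂ) := by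
      rw [pow_succ, e3]
      apply Complex.ext
      · simp [etaC, Complex.mul_re]
        first
        | linear_combination ((-1) : ℝ) * h2
        | linear_combination ((1) : ℝ) * h2
        | ring
        | linarith [h2]
      · simp [etaC, Complex.mul_im]
        ring
    have e5 : etaC (1) ^ 5 = (⟨((1):ℝ), (11) * Real.sqrt 2⟩ : ℂ) := by
      rw [pow_succ, e4]
      apply Complex.ext
      · simp [etaC, Complex.mul_re]
        first
        | linear_combination ((4) : ℝ) * h2
        | linear_combination ((-4) : ℝ) * h2
        | ring
        | linarith [h2]
      · simp [etaC, Complex.mul_im]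
        ring
    have e6 : etaC (1) ^ 6 = (⟨((23):ℝ), (10) * Real.sqrt 2⟩ : ℂ) := by
      rw [pow_succ, e5]
      apply Complex.ext
      · simp [etaC, Complex.mul_re]
        first
        | linear_combination ((11) : ℝ) * h2
        | linear_combination ((-11) : ℝ) * h2
        | ring
        | linarith [h2]
      · simp [etaC, Complex.mul_im]
        ring
    have e7 : etaC (1) ^ 7 = (⟨((43):ℝ), (-13) * Real.sqrt 2⟩ : ℂ) := by
      rw [pow_succ, e6]
      apply Complex.ext
      · simp [etaC, Complex.mul_re]
        first
        | linear_combination ((10) : ℝ) * h2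
        | linear_combination ((-10) : ℝ) * h2
        | ring
        | linarith [h2]
      · simp [etaC, Complex.mul_im]
        ring
    have e8 : etaC (1) ^ 8 = (⟨((17):ℝ), (-56) * Real.sqrt 2⟩ : ℂ) := by
      rw [pow_succ, e7]
      apply Complex.ext
      · simp [etaC, Complex.mul_re]
        first
        | linear_combination ((-13) : ℝ) * h2
        | linear_combination ((13) : ℝ) * h2
        | ring
        | linarith [h2]
      · simp [etaC, Complex.mul_im]
        ring
    have e9 : etaC (1) ^ 9 = (⟨((-95):ℝ), (-73) * Real.sqrt 2⟩ : ℂ) := by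
      rw [pow_succ, e8]
      apply Complex.ext
      · simp [etaC, Complex.mul_re]
        first
        | linear_combination ((-56) : ℝ) * h2
        | linear_combination ((56) : ℝ) * h2
        | ring
        | linarith [h2]
      · simp [etaC, Complex.mul_im]
        ring
    have e10 : etaC (1) ^ 10 = (⟨((-241):ℝ), (22) * Real.sqrt 2⟩ : ℂ) := by
      rw [pow_succ, e9]
      apply Complex.ext
      · simp [etaC, Complex.mul_re]
        first
        | linear_combination ((-73) : ℝ) * h2
        | linear_combination ((73) : ℝ) * h2
        | ring
        | linarith [h2]
      · simp [etaC, Complex.mul_im]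
        ring
    have t0 : |((lamC (1))⁻¹ ^ (0+1)).im| = (1 : ℝ)/3^1 * Real.sqrt 2 := by
      rw [lam_im (1) 1 hss, e1]
      rw [show ((⟨((1):ℝ), (-1) * Real.sqrt 2⟩ : ℂ)).im = (-1) * Real.sqrt 2 from rfl]
      rw [abs_mul, abs_mul, abs_of_nonneg hr0.le,
        abs_of_nonneg (by positivity : (0:ℝ) ≤ ((3:ℝ)^1)⁻¹)]
      norm_num
      try ring
    have t1 : |((lamC (1))⁻¹ ^ (1+1)).im| = (2 : ℝ)/3^2 * Real.sqrt 2 := by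
      rw [lam_im (1) 2 hss, e2]
      rw [show ((⟨((-1):ℝ), (-2) * Real.sqrt 2⟩ : ℂ)).im = (-2) * Real.sqrt 2 from rfl]
      rw [abs_mul, abs_mul, abs_of_nonneg hr0.le,
        abs_of_nonneg (by positivity : (0:ℝ) ≤ ((3:ℝ)^2)⁻¹)]
      norm_num
      try ring
    have t2 : |((lamC (1))⁻¹ ^ (2+1)).im| = (1 : ℝ)/3^3 * Real.sqrt 2 := by
      rw [lam_im (1) 3 hss, e3]
      rw [show ((⟨((-5):ℝ), (-1) * Real.sqrt 2⟩ : ℂ)).im = (-1) * Real.sqrt 2 from rfl]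
      rw [abs_mul, abs_mul, abs_of_nonneg hr0.le,
        abs_of_nonneg (by positivity : (0:ℝ) ≤ ((3:ℝ)^3)⁻¹)]
      norm_num
      try ring
    have t3 : |((lamC (1))⁻¹ ^ (3+1)).im| = (4 : ℝ)/3^4 * Real.sqrt 2 := by
      rw [lam_im (1) 4 hss, e4]
      rw [show ((⟨((-7):ℝ), (4) * Real.sqrt 2⟩ : ℂ)).im = (4) * Real.sqrt 2 from rfl]
      rw [abs_mul, abs_mul, abs_of_nonneg hr0.le,
        abs_of_nonneg (by positivity : (0:ℝ) ≤ ((3:ℝ)^4)⁻¹)]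
      norm_num
      try ring
    have t4 : |((lamC (1))⁻¹ ^ (4+1)).im| = (11 : ℝ)/3^5 * Real.sqrt 2 := by
      rw [lam_im (1) 5 hss, e5]
      rw [show ((⟨((1):ℝ), (11) * Real.sqrt 2⟩ : ℂ)).im = (11) * Real.sqrt 2 from rfl]
      rw [abs_mul, abs_mul, abs_of_nonneg hr0.le,
        abs_of_nonneg (by positivity : (0:ℝ) ≤ ((3:ℝ)^5)⁻¹)]
      norm_num
      try ring
    have t5 : |((lamC (1))⁻¹ ^ (5+1)).im| = (10 : ℝ)/3^6 * Real.sqrt 2 := by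
      rw [lam_im (1) 6 hss, e6]
      rw [show ((⟨((23):ℝ), (10) * Real.sqrt 2⟩ : ℂ)).im = (10) * Real.sqrt 2 from rfl]
      rw [abs_mul, abs_mul, abs_of_nonneg hr0.le,
        abs_of_nonneg (by positivity : (0:ℝ) ≤ ((3:ℝ)^6)⁻¹)]
      norm_num
      try ring
    have t6 : |((lamC (1))⁻¹ ^ (6+1)).im| = (13 : ℝ)/3^7 * Real.sqrt 2 := by
      rw [lam_im (1) 7 hss, e7]
      rw [show ((⟨((43):ℝ), (-13) * Real.sqrt 2⟩ : ℂ)).im = (-13) * Real.sqrt 2 from rfl]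
      rw [abs_mul, abs_mul, abs_of_nonneg hr0.le,
        abs_of_nonneg (by positivity : (0:ℝ) ≤ ((3:ℝ)^7)⁻¹)]
      norm_num
      try ring
    have t7 : |((lamC (1))⁻¹ ^ (7+1)).im| = (56 : ℝ)/3^8 * Real.sqrt 2 := by
      rw [lam_im (1) 8 hss, e8]
      rw [show ((⟨((17):ℝ), (-56) * Real.sqrt 2⟩ : ℂ)).im = (-56) * Real.sqrt 2 from rfl]
      rw [abs_mul, abs_mul, abs_of_nonneg hr0.le,
        abs_of_nonneg (by positivity : (0:ℝ) ≤ ((3:ℝ)^8)⁻¹)]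
      norm_num
      try ring
    have t8 : |((lamC (1))⁻¹ ^ (8+1)).im| = (73 : ℝ)/3^9 * Real.sqrt 2 := by
      rw [lam_im (1) 9 hss, e9]
      rw [show ((⟨((-95):ℝ), (-73) * Real.sqrt 2⟩ : ℂ)).im = (-73) * Real.sqrt 2 from rfl]
      rw [abs_mul, abs_mul, abs_of_nonneg hr0.le,
        abs_of_nonneg (by positivity : (0:ℝ) ≤ ((3:ℝ)^9)⁻¹)]
      norm_num
      try ring
    have t9 : |((lamC (1))⁻¹ ^ (9+1)).im| = (22 : ℝ)/3^10 * Real.sqrt 2 := by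
      rw [lam_im (1) 10 hss, e10]
      rw [show ((⟨((-241):ℝ), (22) * Real.sqrt 2⟩ : ℂ)).im = (22) * Real.sqrt 2 from rfl]
      rw [abs_mul, abs_mul, abs_of_nonneg hr0.le,
        abs_of_nonneg (by positivity : (0:ℝ) ≤ ((3:ℝ)^10)⁻¹)]
      norm_num
      try ring
    rw [← hsplit]
    rw [Finset.sum_range_succ, Finset.sum_range_succ, Finset.sum_range_succ,
      Finset.sum_range_succ, Finset.sum_range_succ, Finset.sum_range_succ,
      Finset.sum_range_succ, Finset.sum_range_succ, Finset.sum_range_succ,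
      Finset.sum_range_one, t0, t1, t2, t3, t4, t5, t6, t7, t8, t9]
    have htail' : ∑' (j : ℕ), |((lamC (1))⁻¹ ^ (j + 10 + 1)).im| ≤ 3/400 := le_trans htail (le_trans htail2 hc)
    nlinarith [htail', hsq2, hr0]
  · subst h
    have e1 : etaC (-1) ^ 1 = (⟨((-1):ℝ), (-1) * Real.sqrt 2⟩ : ℂ) := by
      rw [pow_one]; apply Complex.ext <;> simp [etaC] <;> ring
    have e2 : etaC (-1) ^ 2 = (⟨((-1):ℝ), (2) * Real.sqrt 2⟩ : ℂ) := by
      rw [pow_succ, e1]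
      apply Complex.ext
      · simp [etaC, Complex.mul_re]
        first
        | linear_combination ((-1) : ℝ) * h2
        | linear_combination ((1) : ℝ) * h2
        | ring
        | linarith [h2]
      · simp [etaC, Complex.mul_im]
        ring
    have e3 : etaC (-1) ^ 3 = (⟨((5):ℝ), (-1) * Real.sqrt 2⟩ : ℂ) := by
      rw [pow_succ, e2]
      apply Complex.ext
      · simp [etaC, Complex.mul_re]
        first
        | linear_combination ((2) : ℝ) * h2
        | linear_combination ((-2) : ℝ) * h2
        | ring
        | linarith [h2]
      · simp [etaC, Complex.mul_im]
        ring
    have e4 : etaC (-1) ^ 4 = (⟨((-7):ℝ), (-4) * Real.sqrt 2⟩ : ℂ) := by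
      rw [pow_succ, e3]
      apply Complex.ext
      · simp [etaC, Complex.mul_re]
        first
        | linear_combination ((-1) : ℝ) * h2
        | linear_combination ((1) : ℝ) * h2
        | ring
        | linarith [h2]
      · simp [etaC, Complex.mul_im]
        ring
    have e5 : etaC (-1) ^ 5 = (⟨((-1):ℝ), (11) * Real.sqrt 2⟩ : ℂ) := by
      rw [pow_succ, e4]
      apply Complex.ext
      · simp [etaC, Complex.mul_re]
        first
        | linear_combination ((-4) : ℝ) * h2
        | linear_combination ((4) : ℝ) * h2
        | ring
        | linarith [h2]
      · simp [etaC, Complex.mul_im]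
        ring
    have e6 : etaC (-1) ^ 6 = (⟨((23):ℝ), (-10) * Real.sqrt 2⟩ : ℂ) := by
      rw [pow_succ, e5]
      apply Complex.ext
      · simp [etaC, Complex.mul_re]
        first
        | linear_combination ((11) : ℝ) * h2
        | linear_combination ((-11) : ℝ) * h2
        | ring
        | linarith [h2]
      · simp [etaC, Complex.mul_im]
        ring
    have e7 : etaC (-1) ^ 7 = (⟨((-43):ℝ), (-13) * Real.sqrt 2⟩ : ℂ) := by
      rw [pow_succ, e6]
      apply Complex.ext
      · simp [etaC, Complex.mul_re]
        first
        | linear_combination ((-10) : ℝ) * h2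
        | linear_combination ((10) : ℝ) * h2
        | ring
        | linarith [h2]
      · simp [etaC, Complex.mul_im]
        ring
    have e8 : etaC (-1) ^ 8 = (⟨((17):ℝ), (56) * Real.sqrt 2⟩ : ℂ) := by
      rw [pow_succ, e7]
      apply Complex.ext
      · simp [etaC, Complex.mul_re]
        first
        | linear_combination ((-13) : ℝ) * h2
        | linear_combination ((13) : ℝ) * h2
        | ring
        | linarith [h2]
      · simp [etaC, Complex.mul_im]
        ring
    have e9 : etaC (-1) ^ 9 = (⟨((95):ℝ), (-73) * Real.sqrt 2⟩ : ℂ) := by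
      rw [pow_succ, e8]
      apply Complex.ext
      · simp [etaC, Complex.mul_re]
        first
        | linear_combination ((56) : ℝ) * h2
        | linear_combination ((-56) : ℝ) * h2
        | ring
        | linarith [h2]
      · simp [etaC, Complex.mul_im]
        ring
    have e10 : etaC (-1) ^ 10 = (⟨((-241):ℝ), (-22) * Real.sqrt 2⟩ : ℂ) := by
      rw [pow_succ, e9]
      apply Complex.ext
      · simp [etaC, Complex.mul_re]
        first
        | linear_combination ((-73) : ℝ) * h2
        | linear_combination ((73) : ℝ) * h2
        | ring
        | linarith [h2]
      · simp [etaC, Complex.mul_im]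
        ring
    have t0 : |((lamC (-1))⁻¹ ^ (0+1)).im| = (1 : ℝ)/3^1 * Real.sqrt 2 := by
      rw [lam_im (-1) 1 hss, e1]
      rw [show ((⟨((-1):ℝ), (-1) * Real.sqrt 2⟩ : ℂ)).im = (-1) * Real.sqrt 2 from rfl]
      rw [abs_mul, abs_mul, abs_of_nonneg hr0.le,
        abs_of_nonneg (by positivity : (0:ℝ) ≤ ((3:ℝ)^1)⁻¹)]
      norm_num
      try ring
    have t1 : |((lamC (-1))⁻¹ ^ (1+1)).im| = (2 : ℝ)/3^2 * Real.sqrt 2 := by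
      rw [lam_im (-1) 2 hss, e2]
      rw [show ((⟨((-1):ℝ), (2) * Real.sqrt 2⟩ : ℂ)).im = (2) * Real.sqrt 2 from rfl]
      rw [abs_mul, abs_mul, abs_of_nonneg hr0.le,
        abs_of_nonneg (by positivity : (0:ℝ) ≤ ((3:ℝ)^2)⁻¹)]
      norm_num
      try ring
    have t2 : |((lamC (-1))⁻¹ ^ (2+1)).im| = (1 : ℝ)/3^3 * Real.sqrt 2 := by
      rw [lam_im (-1) 3 hss, e3]
      rw [show ((⟨((5):ℝ), (-1) * Real.sqrt 2⟩ : ℂ)).im = (-1) * Real.sqrt 2 from rfl]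
      rw [abs_mul, abs_mul, abs_of_nonneg hr0.le,
        abs_of_nonneg (by positivity : (0:ℝ) ≤ ((3:ℝ)^3)⁻¹)]
      norm_num
      try ring
    have t3 : |((lamC (-1))⁻¹ ^ (3+1)).im| = (4 : ℝ)/3^4 * Real.sqrt 2 := by
      rw [lam_im (-1) 4 hss, e4]
      rw [show ((⟨((-7):ℝ), (-4) * Real.sqrt 2⟩ : ℂ)).im = (-4) * Real.sqrt 2 from rfl]
      rw [abs_mul, abs_mul, abs_of_nonneg hr0.le,
        abs_of_nonneg (by positivity : (0:ℝ) ≤ ((3:ℝ)^4)⁻¹)]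
      norm_num
      try ring
    have t4 : |((lamC (-1))⁻¹ ^ (4+1)).im| = (11 : ℝ)/3^5 * Real.sqrt 2 := by
      rw [lam_im (-1) 5 hss, e5]
      rw [show ((⟨((-1):ℝ), (11) * Real.sqrt 2⟩ : ℂ)).im = (11) * Real.sqrt 2 from rfl]
      rw [abs_mul, abs_mul, abs_of_nonneg hr0.le,
        abs_of_nonneg (by positivity : (0:ℝ) ≤ ((3:ℝ)^5)⁻¹)]
      norm_num
      try ring
    have t5 : |((lamC (-1))⁻¹ ^ (5+1)).im| = (10 : ℝ)/3^6 * Real.sqrt 2 := by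
      rw [lam_im (-1) 6 hss, e6]
      rw [show ((⟨((23):ℝ), (-10) * Real.sqrt 2⟩ : ℂ)).im = (-10) * Real.sqrt 2 from rfl]
      rw [abs_mul, abs_mul, abs_of_nonneg hr0.le,
        abs_of_nonneg (by positivity : (0:ℝ) ≤ ((3:ℝ)^6)⁻¹)]
      norm_num
      try ring
    have t6 : |((lamC (-1))⁻¹ ^ (6+1)).im| = (13 : ℝ)/3^7 * Real.sqrt 2 := by
      rw [lam_im (-1) 7 hss, e7]
      rw [show ((⟨((-43):ℝ), (-13) * Real.sqrt 2⟩ : ℂ)).im = (-13) * Real.sqrt 2 from rfl]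
      rw [abs_mul, abs_mul, abs_of_nonneg hr0.le,
        abs_of_nonneg (by positivity : (0:ℝ) ≤ ((3:ℝ)^7)⁻¹)]
      norm_num
      try ring
    have t7 : |((lamC (-1))⁻¹ ^ (7+1)).im| = (56 : ℝ)/3^8 * Real.sqrt 2 := by
      rw [lam_im (-1) 8 hss, e8]
      rw [show ((⟨((17):ℝ), (56) * Real.sqrt 2⟩ : ℂ)).im = (56) * Real.sqrt 2 from rfl]
      rw [abs_mul, abs_mul, abs_of_nonneg hr0.le,
        abs_of_nonneg (by positivity : (0:ℝ) ≤ ((3:ℝ)^8)⁻¹)]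
      norm_num
      try ring
    have t8 : |((lamC (-1))⁻¹ ^ (8+1)).im| = (73 : ℝ)/3^9 * Real.sqrt 2 := by
      rw [lam_im (-1) 9 hss, e9]
      rw [show ((⟨((95):ℝ), (-73) * Real.sqrt 2⟩ : ℂ)).im = (-73) * Real.sqrt 2 from rfl]
      rw [abs_mul, abs_mul, abs_of_nonneg hr0.le,
        abs_of_nonneg (by positivity : (0:ℝ) ≤ ((3:ℝ)^9)⁻¹)]
      norm_num
      try ring
    have t9 : |((lamC (-1))⁻¹ ^ (9+1)).im| = (22 : ℝ)/3^10 * Real.sqrt 2 := by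
      rw [lam_im (-1) 10 hss, e10]
      rw [show ((⟨((-241):ℝ), (-22) * Real.sqrt 2⟩ : ℂ)).im = (-22) * Real.sqrt 2 from rfl]
      rw [abs_mul, abs_mul, abs_of_nonneg hr0.le,
        abs_of_nonneg (by positivity : (0:ℝ) ≤ ((3:ℝ)^10)⁻¹)]
      norm_num
      try ring
    rw [← hsplit]
    rw [Finset.sum_range_succ, Finset.sum_range_succ, Finset.sum_range_succ,
      Finset.sum_range_succ, Finset.sum_range_succ, Finset.sum_range_succ,
      Finset.sum_range_succ, Finset.sum_range_succ, Finset.sum_range_succ,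
      Finset.sum_range_one, t0, t1, t2, t3, t4, t5, t6, t7, t8, t9]
    have htail' : ∑' (j : ℕ), |((lamC (-1))⁻¹ ^ (j + 10 + 1)).im| ≤ 3/400 := le_trans htail (le_trans htail2 hc)
    nlinarith [htail', hsq2, hr0]

lemma sep_lemma (s : ℝ) (hs : s = 1 ∨ s = -1) (b : ℝ) (hb : 1 < b) (g : ℝ)
    (c c' : ℕ → ℝ)
    (hc : ∀ i, c i = 0 ∨ c i = 1 ∨ c i = b) (hc' : ∀ i, c' i = 0 ∨ c' i = 1 ∨ c' i = b)
    (hg0 : g ≤ |c 0 - c' 0|) (z w : ℂ)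
    (hz : HasSum (fun i => (lamC s)⁻¹ ^ (i+1) * (c i : ℂ)) z)
    (hw : HasSum (fun i => (lamC s)⁻¹ ^ (i+1) * (c' i : ℂ)) w) :
    (Real.sqrt 2 * g - b * ∑' j : ℕ, |((lamC s)⁻¹ ^ (j+1)).im|) / 3 ≤ dist z w := by
  have hss : s^2 = 1 := by rcases hs with h | h <;> rw [h] <;> norm_num
  have h2 : Real.sqrt 2 ^ 2 = 2 := Real.sq_sqrt (by norm_num)
  have hr0 : (0:ℝ) < Real.sqrt 2 := Real.sqrt_pos.mpr (by norm_num)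
  have h32 : Real.sqrt 3 ^ 2 = 3 := Real.sq_sqrt (by norm_num)
  have h3pos : (0:ℝ) < Real.sqrt 3 := Real.sqrt_pos.mpr (by norm_num)
  have hlne : lamC s ≠ 0 := by
    intro h
    have : (lamC s).im = 0 := by rw [h]; rfl
    rw [show (lamC s).im = Real.sqrt 2 from rfl] at this
    linarith
  have hlmu : lamC s * (lamC s)⁻¹ = 1 := mul_inv_cancel₀ hlne
  set μ := (lamC s)⁻¹ with hμ
  set e : ℕ → ℝ := fun i => c i - c' i with he
  have heb : ∀ i, |e i| ≤ b := by
    intro i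
    have h1 : 0 ≤ c i ∧ c i ≤ b := by rcases hc i with h|h|h <;> rw [h] <;> constructor <;> linarith
    have h2 : 0 ≤ c' i ∧ c' i ≤ b := by rcases hc' i with h|h|h <;> rw [h] <;> constructor <;> linarith
    rw [abs_le]
    constructor <;> simp only [he] <;> linarith [h1.1, h1.2, h2.1, h2.2]
  have hsub : HasSum (fun i => μ ^ (i+1) * ((e i : ℝ) : ℂ)) (z - w) := by
    have := hz.sub hw
    have hfun : (fun i => μ ^ (i+1) * ((e i : ℝ) : ℂ))
        = fun i => μ ^ (i+1) * ((c i : ℝ) : ℂ) - μ ^ (i+1) * ((c' i : ℝ) : ℂ) := by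
      funext i
      simp only [he]
      push_cast
      ring
    rw [hfun]
    exact this
  set S : ℂ := (lamC s)^2 * (z - w) with hS
  set F : ℕ → ℂ := fun i => (lamC s)^2 * (μ ^ (i+1) * ((e i : ℝ) : ℂ)) with hF
  have hFsum : HasSum F S := hsub.mul_left _
  have hFsum2 : HasSum (fun n => F (n + 2)) (S - ∑ i ∈ Finset.range 2, F i) := by
    rw [hasSum_nat_add_iff 2, sub_add_cancel]
    exact hFsum
  have hFeq : (fun n => F (n + 2)) = fun n => μ ^ (n+1) * ((e (n+2) : ℝ) : ℂ) := by
    funext n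
    show (lamC s)^2 * (μ ^ (n+3) * _) = _
    have hp : (lamC s)^2 * μ ^ (n+3) = μ ^ (n+1) := by
      have : μ ^ (n+3) = μ^2 * μ^(n+1) := by ring
      rw [this, ← mul_assoc]
      have : (lamC s)^2 * μ^2 = (lamC s * μ)^2 := by ring
      rw [this, hlmu, one_pow, one_mul]
    rw [← mul_assoc, hp]
  rw [hFeq] at hFsum2
  set R : ℂ := S - ∑ i ∈ Finset.range 2, F i with hR
  -- bound |R.im|
  have hRim : HasSum (fun n => (μ ^ (n+1) * ((e (n+2) : ℝ) : ℂ)).im) R.im := by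
    have := Complex.imCLM.hasSum hFsum2
    exact this
  have hterm : ∀ n : ℕ, |(μ ^ (n+1) * ((e (n+2) : ℝ) : ℂ)).im| ≤ |(μ ^ (n+1)).im| * b := by
    intro n
    have : (μ ^ (n+1) * ((e (n+2) : ℝ) : ℂ)).im = (μ ^ (n+1)).im * e (n+2) := by
      rw [mul_comm, ← Complex.real_smul, Complex.smul_im, smul_eq_mul]
      ring
    rw [this, abs_mul]
    exact mul_le_mul_of_nonneg_left (heb (n+2)) (abs_nonneg _)
  have hsumm_major : Summable (fun n : ℕ => |(μ ^ (n+1)).im| * b) := (K_summable s hss).mul_right b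
  have hsumm_terms : Summable (fun n : ℕ => |(μ ^ (n+1) * ((e (n+2) : ℝ) : ℂ)).im|) :=
    Summable.of_nonneg_of_le (fun n => abs_nonneg _) hterm hsumm_major
  have hRimb : |R.im| ≤ b * ∑' j : ℕ, |(μ ^ (j+1)).im| := by
    calc |R.im| = ‖∑' n, (μ ^ (n+1) * ((e (n+2) : ℝ) : ℂ)).im‖ := by
          rw [hRim.tsum_eq]; rfl
      _ ≤ ∑' n, ‖(μ ^ (n+1) * ((e (n+2) : ℝ) : ℂ)).im‖ := by
          refine norm_tsum_le_tsum_norm ?_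
          simpa only [Real.norm_eq_abs] using hsumm_terms
      _ = ∑' n, |(μ ^ (n+1) * ((e (n+2) : ℝ) : ℂ)).im| := by simp only [Real.norm_eq_abs]
      _ ≤ ∑' n, |(μ ^ (n+1)).im| * b := Summable.tsum_le_tsum hterm hsumm_terms hsumm_major
      _ = (∑' n, |(μ ^ (n+1)).im|) * b := tsum_mul_right
      _ = b * ∑' j : ℕ, |(μ ^ (j+1)).im| := by ring
  -- identify F 0 and F 1
  have hF0 : F 0 = lamC s * ((e 0 : ℝ) : ℂ) := by
    show (lamC s)^2 * (μ ^ 1 * _) = _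
    rw [pow_one, ← mul_assoc]
    have : (lamC s)^2 * μ = lamC s * (lamC s * μ) := by ring
    rw [this, hlmu, mul_one]
  have hF1 : F 1 = ((e 1 : ℝ) : ℂ) := by
    show (lamC s)^2 * (μ ^ 2 * _) = _
    rw [← mul_assoc]
    have : (lamC s)^2 * μ^2 = (lamC s * μ)^2 := by ring
    rw [this, hlmu, one_pow, one_mul]
  have hSim : S.im = Real.sqrt 2 * e 0 + R.im := by
    have : S = F 0 + F 1 + R := by
      rw [hR, Finset.sum_range_succ, Finset.sum_range_one]
      ring
    rw [this, Complex.add_im, Complex.add_im, hF0, hF1]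
    have h1 : (lamC s * ((e 0 : ℝ) : ℂ)).im = Real.sqrt 2 * e 0 := by
      rw [mul_comm, ← Complex.real_smul, Complex.smul_im, smul_eq_mul]
      rw [show (lamC s).im = Real.sqrt 2 from rfl]
      ring
    rw [h1, Complex.ofReal_im]
    ring
  -- |S| = 3 * dist z w
  have habsS : ‖S‖ = 3 * dist z w := by
    rw [hS, norm_mul, norm_pow, Complex.dist_eq]
    congr 1
    rw [show ‖lamC s‖ = Real.sqrt 3 from ?_, h32]
    · rw [Complex.norm_def, Complex.normSq_apply]
      have hx : (lamC s).re * (lamC s).re + (lamC s).im * (lamC s).im = 3 := by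
        show s*s + Real.sqrt 2 * Real.sqrt 2 = 3
        rw [Real.mul_self_sqrt (by norm_num)]
        nlinarith [hss]
      rw [hx]
  have hims : |S.im| ≤ ‖S‖ := Complex.abs_im_le_norm S
  have hge : Real.sqrt 2 * g - b * ∑' j : ℕ, |(μ ^ (j+1)).im| ≤ |S.im| := by
    have h1 : Real.sqrt 2 * g ≤ Real.sqrt 2 * |e 0| :=
      mul_le_mul_of_nonneg_left hg0 hr0.le
    have h2 : |Real.sqrt 2 * e 0| = Real.sqrt 2 * |e 0| := by
      rw [abs_mul, abs_of_nonneg hr0.le]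
    have h3 : |Real.sqrt 2 * e 0| - |R.im| ≤ |S.im| := by
      rw [hSim]
      have := abs_add_le (Real.sqrt 2 * e 0 + R.im) (-R.im)
      simp only [add_neg_cancel_right, abs_neg] at this
      linarith
    linarith
  rw [div_le_iff₀ (by norm_num : (0:ℝ) < 3)]
  calc Real.sqrt 2 * g - b * ∑' j : ℕ, |(μ ^ (j+1)).im| ≤ |S.im| := hge
    _ ≤ ‖S‖ := hims
    _ = 3 * dist z w := habsS
    _ = dist z w * 3 := by ring

set_option maxHeartbeats 2000000 in
/-- For an expanding `A ∈ M₂(ℤ)` with characteristic polynomial `x² ± 2x + 3`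
and digit set `{0, 1, b}v`, `b > 1`: if `b ≥ 37/10` or `b ≤ 37/27` then `T(A,D)` is disconnected. -/
theorem disconnected_case_8 (A : Matrix (Fin 2) (Fin 2) ℤ) (hA : IsExpanding A)
    (hchar : A.charpoly = X ^ 2 + C 2 * X + C 3 ∨ A.charpoly = X ^ 2 - C 2 * X + C 3)
    (b : ℝ) (hb : 1 < b) (v : Fin 2 → ℝ)
    (hv : LinearIndependent ℝ ![v, (matR A).mulVec v])
    (hrange : b ≥ 37 / 10 ∨ b ≤ 37 / 27) :
    ¬ IsConnected (selfAffine A {0, v, b • v}) := by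
  intro hconn
  -- extract the sign `s` and the Cayley–Hamilton relation
  obtain ⟨s, hs, hM2⟩ : ∃ s : ℝ, (s = 1 ∨ s = -1) ∧
      matR A * matR A = (2*s) • matR A - (3:ℝ) • 1 := by
    have hCH := Matrix.aeval_self_charpoly A
    have h2m : (2 : Matrix (Fin 2) (Fin 2) ℝ) = (2:ℝ) • 1 := by rw [two_smul, one_add_one_eq_two]
    have h3m : (3 : Matrix (Fin 2) (Fin 2) ℝ) = (3:ℝ) • 1 := by
      rw [show (3:ℝ) = 2+1 by norm_num, add_smul, two_smul, one_smul,
        show (3 : Matrix (Fin 2) (Fin 2) ℝ) = 1+1+1 by norm_num]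
    rcases hchar with hc | hc
    · refine ⟨-1, Or.inr rfl, ?_⟩
      rw [hc] at hCH
      simp only [map_add, _root_.map_mul, map_pow, aeval_X, aeval_C] at hCH
      have hφ := congrArg ((Int.castRingHom ℝ).mapMatrix) hCH
      simp only [map_add, _root_.map_mul, map_pow, map_ofNat, map_zero] at hφ
      have hA' : (Int.castRingHom ℝ).mapMatrix A = matR A := by
        rw [RingHom.mapMatrix_apply]; rfl
      rw [hA', h2m, h3m, smul_mul_assoc, one_mul, pow_two] at hφ
      apply eq_of_sub_eq_zero
      rw [show matR A * matR A - ((2*(-1:ℝ)) • matR A - (3:ℝ) • 1)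
          = matR A * matR A + (2:ℝ) • matR A + (3:ℝ) • 1 from by module]
      exact hφ
    · refine ⟨1, Or.inl rfl, ?_⟩
      rw [hc] at hCH
      simp only [map_add, map_sub, _root_.map_mul, map_pow, aeval_X, aeval_C] at hCH
      have hφ := congrArg ((Int.castRingHom ℝ).mapMatrix) hCH
      simp only [map_add, map_sub, _root_.map_mul, map_pow, map_ofNat, map_zero] at hφ
      have hA' : (Int.castRingHom ℝ).mapMatrix A = matR A := by
        rw [RingHom.mapMatrix_apply]; rfl
      rw [hA', h2m, h3m, smul_mul_assoc, one_mul, pow_two] at hφ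
      apply eq_of_sub_eq_zero
      rw [show matR A * matR A - ((2*(1:ℝ)) • matR A - (3:ℝ) • 1)
          = matR A * matR A - (2:ℝ) • matR A + (3:ℝ) • 1 from by module]
      exact hφ
  set M : Matrix (Fin 2) (Fin 2) ℝ := matR A with hMdef
  -- basic scalar facts
  have hss : s^2 = 1 := by rcases hs with h | h <;> rw [h] <;> norm_num
  have h2 : Real.sqrt 2 ^ 2 = 2 := Real.sq_sqrt (by norm_num)
  have hr0 : (0:ℝ) < Real.sqrt 2 := Real.sqrt_pos.mpr (by norm_num)
  have hlne : lamC s ≠ 0 := by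
    intro h
    have : (lamC s).im = 0 := by rw [h]; rfl
    rw [show (lamC s).im = Real.sqrt 2 from rfl] at this
    linarith
  have hlmu : lamC s * (lamC s)⁻¹ = 1 := mul_inv_cancel₀ hlne
  have hlam2 : lamC s ^ 2 = 2*s*lamC s - 3 := by
    apply Complex.ext
    · simp [lamC, pow_two, Complex.mul_re]
      first
      | linear_combination -hss
      | linear_combination hss
      | linear_combination -hss - h2
      | linear_combination -hss + h2
      | linear_combination hss - h2
      | linear_combination hss + h2
      | linear_combination (2:ℝ)*hss + h2
      | linear_combination (2:ℝ)*hss - h2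
      | linear_combination -(2:ℝ)*hss + h2
      | linear_combination -(2:ℝ)*hss - h2
    · simp [lamC, pow_two, Complex.mul_im]
      ring
  -- basis from v, Mv
  have hcard : Fintype.card (Fin 2) = Module.finrank ℝ (Fin 2 → ℝ) := by simp
  set B : Module.Basis (Fin 2) ℝ (Fin 2 → ℝ) := basisOfLinearIndependentOfCardEqFinrank hv hcard
    with hBdef
  have hB : ⇑B = ![v, M.mulVec v] := coe_basisOfLinearIndependentOfCardEqFinrank hv hcard
  have hB0 : B 0 = v := by rw [hB]; rfl
  have hB1 : B 1 = M.mulVec v := by rw [hB]; rfl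
  set L : (Fin 2 → ℝ) →ₗ[ℝ] ℂ := B.constr ℝ ![1, lamC s] with hLdef
  have hLv : L v = 1 := by
    rw [← hB0, hLdef, Module.Basis.constr_basis]; rfl
  have hLMv : L (M.mulVec v) = lamC s := by
    rw [← hB1, hLdef, Module.Basis.constr_basis]; rfl
  have hLM : ∀ x, L (M.mulVec x) = lamC s * L x := by
    have heq : L ∘ₗ M.mulVecLin = (LinearMap.mulLeft ℝ (lamC s)) ∘ₗ L := by
      apply Module.Basis.ext B
      intro i
      fin_cases i
      · simp only [LinearMap.comp_apply, Matrix.mulVecLin_apply, LinearMap.mulLeft_apply]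
        rw [show B ⟨0, by norm_num⟩ = v from hB0, hLMv, hLv, mul_one]
      · simp only [LinearMap.comp_apply, Matrix.mulVecLin_apply, LinearMap.mulLeft_apply]
        rw [show B ⟨1, by norm_num⟩ = M.mulVec v from hB1, Matrix.mulVec_mulVec, hM2,
          Matrix.sub_mulVec, Matrix.smul_mulVec, Matrix.smul_mulVec,
          Matrix.one_mulVec, map_sub, _root_.map_smul, _root_.map_smul, hLMv, hLv,
          Complex.real_smul, Complex.real_smul]
        push_cast
        first
        | linear_combination -hlam2
        | linear_combination hlam2
    intro x
    have := LinearMap.congr_fun heq x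
    simpa using this
  -- inverse matrix
  set N : Matrix (Fin 2) (Fin 2) ℝ := (3:ℝ)⁻¹ • ((2*s) • (1 : Matrix (Fin 2) (Fin 2) ℝ) - M)
    with hNdef
  have hMN : M * N = 1 := by
    rw [hNdef, Matrix.mul_smul, Matrix.mul_sub, Matrix.mul_smul, mul_one, hM2]
    rw [show (2*s) • M - ((2*s) • M - (3:ℝ) • 1) = (3:ℝ) • (1 : Matrix (Fin 2) (Fin 2) ℝ) from by module]
    rw [smul_smul]
    norm_num
  have hNM : N * M = 1 := by
    rw [hNdef, Matrix.smul_mul, Matrix.sub_mul, Matrix.smul_mul, one_mul, hM2]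
    rw [show (2*s) • M - ((2*s) • M - (3:ℝ) • 1) = (3:ℝ) • (1 : Matrix (Fin 2) (Fin 2) ℝ) from by module]
    rw [smul_smul]
    norm_num
  have hMinv : M⁻¹ = N := Matrix.inv_eq_right_inv hMN
  have hMM1 : M * M⁻¹ = 1 := by rw [hMinv]; exact hMN
  have hM1M : M⁻¹ * M = 1 := by rw [hMinv]; exact hNM
  have hLMinv : ∀ x, L (M⁻¹.mulVec x) = (lamC s)⁻¹ * L x := by
    intro x
    have h1 : M.mulVec (M⁻¹.mulVec x) = x := by
      rw [Matrix.mulVec_mulVec, hMM1, Matrix.one_mulVec]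
    have h2' := hLM (M⁻¹.mulVec x)
    rw [h1] at h2'
    rw [h2', ← mul_assoc, inv_mul_cancel₀ hlne, one_mul]
  have hLpow : ∀ (k : ℕ) x, L ((M⁻¹ ^ k).mulVec x) = (lamC s)⁻¹ ^ k * L x := by
    intro k
    induction k with
    | zero => intro x; simp [Matrix.one_mulVec]
    | succ n ih =>
      intro x
      rw [pow_succ', ← Matrix.mulVec_mulVec, hLMinv, ih, pow_succ']
      ring
  -- the reverse map L'
  set L' : ℂ →ₗ[ℝ] (Fin 2 → ℝ) :=
    Complex.basisOneI.constr ℝ ![v, (Real.sqrt 2)⁻¹ • (M.mulVec v - s • v)] with hL'def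
  have hBI0 : (Complex.basisOneI : Module.Basis (Fin 2) ℝ ℂ) 0 = 1 := by
    rw [Complex.coe_basisOneI]; rfl
  have hBI1 : (Complex.basisOneI : Module.Basis (Fin 2) ℝ ℂ) 1 = Complex.I := by
    rw [Complex.coe_basisOneI]; rfl
  have hL'1 : L' 1 = v := by
    rw [← hBI0, hL'def, Module.Basis.constr_basis]; rfl
  have hL'I : L' Complex.I = (Real.sqrt 2)⁻¹ • (M.mulVec v - s • v) := by
    rw [← hBI1, hL'def, Module.Basis.constr_basis]; rfl
  have hlamdec : lamC s = (s:ℂ) + (Real.sqrt 2 : ℝ) * Complex.I := by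
    apply Complex.ext <;> simp [lamC]
  have hL'lam : L' (lamC s) = M.mulVec v := by
    rw [hlamdec, show ((s:ℂ) + ((Real.sqrt 2 : ℝ) : ℂ) * Complex.I)
        = s • (1:ℂ) + (Real.sqrt 2) • Complex.I from by
      rw [Complex.real_smul, Complex.real_smul, mul_one]]
    rw [map_add, _root_.map_smul, _root_.map_smul, hL'1, hL'I, smul_smul,
      mul_inv_cancel₀ (ne_of_gt hr0), one_smul]
    module
  have hL'conj : ∀ z, L' (lamC s * z) = M.mulVec (L' z) := by
    have heq : L' ∘ₗ (LinearMap.mulLeft ℝ (lamC s)) = M.mulVecLin ∘ₗ L' := by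
      apply Module.Basis.ext Complex.basisOneI
      intro i
      fin_cases i
      · simp only [LinearMap.comp_apply, LinearMap.mulLeft_apply, Matrix.mulVecLin_apply]
        rw [show (Complex.basisOneI : Module.Basis (Fin 2) ℝ ℂ) ⟨0, by norm_num⟩ = 1 from hBI0,
          mul_one, hL'1, hL'lam]
      · simp only [LinearMap.comp_apply, LinearMap.mulLeft_apply, Matrix.mulVecLin_apply]
        rw [show (Complex.basisOneI : Module.Basis (Fin 2) ℝ ℂ) ⟨1, by norm_num⟩ = Complex.I from hBI1]
        rw [show lamC s * Complex.I = (-(Real.sqrt 2) : ℝ) • (1:ℂ) + s • Complex.I from by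
          apply Complex.ext <;>
            simp [lamC, Complex.real_smul, Complex.mul_re, Complex.mul_im]]
        rw [map_add, _root_.map_smul, _root_.map_smul, hL'1, hL'I]
        rw [Matrix.mulVec_smul, Matrix.mulVec_sub, Matrix.mulVec_mulVec, hM2,
          Matrix.sub_mulVec, Matrix.smul_mulVec, Matrix.smul_mulVec,
          Matrix.one_mulVec, Matrix.mulVec_smul]
        have hs2ne : Real.sqrt 2 ≠ 0 := ne_of_gt hr0
        have hinv : (Real.sqrt 2)⁻¹ = Real.sqrt 2/2 := by
          rw [inv_eq_iff_eq_inv, inv_div, eq_div_iff (by positivity : Real.sqrt 2 ≠ 0)]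
          linear_combination h2
        match_scalars
        all_goals try rw [hinv]
        all_goals try ring
        all_goals try linear_combination (Real.sqrt 2/2)*hss
        all_goals try linear_combination -(Real.sqrt 2/2)*hss
        all_goals try linear_combination (Real.sqrt 2)*hss
    intro z
    have := LinearMap.congr_fun heq z
    simpa using this
  have hL'inv : ∀ z, L' ((lamC s)⁻¹ * z) = M⁻¹.mulVec (L' z) := by
    intro z
    have h1 := hL'conj ((lamC s)⁻¹ * z)
    rw [← mul_assoc, hlmu, one_mul] at h1
    rw [h1, Matrix.mulVec_mulVec, hM1M, Matrix.one_mulVec]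
  have hL'pow : ∀ (k : ℕ) z, L' ((lamC s)⁻¹ ^ k * z) = (M⁻¹ ^ k).mulVec (L' z) := by
    intro k
    induction k with
    | zero => intro z; simp [Matrix.one_mulVec]
    | succ n ih =>
      intro z
      rw [pow_succ', mul_assoc, hL'inv, ih, pow_succ', ← Matrix.mulVec_mulVec]
  have hLL' : ∀ z, L (L' z) = z := by
    have heq : L ∘ₗ L' = LinearMap.id := by
      apply Module.Basis.ext Complex.basisOneI
      intro i
      fin_cases i
      · simp only [LinearMap.comp_apply, LinearMap.id_apply]
        rw [show (Complex.basisOneI : Module.Basis (Fin 2) ℝ ℂ) ⟨0, by norm_num⟩ = 1 from hBI0,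
          hL'1, hLv]
      · simp only [LinearMap.comp_apply, LinearMap.id_apply]
        rw [show (Complex.basisOneI : Module.Basis (Fin 2) ℝ ℂ) ⟨1, by norm_num⟩ = Complex.I from hBI1,
          hL'I, _root_.map_smul, map_sub, hLMv, _root_.map_smul, hLv, hlamdec]
        apply Complex.ext
        · simp
        · simp [Complex.smul_im]
          try field_simp
    intro z
    have := LinearMap.congr_fun heq z
    simpa using this
  -- continuity
  have hLcont : Continuous L := L.continuous_of_finiteDimensional
  have hL'cont : Continuous L' := L'.continuous_of_finiteDimensional
  -- gap data
  obtain ⟨g, pred, hg27, hpred0, hpredb, hsep⟩ :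
      ∃ (g : ℝ) (pred : ℝ → Prop), 27/37 * b ≤ g ∧ pred 0 ∧ ¬ pred b ∧
        ∀ x y, (x = 0 ∨ x = 1 ∨ x = b) → (y = 0 ∨ y = 1 ∨ y = b) →
          pred x → ¬ pred y → g ≤ |x - y| := by
    rcases hrange with hr | hr
    · refine ⟨b - 1, fun x => x ≠ b, by linarith, by intro h; linarith, by simp, ?_⟩
      rintro x y hx hy hpx hpy
      have hyb : y = b := not_not.mp hpy
      subst hyb
      rcases hx with rfl | rfl | rfl
      · rw [zero_sub, abs_neg, abs_of_pos (by linarith)]; linarith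
      · rw [abs_of_nonpos (by linarith)]; linarith
      · exact absurd rfl hpx
    · refine ⟨1, fun x => x = 0, by linarith, rfl, by intro h; linarith, ?_⟩
      rintro x y hx hy hpx hpy
      subst hpx
      rcases hy with rfl | rfl | rfl
      · exact absurd rfl hpy
      · norm_num
      · rw [zero_sub, abs_neg, abs_of_pos (by linarith)]; linarith
  set K : ℝ := ∑' j : ℕ, |((lamC s)⁻¹ ^ (j+1)).im| with hKdef
  have hKlt : K < 27/37 * Real.sqrt 2 := K_lt s hs
  have hb0 : (0:ℝ) < b := by linarith
  set ε : ℝ := (Real.sqrt 2 * g - b * K) / 3 with hεdef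
  have hε : 0 < ε := by
    rw [hεdef]
    have h1 : Real.sqrt 2 * (27/37 * b) ≤ Real.sqrt 2 * g :=
      mul_le_mul_of_nonneg_left hg27 hr0.le
    have h2' : b * K < b * (27/37 * Real.sqrt 2) := by
      exact mul_lt_mul_of_pos_left hKlt hb0
    have : b * (27/37 * Real.sqrt 2) = Real.sqrt 2 * (27/37 * b) := by ring
    linarith
  -- the two pieces
  set T : Set (Fin 2 → ℝ) := selfAffine A {0, v, b • v} with hTdef
  set SP : Set ℂ := {z | ∃ c : ℕ → ℝ, (∀ i, c i = 0 ∨ c i = 1 ∨ c i = b) ∧ pred (c 0) ∧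
    HasSum (fun i => (lamC s)⁻¹ ^ (i+1) * ((c i : ℝ) : ℂ)) z} with hSPdef
  set SQ : Set ℂ := {z | ∃ c : ℕ → ℝ, (∀ i, c i = 0 ∨ c i = 1 ∨ c i = b) ∧ ¬ pred (c 0) ∧
    HasSum (fun i => (lamC s)⁻¹ ^ (i+1) * ((c i : ℝ) : ℂ)) z} with hSQdef
  -- image of T under L
  have himgsub : L '' T ⊆ SP ∪ SQ := by
    rintro z ⟨x, ⟨d, hd, hsum⟩, rfl⟩
    have hdig : ∀ i, ∃ r : ℝ, (r = 0 ∨ r = 1 ∨ r = b) ∧ d i = r • v := by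
      intro i
      rcases hd i with h | h | h
      · exact ⟨0, Or.inl rfl, by rw [h, zero_smul]⟩
      · exact ⟨1, Or.inr (Or.inl rfl), by rw [h, one_smul]⟩
      · exact ⟨b, Or.inr (Or.inr rfl), h⟩
    choose c hc hdc using hdig
    have hmap := hsum.mapL (LinearMap.toContinuousLinearMap L)
    have hterm : ∀ i, L ((M⁻¹ ^ (i+1)).mulVec (d i)) = (lamC s)⁻¹ ^ (i+1) * ((c i : ℝ) : ℂ) := by
      intro i
      rw [hdc i, Matrix.mulVec_smul, _root_.map_smul, hLpow, hLv, mul_one, Complex.real_smul]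
      ring
    have hsum2 : HasSum (fun i => (lamC s)⁻¹ ^ (i+1) * ((c i : ℝ) : ℂ)) (L x) := by
      have hfun : (fun i => (lamC s)⁻¹ ^ (i+1) * ((c i : ℝ) : ℂ))
          = fun i => (LinearMap.toContinuousLinearMap L) ((M⁻¹ ^ (i+1)).mulVec (d i)) := by
        funext i
        rw [show ((LinearMap.toContinuousLinearMap L) ((M⁻¹ ^ (i+1)).mulVec (d i)) : ℂ)
            = L ((M⁻¹ ^ (i+1)).mulVec (d i)) from rfl]
        exact (hterm i).symm
      rw [hfun]
      exact hmap
    by_cases hp : pred (c 0)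
    · exact Or.inl ⟨c, hc, hp, hsum2⟩
    · exact Or.inr ⟨c, hc, hp, hsum2⟩
  -- separation of the pieces
  have hsepPQ : ∀ z ∈ SP, ∀ w ∈ SQ, ε ≤ dist z w := by
    rintro z ⟨c, hc, hp, hz⟩ w ⟨c', hc', hp', hw⟩
    have hgap : g ≤ |c 0 - c' 0| := hsep (c 0) (c' 0) (hc 0) (hc' 0) hp hp'
    have := sep_lemma s hs b hb g c c' hc hc' hgap z w hz hw
    rw [hεdef]
    exact this
  -- open cover
  set U : Set ℂ := ⋃ z ∈ SP, Metric.ball z (ε/2) with hUdef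
  set V : Set ℂ := ⋃ z ∈ SQ, Metric.ball z (ε/2) with hVdef
  have hUopen : IsOpen U := isOpen_biUnion (fun _ _ => Metric.isOpen_ball)
  have hVopen : IsOpen V := isOpen_biUnion (fun _ _ => Metric.isOpen_ball)
  have hSPU : SP ⊆ U := fun z hz => Set.mem_biUnion hz (Metric.mem_ball_self (by linarith))
  have hSQV : SQ ⊆ V := fun z hz => Set.mem_biUnion hz (Metric.mem_ball_self (by linarith))
  have hcover : L '' T ⊆ U ∪ V := by
    intro z hz
    rcases himgsub hz with h | h
    · exact Or.inl (hSPU h)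
    · exact Or.inr (hSQV h)
  -- disjointness
  have hdisj : ∀ y, y ∈ U → y ∈ V → False := by
    intro y hyU hyV
    obtain ⟨z, hzSP, hyz⟩ : ∃ z ∈ SP, y ∈ Metric.ball z (ε/2) := by
      simpa [hUdef] using hyU
    obtain ⟨w, hwSQ, hyw⟩ : ∃ w ∈ SQ, y ∈ Metric.ball w (ε/2) := by
      simpa [hVdef] using hyV
    have h1 := hsepPQ z hzSP w hwSQ
    rw [Metric.mem_ball] at hyz hyw
    have : dist z w < ε := by
      calc dist z w ≤ dist z y + dist y w := dist_triangle z y w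
        _ = dist y z + dist y w := by rw [dist_comm]
        _ < ε/2 + ε/2 := by linarith
        _ = ε := by ring
    linarith
  -- nonempty intersections : the point 0 (digits ≡ 0)
  have hzeroT : (0 : Fin 2 → ℝ) ∈ T := by
    refine ⟨fun _ => 0, fun i => Or.inl rfl, ?_⟩
    simpa [Matrix.mulVec_zero] using hasSum_zero
  have hzeroSP : (0 : ℂ) ∈ SP := by
    refine ⟨fun _ => 0, fun i => Or.inl rfl, hpred0, ?_⟩
    simpa using hasSum_zero
  have hUne : (L '' T ∩ U).Nonempty := by
    refine ⟨L 0, ⟨0, hzeroT, rfl⟩, ?_⟩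
    rw [map_zero]
    exact hSPU hzeroSP
  -- nonempty : the point with digits ≡ b
  have hmune : ‖(lamC s)⁻¹‖ < 1 := by
    rw [abs_lam_inv s hss]
    rw [inv_lt_one_iff₀]
    right
    nlinarith [Real.sq_sqrt (by norm_num : (3:ℝ) ≥ 0), Real.sqrt_nonneg 3]
  have hsummb : Summable (fun i : ℕ => (lamC s)⁻¹ ^ (i+1) * ((b : ℝ) : ℂ)) := by
    have hgeo : Summable (fun i : ℕ => (lamC s)⁻¹ ^ i) := by
      apply summable_geometric_of_norm_lt_one
      exact hmune
    have := (hgeo.mul_left ((lamC s)⁻¹ * ((b : ℝ) : ℂ)))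
    apply this.congr
    intro i
    rw [pow_succ']
    ring
  set ζ : ℂ := ∑' i : ℕ, (lamC s)⁻¹ ^ (i+1) * ((b : ℝ) : ℂ) with hζdef
  have hζsum : HasSum (fun i : ℕ => (lamC s)⁻¹ ^ (i+1) * ((b : ℝ) : ℂ)) ζ := hsummb.hasSum
  have hζSQ : ζ ∈ SQ := ⟨fun _ => b, fun i => Or.inr (Or.inr rfl), hpredb, hζsum⟩
  have hbT : L' ζ ∈ T := by
    refine ⟨fun _ => b • v, fun i => Or.inr (Or.inr rfl), ?_⟩
    have hmap := hζsum.mapL (LinearMap.toContinuousLinearMap L')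
    have hterm : ∀ i : ℕ, L' ((lamC s)⁻¹ ^ (i+1) * ((b : ℝ) : ℂ))
        = (M⁻¹ ^ (i+1)).mulVec (b • v) := by
      intro i
      rw [hL'pow, show ((b:ℝ) : ℂ) = (b:ℝ) • (1:ℂ) from by rw [Complex.real_smul, mul_one],
        _root_.map_smul, hL'1, Matrix.mulVec_smul]
    have hfun : (fun i : ℕ => (M⁻¹ ^ (i+1)).mulVec (b • v))
        = fun i => (LinearMap.toContinuousLinearMap L') ((lamC s)⁻¹ ^ (i+1) * ((b : ℝ) : ℂ)) := by
      funext i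
      rw [show ((LinearMap.toContinuousLinearMap L') ((lamC s)⁻¹ ^ (i+1) * ((b : ℝ) : ℂ)) : Fin 2 → ℝ)
          = L' ((lamC s)⁻¹ ^ (i+1) * ((b : ℝ) : ℂ)) from rfl]
      exact (hterm i).symm
    rw [hfun]
    exact hmap
  have hVne : (L '' T ∩ V).Nonempty := by
    refine ⟨L (L' ζ), ⟨L' ζ, hbT, rfl⟩, ?_⟩
    rw [hLL']
    exact hSQV hζSQ
  -- contradiction with connectedness
  have himg : IsConnected (L '' T) := hconn.image L hLcont.continuousOn
  obtain ⟨y, _, hyUV⟩ := himg.isPreconnected U V hUopen hVopen hcover hUne hVne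
  exact hdisj y hyUV.1 hyUV.2
end

section
/- Let A ∈ M₂(ℤ) be an expanding matrix whose characteristic polynomial is f(x) = x² + 3x + 3 or f(x) = x² − 3x + 3, and let D = {0, 1, b}v where b ∈ ℝ, b > 1, and v ∈ ℝ² is such that {v, Av} is linearly independent. If b ≥ 33/10 or b ≤ 33/23, then the self-affine set T(A, D) is disconnected. -/
set_option maxHeartbeats 1000000


open Matrix Polynomial

/- ## Auxiliary sequence machinery -/

noncomputable def pseq (σ : ℝ) : ℕ → ℝ
  | 0 => 1
  | 1 => -σ
  | (n+2) => -σ * pseq σ (n+1) - pseq σ n / 3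

lemma pseq_step (σ : ℝ) (n : ℕ) : pseq σ (n+2) = -σ * pseq σ (n+1) - pseq σ n / 3 := rfl

lemma pseq_period (σ : ℝ) (hσ : σ = 1 ∨ σ = -1) :
    ∀ n, pseq σ (n+6) = -pseq σ n / 27 := by
  have key : ∀ n, pseq σ (n+6) = -pseq σ n / 27 ∧ pseq σ (n+7) = -pseq σ (n+1) / 27 := by
    intro n
    induction n with
    | zero =>
      rcases hσ with h | h <;> subst h <;> constructor <;> norm_num [pseq]
    | succ k ih =>
      refine ⟨ih.2, ?_⟩
      have h1 : k + 1 + 7 = (k + 6) + 2 := by ring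
      rw [h1, pseq_step, ih.1, ih.2, pseq_step]
      ring
  exact fun n => (key n).1

lemma pseq_period12 (σ : ℝ) (hσ : σ = 1 ∨ σ = -1) (n : ℕ) :
    pseq σ (n+12) = pseq σ n / 729 := by
  have h2 : n + 12 = (n + 6) + 6 := by ring
  rw [h2, pseq_period σ hσ, pseq_period σ hσ]
  ring

noncomputable def rseq (σ : ℝ) (n : ℕ) : ℝ := pseq σ (n+1) + (2*σ/3) * pseq σ n

noncomputable def gseq (σ : ℝ) : ℕ → ℝ
  | 0 => 1
  | (n+1) => rseq σ n

lemma rseq_period (σ : ℝ) (hσ : σ = 1 ∨ σ = -1) (n : ℕ) :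
    rseq σ (n+12) = rseq σ n / 729 := by
  have h1 : n + 12 + 1 = (n + 1) + 12 := by ring
  rw [rseq, h1, pseq_period12 σ hσ, pseq_period12 σ hσ, rseq]
  ring

lemma rseq_abs_period (σ : ℝ) (hσ : σ = 1 ∨ σ = -1) (n : ℕ) :
    |rseq σ (n+12)| = |rseq σ n| / 729 := by
  rw [rseq_period σ hσ, abs_div]
  norm_num

lemma selfsim_summable (f : ℕ → ℝ) (h : ∀ i, f (i+12) = f i / 729) : Summable f := by
  set C₀ : ℝ := ∑ i ∈ Finset.range 12, |f i| with hC₀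
  have hC₀nn : 0 ≤ C₀ := Finset.sum_nonneg fun i _ => abs_nonneg _
  have hbound : ∀ i, |f i| ≤ (C₀ * (4/3)^11) * (3/4)^i := by
    intro i
    induction i using Nat.strong_induction_on with
    | _ i ih =>
      by_cases h12 : i < 12
      · have h1 : |f i| ≤ C₀ := by
          rw [hC₀]
          exact Finset.single_le_sum (fun j _ => abs_nonneg (f j)) (Finset.mem_range.mpr h12)
        have h2 : ((3:ℝ)/4)^11 ≤ (3/4)^i := by
          apply pow_le_pow_of_le_one (by norm_num) (by norm_num)
          omega
        nlinarith [pow_pos (show (0:ℝ) < 3/4 by norm_num) i, pow_pos (show (0:ℝ) < 3/4 by norm_num) 11,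
          pow_pos (show (0:ℝ) < 4/3 by norm_num) 11,
          mul_pow ((3:ℝ)/4) (4/3) 11]
      · obtain ⟨j, rfl⟩ : ∃ j, i = j + 12 := ⟨i - 12, by omega⟩
        have hj := ih j (by omega)
        rw [h j, abs_div]
        have h729 : |(729:ℝ)| = 729 := by norm_num
        rw [h729]
        have hpow : ((3:ℝ)/4)^(j+12) = (3/4)^j * (3/4)^12 := by rw [pow_add]
        rw [hpow]
        have : ((1:ℝ)/729) ≤ (3/4)^12 := by norm_num
        have hc : 0 ≤ (C₀ * (4/3)^11) := by positivity
        have hp : (0:ℝ) ≤ (3/4)^j := by positivity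
        nlinarith
  apply Summable.of_norm_bounded
    (((summable_geometric_of_lt_one (r := (3:ℝ)/4) (by norm_num) (by norm_num))).mul_left
      (C₀ * (4/3)^11))
  exact hbound

lemma selfsim_hasSum (f : ℕ → ℝ) (h : ∀ i, f (i+12) = f i / 729) :
    HasSum f ((∑ i ∈ Finset.range 12, f i) * (729/728)) := by
  have hs := selfsim_summable f h
  have heq := (Summable.sum_add_tsum_nat_add 12 hs)
  have h2 : ∑' i, f (i + 12) = (∑' i, f i) / 729 := by
    simp_rw [h]
    exact tsum_div_const
  rw [h2] at heq
  have : ∑' i, f i = (∑ i ∈ Finset.range 12, f i) * (729/728) := by linarith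
  exact this ▸ hs.hasSum

lemma rseq_abs_sum (σ : ℝ) (hσ : σ = 1 ∨ σ = -1) :
    ∑ i ∈ Finset.range 12, |rseq σ i| = 56/81 := by
  rcases hσ with h | h <;> subst h <;>
    simp [Finset.sum_range_succ, rseq, pseq] <;>
    norm_num [abs_of_nonneg, abs_of_nonpos]

/- ## Main auxiliary theorem -/

theorem aux_disconnected (M : Matrix (Fin 2) (Fin 2) ℝ) (σ : ℝ) (hσ : σ = 1 ∨ σ = -1)
    (hM : M * M = (-(3*σ)) • M - (3:ℝ) • 1)
    (b : ℝ) (hb : 1 < b) (v : Fin 2 → ℝ)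
    (hv : LinearIndependent ℝ ![v, M.mulVec v])
    (θ : ℝ) (h0 : 9*b/26 < θ) (hbθ : θ < b - 9*b/26)
    (h1 : θ < 1 - 9*b/26 ∨ 1 + 9*b/26 < θ) :
    ¬ IsConnected {x | ∃ d : ℕ → (Fin 2 → ℝ),
        (∀ i, d i ∈ ({0, v, b • v} : Set (Fin 2 → ℝ))) ∧
        HasSum (fun i => (M⁻¹ ^ (i + 1)).mulVec (d i)) x} := by
  set N : Matrix (Fin 2) (Fin 2) ℝ := (-σ) • (1 : Matrix (Fin 2) (Fin 2) ℝ) - (3:ℝ)⁻¹ • M with hNdef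
  have hMN : M * N = 1 := by
    rw [hNdef]
    simp only [mul_sub, mul_smul_comm, mul_one, hM]
    match_scalars <;> ring
  have hNM : N * M = 1 := by
    rw [hNdef]
    simp only [sub_mul, smul_mul_assoc, one_mul, hM]
    match_scalars <;> ring
  have hNinv : M⁻¹ = N := Matrix.inv_eq_left_inv hNM
  have hpow : ∀ n : ℕ, N ^ (n+1) = pseq σ (n+1) • 1 + (-(pseq σ n / 3)) • M := by
    intro n
    induction n with
    | zero =>
      rw [pow_one, hNdef]
      match_scalars <;> simp [pseq]
    | succ k ih =>
      rw [pow_succ, ih, hNdef]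
      simp only [add_mul, smul_mul_assoc, mul_sub, mul_smul_comm, smul_sub, mul_one, one_mul,
        smul_smul, sub_mul, hM]
      rw [pseq_step]
      match_scalars <;> ring
  have hMNpow : ∀ n : ℕ, M * N ^ (n+1) = N ^ n := by
    intro n
    rw [pow_succ', ← mul_assoc, hMN, one_mul]
  -- the basis
  have hcard : Fintype.card (Fin 2) = Module.finrank ℝ (Fin 2 → ℝ) := by simp
  set B := basisOfLinearIndependentOfCardEqFinrank hv hcard with hBdef
  have hB0 : B 0 = v := by
    rw [hBdef, coe_basisOfLinearIndependentOfCardEqFinrank]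
    rfl
  have hB1 : B 1 = M.mulVec v := by
    rw [hBdef, coe_basisOfLinearIndependentOfCardEqFinrank]
    rfl
  have e00 : B.coord 0 v = 1 := by rw [← hB0]; simp
  have e01 : B.coord 0 (M.mulVec v) = 0 := by rw [← hB1]; simp
  have e10 : B.coord 1 v = 0 := by rw [← hB0]; simp
  have e11 : B.coord 1 (M.mulVec v) = 1 := by rw [← hB1]; simp
  set φ : (Fin 2 → ℝ) →ₗ[ℝ] ℝ := (B.coord 0 - (2*σ) • B.coord 1) ∘ₗ M.mulVecLin with hφdef
  have φcont : Continuous φ := φ.continuous_of_finiteDimensional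
  -- value of φ on the summands
  have hφterm : ∀ (i : ℕ) (c : ℝ), φ (c • (N ^ (i+1)).mulVec v) = c * gseq σ i := by
    intro i c
    have hbase : M.mulVec ((N ^ (i+1)).mulVec v) = (N ^ i).mulVec v := by
      rw [Matrix.mulVec_mulVec, hMNpow]
    rw [_root_.map_smul, smul_eq_mul]
    congr 1
    rw [hφdef]
    simp only [LinearMap.comp_apply, Matrix.mulVecLin_apply, hbase]
    cases i with
    | zero =>
      simp only [pow_zero, Matrix.one_mulVec, LinearMap.sub_apply, LinearMap.smul_apply,
        e00, e10, smul_eq_mul, gseq]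
      ring
    | succ j =>
      rw [hpow j]
      simp only [Matrix.add_mulVec, Matrix.smul_mulVec, Matrix.one_mulVec,
        LinearMap.sub_apply, LinearMap.smul_apply, _root_.map_add, _root_.map_smul,
        e00, e01, e10, e11, smul_eq_mul, gseq, rseq]
      ring
  set ρ : ℝ := (∑ i ∈ Finset.range 12, rseq σ i) * (729/728) with hρdef
  obtain ⟨f, hfdef⟩ : ∃ f : (Fin 2 → ℝ) → ℝ, f = fun x => φ x - (b/2) * ρ := ⟨_, rfl⟩
  have fcont : Continuous f := by
    rw [hfdef]
    exact φcont.sub continuous_const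
  -- the key bound
  have key : ∀ (c : ℕ → ℝ) (x : Fin 2 → ℝ), (∀ i, c i = 0 ∨ c i = 1 ∨ c i = b) →
      HasSum (fun i => c i • (N ^ (i+1)).mulVec v) x →
      |f x - c 0| ≤ 9*b/26 := by
    intro c x hc hx
    have h2 : HasSum (fun i => c i * gseq σ i) (φ x) := by
      have := hx.map φ.toAddMonoidHom φcont
      simpa [Function.comp_def, hφterm, -Matrix.mulVec_fin_two] using this
    have e : φ x = (φ x - c 0) + ∑ i ∈ Finset.range 1, c i * gseq σ i := by
      simp [gseq]
    have h3 : HasSum (fun n => c (n+1) * gseq σ (n+1)) (φ x - c 0) :=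
      (hasSum_nat_add_iff (f := fun i => c i * gseq σ i) 1).mpr (e ▸ h2)
    have h3' : HasSum (fun n => c (n+1) * rseq σ n) (φ x - c 0) := h3
    have h4 : HasSum (fun i => (b/2) * rseq σ i) ((b/2) * ρ) :=
      (selfsim_hasSum _ (rseq_period σ hσ)).mul_left _
    have h5 : HasSum (fun i => (c (i+1) - b/2) * rseq σ i) (φ x - c 0 - (b/2) * ρ) := by
      have := h3'.sub h4
      convert this using 2 with i
      · rfl
      · ring
    have habs : HasSum (fun i => (b/2) * |rseq σ i|) ((b/2) * (9/13)) := by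
      have h6 := (selfsim_hasSum (fun i => |rseq σ i|) (rseq_abs_period σ hσ)).mul_left (b/2)
      rwa [rseq_abs_sum σ hσ, show ((56:ℝ)/81) * (729/728) = 9/13 by norm_num] at h6
    have hptle : ∀ i, (c (i+1) - b/2) * rseq σ i ≤ (b/2) * |rseq σ i| := by
      intro i
      have hcb : |c (i+1) - b/2| ≤ b/2 := by
        rcases hc (i+1) with h | h | h <;> rw [h] <;> rw [abs_le] <;> constructor <;> linarith
      calc (c (i+1) - b/2) * rseq σ i ≤ |(c (i+1) - b/2) * rseq σ i| := le_abs_self _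
        _ = |c (i+1) - b/2| * |rseq σ i| := abs_mul _ _
        _ ≤ (b/2) * |rseq σ i| := by
            apply mul_le_mul_of_nonneg_right hcb (abs_nonneg _)
    have hptge : ∀ i, -((b/2) * |rseq σ i|) ≤ (c (i+1) - b/2) * rseq σ i := by
      intro i
      have hcb : |c (i+1) - b/2| ≤ b/2 := by
        rcases hc (i+1) with h | h | h <;> rw [h] <;> rw [abs_le] <;> constructor <;> linarith
      have : -((c (i+1) - b/2) * rseq σ i) ≤ (b/2) * |rseq σ i| := by
        calc -((c (i+1) - b/2) * rseq σ i) ≤ |(c (i+1) - b/2) * rseq σ i| := neg_le_abs _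
          _ = |c (i+1) - b/2| * |rseq σ i| := abs_mul _ _
          _ ≤ (b/2) * |rseq σ i| := mul_le_mul_of_nonneg_right hcb (abs_nonneg _)
      linarith
    have hub : φ x - c 0 - (b/2) * ρ ≤ (b/2) * (9/13) := hasSum_le hptle h5 habs
    have hlb : -((b/2) * (9/13)) ≤ φ x - c 0 - (b/2) * ρ := by
      have := hasSum_le hptge habs.neg h5
      linarith [hasSum_le hptge habs.neg h5]
    have heq : f x - c 0 = φ x - c 0 - (b/2) * ρ := by simp only [hfdef]; ring
    rw [heq, abs_le]
    constructor <;> nlinarith [hb]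
  -- summability of the basic series
  have hsum_pow : Summable (fun i => (N ^ (i+1)).mulVec v) := by
    have hp : Summable (pseq σ) := selfsim_summable _ (pseq_period12 σ hσ)
    have hp1 : Summable (fun i => pseq σ (i+1)) := by
      rw [← summable_nat_add_iff 1] at hp
      exact hp
    have hS1 : Summable (fun i => pseq σ (i+1) • v) := hp1.smul_const v
    have hS2 : Summable (fun i => (-(pseq σ i / 3)) • M.mulVec v) :=
      ((hp.div_const 3).neg).smul_const _
    have := hS1.add hS2
    apply this.congr
    intro i
    rw [hpow i]
    simp [Matrix.add_mulVec, Matrix.smul_mulVec, Matrix.neg_mulVec, neg_smul]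
  -- the separation
  rintro ⟨hne, hpc⟩
  set U : Set (Fin 2 → ℝ) := f ⁻¹' (Set.Iio θ) with hUdef
  set V : Set (Fin 2 → ℝ) := f ⁻¹' (Set.Ioi θ) with hVdef
  set T : Set (Fin 2 → ℝ) := {x | ∃ d : ℕ → (Fin 2 → ℝ),
        (∀ i, d i ∈ ({0, v, b • v} : Set (Fin 2 → ℝ))) ∧
        HasSum (fun i => (M⁻¹ ^ (i + 1)).mulVec (d i)) x} with hTdef
  have hmem_bound : ∀ x ∈ T, ∃ c₀ : ℝ, (c₀ = 0 ∨ c₀ = 1 ∨ c₀ = b) ∧ |f x - c₀| ≤ 9*b/26 := by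
    rintro x ⟨d, hd, hsum⟩
    set c : ℕ → ℝ := fun i => if d i = 0 then 0 else if d i = v then 1 else b with hcdef
    have hcmem : ∀ i, c i = 0 ∨ c i = 1 ∨ c i = b := by
      intro i
      simp only [hcdef]
      split_ifs <;> simp
    have hdc : ∀ i, d i = c i • v := by
      intro i
      simp only [hcdef]
      split_ifs with h0' h1'
      · rw [h0', zero_smul]
      · rw [h1', one_smul]
      · rcases hd i with h | h | h
        · exact absurd h h0'
        · exact absurd h h1'
        · rw [h]
    have hsum' : HasSum (fun i => c i • (N ^ (i+1)).mulVec v) x := by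
      rw [hNinv] at hsum
      have heq : (fun i => (N ^ (i+1)).mulVec (d i))
          = fun i => c i • (N ^ (i+1)).mulVec v := by
        funext i
        rw [hdc i, Matrix.mulVec_smul]
      rw [heq] at hsum
      exact hsum
    exact ⟨c 0, hcmem 0, key c x hcmem hsum'⟩
  have hUopen : IsOpen U := isOpen_Iio.preimage fcont
  have hVopen : IsOpen V := isOpen_Ioi.preimage fcont
  have hcover : T ⊆ U ∪ V := by
    intro x hx
    obtain ⟨c₀, hc₀, hbnd⟩ := hmem_bound x hx
    rw [abs_le] at hbnd
    rcases hc₀ with h | h | h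
    · left
      rw [hUdef]
      simp only [Set.mem_preimage, Set.mem_Iio]
      subst h; linarith [hbnd.2]
    · rcases h1 with hθ | hθ
      · right
        rw [hVdef]
        simp only [Set.mem_preimage, Set.mem_Ioi]
        subst h; linarith [hbnd.1]
      · left
        rw [hUdef]
        simp only [Set.mem_preimage, Set.mem_Iio]
        subst h; linarith [hbnd.2]
    · right
      rw [hVdef]
      simp only [Set.mem_preimage, Set.mem_Ioi]
      subst h; linarith [hbnd.1]
  -- the zero point is in T ∩ U
  have h0T : (0 : Fin 2 → ℝ) ∈ T := by
    refine ⟨fun _ => 0, fun i => Set.mem_insert _ _, ?_⟩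
    simp only [Matrix.mulVec_zero]
    exact hasSum_zero
  have h0U : (0 : Fin 2 → ℝ) ∈ U := by
    have hz : HasSum (fun i => (0:ℝ) • (N ^ (i+1)).mulVec v) (0 : Fin 2 → ℝ) := by
      simp only [zero_smul]
      exact hasSum_zero
    have := key (fun _ => 0) 0 (fun _ => Or.inl rfl) hz
    rw [abs_le] at this
    rw [hUdef]
    simp only [Set.mem_preimage, Set.mem_Iio]
    have h2 := this.2
    simp only [sub_zero] at h2
    linarith
  -- the point with all digits b • v is in T ∩ V
  have hsumb : Summable (fun i => b • (N ^ (i+1)).mulVec v) := hsum_pow.const_smul b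
  set xb : Fin 2 → ℝ := ∑' i, b • (N ^ (i+1)).mulVec v with hxb
  have hxbsum : HasSum (fun i => b • (N ^ (i+1)).mulVec v) xb := hsumb.hasSum
  have hbT : xb ∈ T := by
    refine ⟨fun _ => b • v, fun i => by simp [Set.mem_insert_iff], ?_⟩
    rw [hNinv]
    have heq : (fun i => (N ^ (i+1)).mulVec (b • v))
        = fun i => b • (N ^ (i+1)).mulVec v := by
      funext i
      rw [Matrix.mulVec_smul]
    rw [heq]
    exact hxbsum
  have hbV : xb ∈ V := by
    have := key (fun _ => b) xb (fun _ => Or.inr (Or.inr rfl)) hxbsum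
    rw [abs_le] at this
    rw [hVdef]
    simp only [Set.mem_preimage, Set.mem_Ioi]
    linarith [this.1]
  have hdisj : (T ∩ (U ∩ V)).Nonempty := hpc U V hUopen hVopen hcover ⟨0, h0T, h0U⟩ ⟨xb, hbT, hbV⟩
  obtain ⟨x, _, hxU, hxV⟩ := hdisj
  rw [hUdef] at hxU
  rw [hVdef] at hxV
  simp only [Set.mem_preimage, Set.mem_Iio] at hxU
  simp only [Set.mem_preimage, Set.mem_Ioi] at hxV
  linarith

/-- For an expanding `A ∈ M₂(ℤ)` with characteristic polynomial `x² ± 3x + 3`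
and digit set `{0, 1, b}v`, `b > 1`: if `b ≥ 33/10` or `b ≤ 33/23` then `T(A,D)` is disconnected. -/
theorem disconnected_case_9 (A : Matrix (Fin 2) (Fin 2) ℤ) (hA : IsExpanding A)
    (hchar : A.charpoly = X ^ 2 + C 3 * X + C 3 ∨ A.charpoly = X ^ 2 - C 3 * X + C 3)
    (b : ℝ) (hb : 1 < b) (v : Fin 2 → ℝ)
    (hv : LinearIndependent ℝ ![v, (matR A).mulVec v])
    (hrange : b ≥ 33 / 10 ∨ b ≤ 33 / 23) :
    ¬ IsConnected (selfAffine A {0, v, b • v}) := by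
  have hCH := A.aeval_self_charpoly
  set M : Matrix (Fin 2) (Fin 2) ℝ := matR A with hMdef
  have e3 : (3 : Matrix (Fin 2) (Fin 2) ℝ) = (3:ℝ) • 1 := by
    rw [← Algebra.algebraMap_eq_smul_one]
    exact (map_ofNat (algebraMap ℝ (Matrix (Fin 2) (Fin 2) ℝ)) 3).symm
  have hmap : ∀ (s : ℝ) (h : M * M + s • M + (3:ℝ) • 1 = 0),
      M * M = (-(3*(s/3))) • M - (3:ℝ) • 1 := by
    intro s h
    have : M * M = -(s • M) - (3:ℝ) • 1 := by
      calc M * M = M * M + s • M + (3:ℝ) • 1 - (s • M + (3:ℝ) • 1) := by abel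
        _ = 0 - (s • M + (3:ℝ) • 1) := by rw [h]
        _ = -(s • M) - (3:ℝ) • 1 := by abel
    rw [this]
    match_scalars <;> ring
  obtain ⟨σ, hσ, hM⟩ : ∃ σ : ℝ, (σ = 1 ∨ σ = -1) ∧ M * M = (-(3*σ)) • M - (3:ℝ) • 1 := by
    rcases hchar with h | h <;> rw [h] at hCH
    · refine ⟨1, Or.inl rfl, ?_⟩
      have hZ : A * A + 3 * A + 3 = 0 := by
        simpa [sq, map_ofNat] using hCH
      have hR := congrArg (RingHom.mapMatrix (Int.castRingHom ℝ)) hZ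
      simp only [_root_.map_add, _root_.map_mul, _root_.map_ofNat, _root_.map_zero] at hR
      have hAmap : (RingHom.mapMatrix (Int.castRingHom ℝ)) A = M := rfl
      rw [hAmap] at hR
      have h' : M * M + (3:ℝ) • M + (3:ℝ) • 1 = 0 := by
        rw [e3] at hR
        calc M * M + (3:ℝ) • M + (3:ℝ) • 1
            = M * M + ((3:ℝ) • (1 : Matrix (Fin 2) (Fin 2) ℝ)) * M + (3:ℝ) • 1 := by
              rw [smul_mul_assoc, one_mul]
          _ = 0 := hR
      have h2 := hmap 3 h'
      have e1 : (3:ℝ)/3 = 1 := by norm_num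
      rw [e1] at h2
      exact h2
    · refine ⟨-1, Or.inr rfl, ?_⟩
      have hZ : A * A - 3 * A + 3 = 0 := by
        simpa [sq, map_ofNat] using hCH
      have hR := congrArg (RingHom.mapMatrix (Int.castRingHom ℝ)) hZ
      simp only [_root_.map_add, _root_.map_sub, _root_.map_mul, _root_.map_ofNat, _root_.map_zero] at hR
      have hAmap : (RingHom.mapMatrix (Int.castRingHom ℝ)) A = M := rfl
      rw [hAmap] at hR
      have h' : M * M + (-3:ℝ) • M + (3:ℝ) • 1 = 0 := by
        rw [e3] at hR
        calc M * M + (-3:ℝ) • M + (3:ℝ) • 1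
            = M * M - ((3:ℝ) • (1 : Matrix (Fin 2) (Fin 2) ℝ)) * M + (3:ℝ) • 1 := by
              rw [smul_mul_assoc, one_mul]
              match_scalars <;> ring
          _ = 0 := hR
      have h2 := hmap (-3) h'
      have e1 : (-3:ℝ)/3 = -1 := by norm_num
      rw [e1] at h2
      exact h2
  unfold selfAffine
  rcases hrange with hr | hr
  · exact aux_disconnected M σ hσ hM b hb v hv ((1+b)/2)
      (by nlinarith) (by nlinarith) (Or.inr (by nlinarith))
  · exact aux_disconnected M σ hσ hM b hb v hv (1/2)
      (by nlinarith) (by nlinarith) (Or.inl (by nlinarith))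
end

section
/- Let A ∈ Mₙ(ℤ) be an expanding matrix with |det A| = q and let D = {d₁, …, d_q} ⊂ ℝⁿ be a digit set of cardinality q. Define the edge relation E on D by (dᵢ, dⱼ) ∈ E if and only if (T + dᵢ) ∩ (T + dⱼ) ≠ ∅, where T = T(A, D). Then T is connected if and only if any two digits dᵢ, dⱼ ∈ D are E-connected, i.e., there exists a finite sequence d_{j₁}, …, d_{j_k} in D with d_{j₁} = dᵢ, d_{j_k} = dⱼ and (d_{j_l}, d_{j_{l+1}}) ∈ E for 1 ≤ l ≤ k−1. -/
open Matrix Polynomial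

open Filter Topology
open scoped NNReal ENNReal

lemma eval_charpoly' {n : ℕ} (M : Matrix (Fin n) (Fin n) ℂ) (z : ℂ) :
    M.charpoly.eval z = (z • (1 : Matrix (Fin n) (Fin n) ℂ) - M).det := by
  rw [Matrix.charpoly, ← coe_evalRingHom, RingHom.map_det]
  congr 1
  ext i j
  by_cases h : i = j
  · subst h
    simp [charmatrix_apply_eq, Matrix.smul_apply, Matrix.one_apply]
  · simp [charmatrix_apply_ne _ _ _ h, Matrix.smul_apply, Matrix.one_apply, h,
      Matrix.sub_apply]

lemma mem_spectrum_iff_root' {n : ℕ} (M : Matrix (Fin n) (Fin n) ℂ) (z : ℂ) :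
    z ∈ spectrum ℂ M ↔ M.charpoly.eval z = 0 := by
  rw [spectrum.mem_iff, Matrix.isUnit_iff_isUnit_det, isUnit_iff_ne_zero, not_not,
    eval_charpoly']
  congr! 2
  rw [Algebra.algebraMap_eq_smul_one]

def NormBound {n : ℕ} (A : Matrix (Fin n) (Fin n) ℤ) (C r : ℝ) : Prop :=
  ∀ (k : ℕ) (v : Fin n → ℝ), ‖((matR A)⁻¹ ^ k).mulVec v‖ ≤ C * r ^ k * ‖v‖

section normbound
attribute [local instance] Matrix.linftyOpNormedAddCommGroup Matrix.linftyOpNormedRing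
  Matrix.linftyOpNormedAlgebra Matrix.linftyOpNormedSpace

variable {n : ℕ}

local instance : CompleteSpace (Matrix (Fin n) (Fin n) ℂ) :=
  by infer_instance

lemma nnnorm_map_ofReal (M : Matrix (Fin n) (Fin n) ℝ) :
    ‖M.map (algebraMap ℝ ℂ)‖₊ = ‖M‖₊ := by
  rw [Matrix.linfty_opNNNorm_def, Matrix.linfty_opNNNorm_def]
  congr 1; ext i
  congr 1; ext j
  simp [Matrix.map_apply]

lemma spec_iff (A : Matrix (Fin n) (Fin n) ℤ) (z : ℂ) :
    z ∈ spectrum ℂ ((matR A).map (algebraMap ℝ ℂ)) ↔ (aeval z) A.charpoly = 0 := by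
  rw [mem_spectrum_iff_root']
  have h1 : (matR A).map (algebraMap ℝ ℂ) = A.map (Int.castRingHom ℂ) := by
    ext i j; simp [matR, Matrix.map_apply]
  rw [h1, Matrix.charpoly_map, aeval_def, ← eval_map]
  norm_num [algebraMap_int_eq]

/-- spectrum of the complexified A consists of charpoly roots -/
lemma spec_matC {A : Matrix (Fin n) (Fin n) ℤ} (hA : IsExpanding A) :
    ∀ z ∈ spectrum ℂ ((matR A).map (algebraMap ℝ ℂ)), 1 < ‖z‖ := by
  intro z hz
  exact hA z ((spec_iff A z).mp hz)

lemma exists_pow_norm_bound {A : Matrix (Fin n) (Fin n) ℤ} (hA : IsExpanding A) :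
    IsUnit (matR A) ∧ ∃ C r : ℝ, 0 < C ∧ 0 < r ∧ r < 1 ∧ NormBound A C r := by
  classical
  set f := (algebraMap ℝ ℂ) with hf
  set Ac := (matR A).map f with hAc
  -- A is invertible over the reals
  have hdetC : Ac.det ≠ 0 := by
    intro h0
    have : (0 : ℂ) ∈ spectrum ℂ Ac := by
      rw [mem_spectrum_iff_root', eval_charpoly', zero_smul, zero_sub, Matrix.det_neg, h0,
        mul_zero]
    have := spec_matC hA 0 this
    rw [norm_zero] at this
    exact absurd this (by norm_num)
  have hdetR : (matR A).det ≠ 0 := by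
    intro h
    apply hdetC
    show ((matR A).map f).det = 0
    rw [← RingHom.mapMatrix_apply, ← RingHom.map_det, h, map_zero]
  have hU : IsUnit (matR A) := by
    rw [Matrix.isUnit_iff_isUnit_det]
    exact isUnit_iff_ne_zero.mpr hdetR
  refine ⟨hU, ?_⟩
  set u : (Matrix (Fin n) (Fin n) ℝ)ˣ := hU.unit with hu
  set uc : (Matrix (Fin n) (Fin n) ℂ)ˣ :=
    Units.map (RingHom.mapMatrix f).toMonoidHom u with huc
  have hucval : (uc : Matrix (Fin n) (Fin n) ℂ) = Ac := by
    simp [huc, hu, hAc, RingHom.mapMatrix_apply]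
  set Bc := ((matR A)⁻¹).map f with hBc
  have hucinv : ((uc⁻¹ : _ˣ) : Matrix (Fin n) (Fin n) ℂ) = Bc := by
    rw [huc, Units.coe_map_inv, Matrix.coe_units_inv, hu, hU.unit_spec, hBc]
    rfl
  have hBcU : IsUnit Bc := ⟨uc⁻¹, hucinv⟩
  -- bound the spectrum of Bc
  have hcpnz : A.charpoly ≠ 0 := A.charpoly_monic.ne_zero
  set S := (A.charpoly.aroots ℂ).toFinset with hS
  set rnn : ℝ≥0 := S.sup (fun z => ‖z‖₊⁻¹) with hrnn
  have habs : ∀ w ∈ S, 1 < ‖w‖₊ := by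
    intro w hw
    rw [hS, Multiset.mem_toFinset, mem_aroots] at hw
    have := hA w hw.2
    rw [← NNReal.coe_lt_coe, NNReal.coe_one, coe_nnnorm]
    exact this
  have hrnn1 : rnn < 1 := by
    rw [hrnn]
    refine (Finset.sup_lt_iff (by norm_num)).mpr (fun w hw => ?_)
    exact inv_lt_one_of_one_lt₀ (habs w hw)
  have hspecB : ∀ z ∈ spectrum ℂ Bc, (‖z‖₊ : ℝ≥0∞) ≤ (rnn : ℝ≥0∞) := by
    intro z hz
    have hz0 : z ≠ 0 := by
      rintro rfl
      exact (spectrum.zero_mem_iff ℂ).mp hz hBcU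
    set zu : ℂˣ := Units.mk0 z hz0 with hzu
    have hmm : ((zu : ℂ)) ∈ spectrum ℂ ((uc⁻¹ : _ˣ) : Matrix (Fin n) (Fin n) ℂ) := by
      rwa [hucinv]
    have h2 : ((zu⁻¹ : ℂˣ) : ℂ) ∈ spectrum ℂ (((uc⁻¹)⁻¹ : _ˣ) : Matrix (Fin n) (Fin n) ℂ) :=
      spectrum.inv_mem_iff.mp hmm
    rw [inv_inv] at h2
    have hzin : z⁻¹ ∈ S := by
      rw [hS, Multiset.mem_toFinset, mem_aroots]
      refine ⟨hcpnz, ?_⟩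
      rw [hucval, hAc] at h2
      have := (spec_iff A _).mp h2
      simpa [hzu] using this
    have hle : ‖z⁻¹‖₊⁻¹ ≤ rnn := by
      rw [hrnn]
      exact Finset.le_sup (f := fun z => ‖z‖₊⁻¹) hzin
    rw [nnnorm_inv, inv_inv] at hle
    exact_mod_cast hle
  have hρ : spectralRadius ℂ Bc ≤ (rnn : ℝ≥0∞) := by
    rw [spectralRadius]
    exact iSup₂_le hspecB
  have hρlt : spectralRadius ℂ Bc < 1 :=
    lt_of_le_of_lt hρ (by exact_mod_cast hrnn1)
  have hρtop : spectralRadius ℂ Bc ≠ ⊤ := hρlt.trans_le le_top |>.ne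
  have hρr1 : (spectralRadius ℂ Bc).toReal < 1 := by
    rw [← ENNReal.toReal_one]
    exact (ENNReal.toReal_lt_toReal hρtop (by norm_num)).mpr hρlt
  have hρr0 : 0 ≤ (spectralRadius ℂ Bc).toReal := ENNReal.toReal_nonneg
  set rr : ℝ := ((spectralRadius ℂ Bc).toReal + 1) / 2 with hrr
  have hrr0 : 0 < rr := by rw [hrr]; linarith
  have hrr1 : rr < 1 := by rw [hrr]; linarith
  have hρrr : spectralRadius ℂ Bc < ENNReal.ofReal rr := by
    rw [← ENNReal.ofReal_toReal hρtop]
    refine (ENNReal.ofReal_lt_ofReal_iff hrr0).mpr ?_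
    rw [hrr]; linarith
  have hgel := spectrum.pow_norm_pow_one_div_tendsto_nhds_spectralRadius Bc
  have hev : ∀ᶠ k : ℕ in atTop,
      ENNReal.ofReal (‖Bc ^ k‖ ^ (1 / (k : ℝ))) < ENNReal.ofReal rr :=
    hgel.eventually_lt_const hρrr
  obtain ⟨N, hN⟩ := (hev.and (eventually_ge_atTop 1)).exists_forall_of_atTop
  have hbound : ∀ k, N ≤ k → ‖Bc ^ k‖ ≤ rr ^ k := by
    intro k hk
    obtain ⟨h1, h2⟩ := hN k hk
    have h3 : ‖Bc ^ k‖ ^ (1 / (k : ℝ)) < rr := by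
      rw [ENNReal.ofReal_lt_ofReal_iff hrr0] at h1
      exact h1
    have hk0 : (k : ℕ) ≠ 0 := by omega
    calc ‖Bc ^ k‖ = (‖Bc ^ k‖ ^ (1 / (k : ℝ))) ^ k := by
          rw [one_div, Real.rpow_inv_natCast_pow (norm_nonneg _) hk0]
      _ ≤ rr ^ k := by
          exact pow_le_pow_left₀ (Real.rpow_nonneg (norm_nonneg _) _) h3.le k
  -- assemble the constant
  set C : ℝ := 1 + ∑ j ∈ Finset.range N, ‖Bc ^ j‖ / rr ^ j with hC
  have hsumnn : 0 ≤ ∑ j ∈ Finset.range N, ‖Bc ^ j‖ / rr ^ j :=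
    Finset.sum_nonneg (fun j _ => div_nonneg (norm_nonneg _) (pow_nonneg hrr0.le j))
  have hC0 : 0 < C := by rw [hC]; linarith
  refine ⟨C, rr, hC0, hrr0, hrr1, ?_⟩
  intro k v
  have hnorm_eq : ‖Bc ^ k‖ = ‖(matR A)⁻¹ ^ k‖ := by
    rw [hBc, ← RingHom.mapMatrix_apply, ← map_pow, RingHom.mapMatrix_apply,
      ← coe_nnnorm, ← coe_nnnorm, nnnorm_map_ofReal]
  have hmv : ‖((matR A)⁻¹ ^ k).mulVec v‖ ≤ ‖(matR A)⁻¹ ^ k‖ * ‖v‖ :=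
    Matrix.linfty_opNorm_mulVec _ _
  have hkey : ‖(matR A)⁻¹ ^ k‖ ≤ C * rr ^ k := by
    rw [← hnorm_eq]
    rcases le_or_gt N k with h | h
    · calc ‖Bc ^ k‖ ≤ rr ^ k := hbound k h
        _ = 1 * rr ^ k := (one_mul _).symm
        _ ≤ C * rr ^ k := by
            apply mul_le_mul_of_nonneg_right _ (pow_nonneg hrr0.le k)
            rw [hC]; linarith
    · have hmem : k ∈ Finset.range N := Finset.mem_range.mpr h
      have h1 : ‖Bc ^ k‖ / rr ^ k ≤ ∑ j ∈ Finset.range N, ‖Bc ^ j‖ / rr ^ j :=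
        Finset.single_le_sum (f := fun j => ‖Bc ^ j‖ / rr ^ j)
          (fun j _ => div_nonneg (norm_nonneg _) (pow_nonneg hrr0.le j)) hmem
      have h2 : ‖Bc ^ k‖ / rr ^ k ≤ C := by rw [hC]; linarith
      calc ‖Bc ^ k‖ = (‖Bc ^ k‖ / rr ^ k) * rr ^ k := by
            field_simp
        _ ≤ C * rr ^ k := mul_le_mul_of_nonneg_right h2 (pow_nonneg hrr0.le k)
  calc ‖((matR A)⁻¹ ^ k).mulVec v‖ ≤ ‖(matR A)⁻¹ ^ k‖ * ‖v‖ := hmv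
    _ ≤ C * rr ^ k * ‖v‖ := mul_le_mul_of_nonneg_right hkey (norm_nonneg _)

end normbound

section Tsec

variable {n : ℕ} {A : Matrix (Fin n) (Fin n) ℤ} {D : Finset (Fin n → ℝ)} {C r : ℝ}

/-- bound on the digits -/
noncomputable def Mbd (D : Finset (Fin n → ℝ)) : ℝ := ((D.sup fun x => ‖x‖₊ : ℝ≥0) : ℝ)

lemma norm_le_Mbd {x : Fin n → ℝ} (hx : x ∈ D) : ‖x‖ ≤ Mbd D := by
  rw [← coe_nnnorm, Mbd, NNReal.coe_le_coe]
  exact Finset.le_sup (f := fun x => ‖x‖₊) hx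

lemma norm_term_le (hC : 0 < C) (hr0 : 0 < r) (hbd : NormBound A C r)
    (d : ℕ → (Fin n → ℝ)) (hd : ∀ i, d i ∈ D) (i : ℕ) :
    ‖((matR A)⁻¹ ^ (i + 1)).mulVec (d i)‖ ≤ C * Mbd D * r * r ^ i := by
  calc ‖((matR A)⁻¹ ^ (i + 1)).mulVec (d i)‖ ≤ C * r ^ (i + 1) * ‖d i‖ := hbd _ _
    _ ≤ C * r ^ (i + 1) * Mbd D := by
        apply mul_le_mul_of_nonneg_left (norm_le_Mbd (hd i))
        positivity
    _ = C * Mbd D * r * r ^ i := by ring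

lemma summable_digits (hC : 0 < C) (hr0 : 0 < r) (hr1 : r < 1) (hbd : NormBound A C r)
    (d : ℕ → (Fin n → ℝ)) (hd : ∀ i, d i ∈ D) :
    Summable (fun i => ((matR A)⁻¹ ^ (i + 1)).mulVec (d i)) :=
  Summable.of_norm_bounded (g := fun i => C * Mbd D * r * r ^ i)
    ((summable_geometric_of_lt_one hr0.le hr1).mul_left _)
    (norm_term_le hC hr0 hbd d hd)

/-- the address map -/
noncomputable def Phi (A : Matrix (Fin n) (Fin n) ℤ) (D : Finset (Fin n → ℝ)) :
    (ℕ → {x // x ∈ D}) → (Fin n → ℝ) :=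
  fun d => ∑' i, ((matR A)⁻¹ ^ (i + 1)).mulVec (d i : Fin n → ℝ)

lemma selfAffine_eq_range (hC : 0 < C) (hr0 : 0 < r) (hr1 : r < 1)
    (hbd : NormBound A C r) :
    selfAffine A ↑D = Set.range (Phi A D) := by
  ext x
  constructor
  · rintro ⟨d, hd, hsum⟩
    exact ⟨fun i => ⟨d i, hd i⟩, hsum.tsum_eq⟩
  · rintro ⟨d, rfl⟩
    exact ⟨fun i => (d i : Fin n → ℝ), fun i => (d i).2,
      (summable_digits hC hr0 hr1 hbd _ (fun i => (d i).2)).hasSum⟩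

lemma continuous_Phi (hC : 0 < C) (hr0 : 0 < r) (hr1 : r < 1)
    (hbd : NormBound A C r) : Continuous (Phi A D) := by
  apply continuous_tsum
  · intro i
    have h1 : Continuous fun v : Fin n → ℝ => ((matR A)⁻¹ ^ (i + 1)).mulVec v := by
      have := LinearMap.continuous_on_pi (Matrix.mulVecLin ((matR A)⁻¹ ^ (i + 1)))
      exact this
    exact h1.comp (continuous_subtype_val.comp (continuous_apply i))
  · exact (summable_geometric_of_lt_one hr0.le hr1).mul_left (C * Mbd D * r)
  · intro i d
    exact norm_term_le hC hr0 hbd _ (fun i => (d i).2) i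

lemma isCompact_T (hC : 0 < C) (hr0 : 0 < r) (hr1 : r < 1)
    (hbd : NormBound A C r) : IsCompact (selfAffine A ↑D) := by
  rw [selfAffine_eq_range hC hr0 hr1 hbd]
  exact isCompact_range (continuous_Phi hC hr0 hr1 hbd)

lemma T_nonempty (hC : 0 < C) (hr0 : 0 < r) (hr1 : r < 1)
    (hbd : NormBound A C r) (hD : D.Nonempty) : (selfAffine A ↑D).Nonempty := by
  obtain ⟨e, he⟩ := hD
  rw [selfAffine_eq_range hC hr0 hr1 hbd]
  exact ⟨Phi A D (fun _ => ⟨e, he⟩), ⟨_, rfl⟩⟩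

lemma hasSum_shift {d : ℕ → (Fin n → ℝ)} {y : Fin n → ℝ}
    (h : HasSum (fun i => ((matR A)⁻¹ ^ (i + 1)).mulVec (d i)) y) :
    HasSum (fun i => ((matR A)⁻¹ ^ (i + 1 + 1)).mulVec (d i)) ((matR A)⁻¹.mulVec y) := by
  have h1 := h.map (Matrix.mulVecLin ((matR A)⁻¹)).toAddMonoidHom
    (by simpa [Matrix.mulVecLin_apply] using
      LinearMap.continuous_on_pi (Matrix.mulVecLin ((matR A)⁻¹)))
  have h2 : ((Matrix.mulVecLin ((matR A)⁻¹)).toAddMonoidHom ∘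
      fun i => ((matR A)⁻¹ ^ (i + 1)).mulVec (d i)) =
      fun i => ((matR A)⁻¹ ^ (i + 1 + 1)).mulVec (d i) := by
    funext i
    simp only [Function.comp_apply, LinearMap.toAddMonoidHom_coe, Matrix.mulVecLin_apply,
      Matrix.mulVec_mulVec]
    rw [← pow_succ']
  rw [h2] at h1
  simpa only [LinearMap.toAddMonoidHom_coe, Matrix.mulVecLin_apply] using h1

lemma mem_T_of_piece {e : Fin n → ℝ} (he : e ∈ D) {y : Fin n → ℝ}
    (hy : y ∈ selfAffine A ↑D) :
    (matR A)⁻¹.mulVec (y + e) ∈ selfAffine A ↑D := by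
  obtain ⟨d, hd, hsum⟩ := hy
  set d' : ℕ → (Fin n → ℝ) := fun i => Nat.rec e (fun j _ => d j) i with hd'
  refine ⟨d', fun i => ?_, ?_⟩
  · cases i with
    | zero => exact he
    | succ j => exact hd j
  · have h2 := hasSum_shift hsum
    have h3 : HasSum (fun i => ((matR A)⁻¹ ^ (i + 1)).mulVec (d' i))
        ((matR A)⁻¹.mulVec y +
          ∑ i ∈ Finset.range 1, ((matR A)⁻¹ ^ (i + 1)).mulVec (d' i)) :=
      (hasSum_nat_add_iff (f := fun i => ((matR A)⁻¹ ^ (i + 1)).mulVec (d' i)) 1).mp h2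
    have h4 : (matR A)⁻¹.mulVec (y + e) = (matR A)⁻¹.mulVec y +
        ∑ i ∈ Finset.range 1, ((matR A)⁻¹ ^ (i + 1)).mulVec (d' i) := by
      simp [Finset.sum_range_one, Matrix.mulVec_add, hd']
    rw [h4]
    exact h3

lemma exists_piece (hC : 0 < C) (hr0 : 0 < r) (hr1 : r < 1) (hbd : NormBound A C r)
    {x : Fin n → ℝ} (hx : x ∈ selfAffine A ↑D) :
    ∃ e ∈ D, ∃ y ∈ selfAffine A ↑D, x = (matR A)⁻¹.mulVec (y + e) := by
  obtain ⟨d, hd, hsum⟩ := hx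
  obtain ⟨y, hy⟩ := summable_digits hC hr0 hr1 hbd (fun i => d (i + 1)) (fun i => hd _)
  refine ⟨d 0, hd 0, y, ⟨fun i => d (i + 1), fun i => hd _, hy⟩, ?_⟩
  have h2 := hasSum_shift hy
  have h3 : HasSum (fun i => ((matR A)⁻¹ ^ (i + 1)).mulVec (d i))
      ((matR A)⁻¹.mulVec y +
        ∑ i ∈ Finset.range 1, ((matR A)⁻¹ ^ (i + 1)).mulVec (d i)) :=
    (hasSum_nat_add_iff (f := fun i => ((matR A)⁻¹ ^ (i + 1)).mulVec (d i)) 1).mp h2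
  have h4 : (matR A)⁻¹.mulVec (y + d 0) = (matR A)⁻¹.mulVec y +
      ∑ i ∈ Finset.range 1, ((matR A)⁻¹ ^ (i + 1)).mulVec (d i) := by
    simp [Finset.sum_range_one, Matrix.mulVec_add]
  rw [h4]
  exact hsum.unique h3

/-- level-`k` cylinder maps -/
noncomputable def cylMap (A : Matrix (Fin n) (Fin n) ℤ) (k : ℕ)
    (w : ℕ → (Fin n → ℝ)) (x : Fin n → ℝ) : Fin n → ℝ :=
  (∑ i ∈ Finset.range k, ((matR A)⁻¹ ^ (i + 1)).mulVec (w i)) +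
    ((matR A)⁻¹ ^ k).mulVec x

lemma cylMap_zero (w : ℕ → (Fin n → ℝ)) (x : Fin n → ℝ) : cylMap A 0 w x = x := by
  simp [cylMap, Matrix.one_mulVec]

lemma cylMap_succ (k : ℕ) (w : ℕ → (Fin n → ℝ)) (x : Fin n → ℝ) :
    cylMap A (k + 1) w x = cylMap A k w ((matR A)⁻¹.mulVec (x + w k)) := by
  simp only [cylMap, Finset.sum_range_succ, Matrix.mulVec_mulVec, ← pow_succ,
    Matrix.mulVec_add]
  abel

lemma cylMap_congr {k : ℕ} {w w' : ℕ → (Fin n → ℝ)} (h : ∀ i < k, w i = w' i)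
    (x : Fin n → ℝ) : cylMap A k w x = cylMap A k w' x := by
  unfold cylMap
  congr 1
  exact Finset.sum_congr rfl (fun i hi => by rw [h i (Finset.mem_range.mp hi)])

lemma cylMap_mem (k : ℕ) (w : ℕ → (Fin n → ℝ)) (hw : ∀ i, w i ∈ D)
    {x : Fin n → ℝ} (hx : x ∈ selfAffine A ↑D) : cylMap A k w x ∈ selfAffine A ↑D := by
  induction k generalizing x with
  | zero => rw [cylMap_zero]; exact hx
  | succ k ih =>
      rw [cylMap_succ]
      exact ih (mem_T_of_piece (hw k) hx)

lemma cylMap_contract (hbd : NormBound A C r) (k : ℕ) (w : ℕ → (Fin n → ℝ))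
    (x y : Fin n → ℝ) :
    ‖cylMap A k w x - cylMap A k w y‖ ≤ C * r ^ k * ‖x - y‖ := by
  have h1 : cylMap A k w x - cylMap A k w y = ((matR A)⁻¹ ^ k).mulVec (x - y) := by
    rw [cylMap, cylMap, Matrix.mulVec_sub]
    abel
  rw [h1]
  exact hbd _ _

lemma exists_cyl (hC : 0 < C) (hr0 : 0 < r) (hr1 : r < 1) (hbd : NormBound A C r)
    (hD : D.Nonempty) (k : ℕ) {x : Fin n → ℝ} (hx : x ∈ selfAffine A ↑D) :
    ∃ w : ℕ → (Fin n → ℝ), (∀ i, w i ∈ D) ∧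
      ∃ y ∈ selfAffine A ↑D, x = cylMap A k w y := by
  induction k with
  | zero =>
      obtain ⟨e, he⟩ := hD
      exact ⟨fun _ => e, fun _ => he, x, hx, (cylMap_zero _ _).symm⟩
  | succ k ih =>
      obtain ⟨w, hw, y, hy, hxy⟩ := ih
      obtain ⟨e, he, y', hy', hyy'⟩ := exists_piece hC hr0 hr1 hbd hy
      refine ⟨fun i => if i < k then w i else e, fun i => ?_, y', hy', ?_⟩
      · by_cases hik : i < k
        · simpa [hik] using hw i
        · simpa [hik] using he
      rw [cylMap_succ]
      rw [if_neg (lt_irrefl k), ← hyy', hxy]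
      exact cylMap_congr (fun i hi => by simp [hi]) y

end Tsec
section Chain

variable {n : ℕ} {A : Matrix (Fin n) (Fin n) ℤ} {D : Finset (Fin n → ℝ)} {C r : ℝ}

/-- the edge relation -/
def EdgeRel (A : Matrix (Fin n) (Fin n) ℤ) (D : Finset (Fin n → ℝ)) :
    (Fin n → ℝ) → (Fin n → ℝ) → Prop := fun x y =>
  x ∈ D ∧ y ∈ D ∧ ∃ s ∈ selfAffine A ↑D, ∃ t ∈ selfAffine A ↑D, s + x = t + y

/-- two points lying in a common level-`k` cylinder -/
def Near (A : Matrix (Fin n) (Fin n) ℤ) (D : Finset (Fin n → ℝ)) (k : ℕ)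
    (x y : Fin n → ℝ) : Prop :=
  ∃ w : ℕ → (Fin n → ℝ), (∀ i, w i ∈ D) ∧ ∃ a ∈ selfAffine A ↑D,
    ∃ b ∈ selfAffine A ↑D, x = cylMap A k w a ∧ y = cylMap A k w b

lemma chain_T (hC : 0 < C) (hr0 : 0 < r) (hr1 : r < 1) (hbd : NormBound A C r)
    (hD : D.Nonempty)
    (hgraph : ∀ di ∈ D, ∀ dj ∈ D, Relation.ReflTransGen (EdgeRel A D) di dj) (k : ℕ) :
    ∀ x ∈ selfAffine A ↑D, ∀ y ∈ selfAffine A ↑D,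
      Relation.ReflTransGen (Near A D k) x y := by
  induction k with
  | zero =>
      intro x hx y hy
      obtain ⟨e, he⟩ := hD
      exact Relation.ReflTransGen.single
        ⟨fun _ => e, fun _ => he, x, hx, y, hy, (cylMap_zero _ _).symm,
          (cylMap_zero _ _).symm⟩
  | succ k ih =>
      have step1 : ∀ (w : ℕ → (Fin n → ℝ)), (∀ i, w i ∈ D) → ∀ e ∈ D,
          ∀ p q : Fin n → ℝ,
          (∃ s ∈ selfAffine A ↑D, p = (matR A)⁻¹.mulVec (s + e)) →
          (∃ t ∈ selfAffine A ↑D, q = (matR A)⁻¹.mulVec (t + e)) →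
          Near A D (k + 1) (cylMap A k w p) (cylMap A k w q) := by
        rintro w hw e he p q ⟨s, hs, rfl⟩ ⟨t, ht, rfl⟩
        refine ⟨fun i => if i < k then w i else e, fun i => ?_, s, hs, t, ht, ?_, ?_⟩
        · by_cases hik : i < k
          · simpa [hik] using hw i
          · simpa [hik] using he
        · rw [cylMap_succ, if_neg (lt_irrefl k)]
          exact cylMap_congr (fun i hi => (if_pos hi).symm) _
        · rw [cylMap_succ, if_neg (lt_irrefl k)]
          exact cylMap_congr (fun i hi => (if_pos hi).symm) _
      have key : ∀ (w : ℕ → (Fin n → ℝ)), (∀ i, w i ∈ D) → ∀ e1 e2, e1 ∈ D →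
          Relation.ReflTransGen (EdgeRel A D) e1 e2 →
          ∀ p q : Fin n → ℝ,
          (∃ s ∈ selfAffine A ↑D, p = (matR A)⁻¹.mulVec (s + e1)) →
          (∃ t ∈ selfAffine A ↑D, q = (matR A)⁻¹.mulVec (t + e2)) →
          Relation.ReflTransGen (Near A D (k + 1)) (cylMap A k w p) (cylMap A k w q) := by
        intro w hw e1 e2 he1 hpath
        induction hpath with
        | refl =>
            intro p q hp hq
            exact Relation.ReflTransGen.single (step1 w hw e1 he1 p q hp hq)
        | @tail b c hRT hR ihp =>
            intro p q hp hq
            obtain ⟨hbD, hcD, s0, hs0, t0, ht0, heq⟩ := hR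
            have h1 := ihp p ((matR A)⁻¹.mulVec (s0 + b)) hp ⟨s0, hs0, rfl⟩
            have h2 : Near A D (k + 1) (cylMap A k w ((matR A)⁻¹.mulVec (s0 + b)))
                (cylMap A k w q) :=
              step1 w hw c hcD _ q ⟨t0, ht0, by rw [heq]⟩ hq
            exact h1.tail h2
      intro x hx y hy
      have h0 := ih x hx y hy
      clear hx hy
      induction h0 with
      | refl => exact Relation.ReflTransGen.refl
      | @tail b c hxb hbc ihh =>
          refine ihh.trans ?_
          obtain ⟨w, hw, a, ha, b', hb', rfl, rfl⟩ := hbc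
          obtain ⟨ea, hea, a', ha', haeq⟩ := exists_piece hC hr0 hr1 hbd ha
          obtain ⟨eb, heb, b'', hb'', hbeq⟩ := exists_piece hC hr0 hr1 hbd hb'
          exact key w hw ea eb hea (hgraph ea hea eb heb) a b'
            ⟨a', ha', haeq⟩ ⟨b'', hb'', hbeq⟩

end Chain


/-- `T(A,D)` is connected iff any two digits of `D` are `E`-connected, where
`(d, d') ∈ E` iff `(T + d) ∩ (T + d') ≠ ∅`. -/
theorem connected_iff_E_connected (n q : ℕ)
    (A : Matrix (Fin n) (Fin n) ℤ) (hA : IsExpanding A)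
    (hdet : A.det.natAbs = q)
    (D : Finset (Fin n → ℝ)) (hcard : D.card = q) :
    IsConnected (selfAffine A ↑D) ↔
    ∀ di ∈ D, ∀ dj ∈ D,
      Relation.ReflTransGen
        (fun x y => x ∈ D ∧ y ∈ D ∧
          ∃ s ∈ selfAffine A ↑D, ∃ t ∈ selfAffine A ↑D, s + x = t + y)
        di dj := by
  classical
  obtain ⟨hU, C, r, hC, hr0, hr1, hbd⟩ := exists_pow_norm_bound hA
  have hRel : (fun x y => x ∈ D ∧ y ∈ D ∧
      ∃ s ∈ selfAffine A ↑D, ∃ t ∈ selfAffine A ↑D, s + x = t + y) = EdgeRel A D := rfl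
  rw [hRel]
  -- injectivity of the contraction
  have hBinj : Function.Injective fun v : Fin n → ℝ => (matR A)⁻¹.mulVec v := by
    intro v w hvw
    have h1 : ∀ u : Fin n → ℝ, (matR A).mulVec ((matR A)⁻¹.mulVec u) = u := by
      intro u
      rw [Matrix.mulVec_mulVec,
        Matrix.mul_nonsing_inv _ ((Matrix.isUnit_iff_isUnit_det _).mp hU),
        Matrix.one_mulVec]
    calc v = (matR A).mulVec ((matR A)⁻¹.mulVec v) := (h1 v).symm
      _ = (matR A).mulVec ((matR A)⁻¹.mulVec w) := by
          exact congrArg _ hvw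
      _ = w := h1 w
  -- D is nonempty
  have hDne : D.Nonempty := by
    rcases Finset.eq_empty_or_nonempty D with h | h
    · exfalso
      have hq : q = 0 := by rw [← hcard, h, Finset.card_empty]
      have hdet0 : A.det = 0 := Int.natAbs_eq_zero.mp (by rw [hdet, hq])
      have hdetR : (matR A).det = 0 := by
        have : ((Int.castRingHom ℝ).mapMatrix A).det = (Int.castRingHom ℝ) A.det :=
          (RingHom.map_det _ _).symm
        rw [hdet0, map_zero] at this
        exact this
      have h0 : (0 : ℂ) ∈ spectrum ℂ ((matR A).map (algebraMap ℝ ℂ)) := by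
        rw [mem_spectrum_iff_root', eval_charpoly', zero_smul, zero_sub, Matrix.det_neg]
        have : ((matR A).map (algebraMap ℝ ℂ)).det = (algebraMap ℝ ℂ) (matR A).det := by
          exact (RingHom.map_det (algebraMap ℝ ℂ) (matR A)).symm
        rw [this, hdetR, map_zero, mul_zero]
      have := spec_matC hA 0 h0
      rw [norm_zero] at this
      exact absurd this (by norm_num)
    · exact h
  have hTcpt : IsCompact (selfAffine A ↑D) := isCompact_T hC hr0 hr1 hbd
  have hTne : (selfAffine A ↑D).Nonempty := T_nonempty hC hr0 hr1 hbd hDne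
  have hcont : ∀ e : Fin n → ℝ,
      Continuous fun x : Fin n → ℝ => (matR A)⁻¹.mulVec (x + e) := by
    intro e
    have h := LinearMap.continuous_on_pi (Matrix.mulVecLin ((matR A)⁻¹))
    have h2 : Continuous fun v : Fin n → ℝ => (matR A)⁻¹.mulVec v := by
      exact h
    exact h2.comp (continuous_id.add continuous_const)
  constructor
  · -- connected implies the graph is connected
    intro hconn di hdi dj hdj
    set T := selfAffine A ↑D with hT
    set P : (Fin n → ℝ) → Set (Fin n → ℝ) :=
      fun e => (fun x => (matR A)⁻¹.mulVec (x + e)) '' T with hPdef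
    set S : Set (Fin n → ℝ) :=
      {e | e ∈ D ∧ Relation.ReflTransGen (EdgeRel A D) di e} with hSdef
    by_contra hndj
    have hdjS : dj ∉ S := fun hdjS => hndj hdjS.2
    have hPsub : ∀ e ∈ D, P e ⊆ T := by
      rintro e he z ⟨x, hx, rfl⟩
      exact mem_T_of_piece he hx
    have hPcpt : ∀ e : Fin n → ℝ, IsCompact (P e) := fun e => hTcpt.image (hcont e)
    have hinter : ∀ e1 e2, e1 ∈ D → e2 ∈ D → (P e1 ∩ P e2).Nonempty →
        EdgeRel A D e1 e2 := by
      rintro e1 e2 h1 h2 ⟨z, ⟨s, hs, hse⟩, ⟨t, ht, hte⟩⟩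
      exact ⟨h1, h2, s, hs, t, ht, hBinj (hse.trans hte.symm)⟩
    set U : Set (Fin n → ℝ) := ⋃ e ∈ S, P e with hUdef
    set V : Set (Fin n → ℝ) := ⋃ e ∈ {e | e ∈ D ∧ e ∉ S}, P e with hVdef
    have hSfin : S.Finite := D.finite_toSet.subset (fun e he => he.1)
    have hVsetfin : {e : Fin n → ℝ | e ∈ D ∧ e ∉ S}.Finite :=
      D.finite_toSet.subset (fun e he => he.1)
    have hUclosed : IsClosed U :=
      hSfin.isClosed_biUnion (fun e _ => (hPcpt e).isClosed)
    have hVclosed : IsClosed V :=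
      hVsetfin.isClosed_biUnion (fun e _ => (hPcpt e).isClosed)
    have hdisj : ∀ z, z ∈ U → z ∈ V → False := by
      intro z hzU hzV
      obtain ⟨e1, he1, hz1⟩ := Set.mem_iUnion₂.mp hzU
      obtain ⟨e2, he2, hz2⟩ := Set.mem_iUnion₂.mp hzV
      have hedge := hinter e1 e2 he1.1 he2.1 ⟨z, hz1, hz2⟩
      exact he2.2 ⟨he2.1, he1.2.tail hedge⟩
    have hTsub : T ⊆ U ∪ V := by
      intro x hx
      obtain ⟨e, he, y, hy, hxy⟩ := exists_piece hC hr0 hr1 hbd hx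
      by_cases heS : e ∈ S
      · exact Or.inl (Set.mem_biUnion heS ⟨y, hy, hxy.symm⟩)
      · exact Or.inr (Set.mem_biUnion ⟨he, heS⟩ ⟨y, hy, hxy.symm⟩)
    obtain ⟨t0, ht0⟩ := hTne
    have hz1 : (matR A)⁻¹.mulVec (t0 + di) ∈ U := by
      refine Set.mem_biUnion ⟨hdi, Relation.ReflTransGen.refl⟩ ⟨t0, ht0, rfl⟩
    have hz1T : (matR A)⁻¹.mulVec (t0 + di) ∈ T := mem_T_of_piece hdi ht0
    have hz2 : (matR A)⁻¹.mulVec (t0 + dj) ∈ V := by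
      refine Set.mem_biUnion ⟨hdj, hdjS⟩ ⟨t0, ht0, rfl⟩
    have hz2T : (matR A)⁻¹.mulVec (t0 + dj) ∈ T := mem_T_of_piece hdj ht0
    have hpre := hconn.isPreconnected
    have hcap := hpre Vᶜ Uᶜ hVclosed.isOpen_compl hUclosed.isOpen_compl
      (fun x hx => by
        rcases hTsub hx with hxU | hxV
        · exact Or.inl (fun hxV => hdisj x hxU hxV)
        · exact Or.inr (fun hxU => hdisj x hxU hxV))
      ⟨_, hz1T, fun hzV => hdisj _ hz1 hzV⟩
      ⟨_, hz2T, fun hzU => hdisj _ hzU hz2⟩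
    obtain ⟨x, hxT, hxV, hxU⟩ := hcap
    rcases hTsub hxT with h | h
    · exact hxU h
    · exact hxV h
  · -- graph connected implies T connected
    intro hgraph
    refine ⟨hTne, ?_⟩
    intro u v hu hv huv hTu hTv
    by_contra hne
    rw [Set.not_nonempty_iff_eq_empty] at hne
    set T := selfAffine A ↑D with hT
    set K1 : Set (Fin n → ℝ) := T \ v with hK1def
    set K2 : Set (Fin n → ℝ) := T \ u with hK2def
    have hmemK1 : ∀ x, x ∈ T → x ∈ u → x ∈ K1 := fun x hxT hxu =>
      ⟨hxT, fun hxv => (Set.eq_empty_iff_forall_notMem.mp hne x) ⟨hxT, hxu, hxv⟩⟩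
    have hmemK2 : ∀ x, x ∈ T → x ∈ v → x ∈ K2 := fun x hxT hxv =>
      ⟨hxT, fun hxu => (Set.eq_empty_iff_forall_notMem.mp hne x) ⟨hxT, hxu, hxv⟩⟩
    have hK1sub_u : ∀ x, x ∈ K1 → x ∈ u := fun x hx => (huv hx.1).resolve_right hx.2
    have hK1closed : IsClosed K1 := hTcpt.isClosed.sdiff hv
    have hK2closed : IsClosed K2 := hTcpt.isClosed.sdiff hu
    have hK1cpt : IsCompact K1 :=
      IsCompact.of_isClosed_subset hTcpt hK1closed Set.diff_subset
    obtain ⟨x, hxT, hxu⟩ := hTu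
    obtain ⟨y, hyT, hyv⟩ := hTv
    have hxK1 : x ∈ K1 := hmemK1 x hxT hxu
    have hyK2 : y ∈ K2 := hmemK2 y hyT hyv
    have hK2ne : K2.Nonempty := ⟨y, hyK2⟩
    have hdisjK : ∀ z, z ∈ K1 → z ∈ K2 → False := fun z h1 h2 =>
      h2.2 (hK1sub_u z h1)
    obtain ⟨x0, hx0K1, hx0min⟩ := hK1cpt.exists_isMinOn ⟨x, hxK1⟩
      (Metric.continuous_infDist_pt K2).continuousOn
    set δ := Metric.infDist x0 K2 with hδdef
    have hδpos : 0 < δ :=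
      (hK2closed.notMem_iff_infDist_pos hK2ne).mp (fun hc => hdisjK x0 hx0K1 hc)
    have hdistK : ∀ z ∈ K1, ∀ z' ∈ K2, δ ≤ dist z z' := fun z hz z' hz' =>
      le_trans (hx0min hz) (Metric.infDist_le_dist_of_mem hz')
    obtain ⟨Rb, hRb⟩ := isBounded_iff_forall_norm_le.mp hTcpt.isBounded
    have htend : Tendsto (fun k : ℕ => C * r ^ k * (2 * Rb)) atTop (𝓝 0) := by
      have h1 := tendsto_pow_atTop_nhds_zero_of_lt_one hr0.le hr1
      have h2 := (h1.const_mul C).mul_const (2 * Rb)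
      simpa using h2
    obtain ⟨k, hk⟩ := (htend.eventually_lt_const hδpos).exists
    have hneardist : ∀ a b : Fin n → ℝ, Near A D k a b → dist a b < δ := by
      rintro a2 b2 ⟨w, hw, a, ha, b, hb, rfl, rfl⟩
      have h1 := cylMap_contract hbd k w a b
      have h2 : ‖a - b‖ ≤ 2 * Rb := by
        have h3 := hRb a ha
        have h4 := hRb b hb
        calc ‖a - b‖ ≤ ‖a‖ + ‖b‖ := norm_sub_le _ _
          _ ≤ 2 * Rb := by linarith
      have h5 : 0 ≤ C * r ^ k := by positivity
      calc dist (cylMap A k w a) (cylMap A k w b)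
          = ‖cylMap A k w a - cylMap A k w b‖ := dist_eq_norm _ _
        _ ≤ C * r ^ k * ‖a - b‖ := h1
        _ ≤ C * r ^ k * (2 * Rb) := mul_le_mul_of_nonneg_left h2 h5
        _ < δ := hk
    have hchain := chain_T hC hr0 hr1 hbd hDne hgraph k x hxT y hyT
    have hstay : ∀ z, Relation.ReflTransGen (Near A D k) x z → z ∈ K1 := by
      intro z hz
      induction hz with
      | refl => exact hxK1
      | @tail b c hxb hbc ihz =>
          have hcT : c ∈ T := by
            obtain ⟨w, hw, a2, ha2, b2, hb2, h1, h2⟩ := hbc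
            rw [h2]
            exact cylMap_mem k w hw hb2
          by_cases hcv : c ∈ v
          · exfalso
            have hd1 := hdistK b ihz c (hmemK2 c hcT hcv)
            have hd2 := hneardist b c hbc
            linarith
          · exact ⟨hcT, hcv⟩
    exact (hstay y hchain).2 hyv
end
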